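/- arXiv:1712.05183 — 12 statements merged into one kernel-verified Lean document; each statement's English description precedes it below -/
import Mathlib

section
/- Let S : ℝ → ℝ be subadditive with S(0) = 0 and lim_{t↓0} S(t) = 0. Then S is continuous at 0 if and only if there exists a strictly negative sequence z_n increasing to 0 with S(z_n) → 0; and in that case S is continuous at every point of ℝ. -/
open Filter Topology Set

/-- `S` is subadditive on `ℝ`. -/
def Subadditive' (S : ℝ → ℝ) : Prop := ∀ x y : ℝ, S (x + y) ≤ S x + S y

lemma berz_cont_at_zero (S : ℝ → ℝ) (hsub : Subadditive' S) (h0 : S 0 = 0)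
    (hlim : Tendsto S (𝓝[>] (0 : ℝ)) (𝓝 0))
    (z : ℕ → ℝ) (hz : ∀ n, z n < 0) (hz0 : Tendsto z atTop (𝓝 0))
    (hSz : Tendsto (fun n => S (z n)) atTop (𝓝 0)) :
    ContinuousAt S 0 := by
  have hneg : Tendsto S (𝓝[<] (0 : ℝ)) (𝓝 0) := by
    rw [Metric.tendsto_nhdsWithin_nhds]
    intro ε hε
    rw [Metric.tendsto_nhdsWithin_nhds] at hlim
    obtain ⟨δ, hδ, hδS⟩ := hlim (ε / 2) (by linarith)
    have h1 : ∀ᶠ n in atTop, |S (z n)| < ε / 2 := by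
      have := (Metric.tendsto_atTop.mp hSz) (ε / 2) (by linarith)
      obtain ⟨N, hN⟩ := this
      filter_upwards [eventually_ge_atTop N] with n hn
      simpa [Real.dist_eq] using hN n hn
    have h2 : ∀ᶠ n in atTop, |z n| < δ := by
      have := (Metric.tendsto_atTop.mp hz0) δ hδ
      obtain ⟨N, hN⟩ := this
      filter_upwards [eventually_ge_atTop N] with n hn
      simpa [Real.dist_eq] using hN n hn
    obtain ⟨n, hn1, hn2⟩ := (h1.and h2).exists
    refine ⟨min δ (-z n), lt_min hδ (neg_pos.mpr (hz n)), ?_⟩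
    intro t ht htd
    have ht0 : t < 0 := ht
    rw [Real.dist_eq, sub_zero] at htd ⊢
    have htz : z n < t := by
      have : |t| < -z n := lt_of_lt_of_le htd (min_le_right _ _)
      rw [abs_of_neg ht0] at this; linarith
    have htδ : -t < δ := by
      have : |t| < δ := lt_of_lt_of_le htd (min_le_left _ _)
      rw [abs_of_neg ht0] at this; linarith
    -- upper bound
    have hup : S t ≤ S (z n) + S (t - z n) := by
      have := hsub (z n) (t - z n)
      simpa using this
    have hpos : (0:ℝ) < t - z n := by linarith
    have hsm : t - z n < δ := by
      have : |z n| < δ := hn2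
      rw [abs_of_neg (hz n)] at this
      linarith
    have hS1 : |S (t - z n)| < ε / 2 := by
      have := hδS (x := t - z n) hpos (by rw [Real.dist_eq, sub_zero, abs_of_pos hpos]; exact hsm)
      simpa [Real.dist_eq] using this
    have hS2 : |S (z n)| < ε / 2 := hn1
    have hupper : S t < ε := by
      have := abs_lt.mp hS1
      have := abs_lt.mp hS2
      linarith [abs_lt.mp hS1, abs_lt.mp hS2]
    -- lower bound
    have hmt : (0:ℝ) < -t := by linarith
    have hS3 : |S (-t)| < ε / 2 := by
      have := hδS (x := -t) hmt (by rw [Real.dist_eq, sub_zero, abs_of_pos hmt]; linarith)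
      simpa [Real.dist_eq] using this
    have hlower : -ε < S t := by
      have hge : 0 ≤ S t + S (-t) := by
        have := hsub t (-t)
        simpa [h0] using this
      have := abs_lt.mp hS3
      linarith
    rw [abs_lt]; exact ⟨hlower, hupper⟩
  have hpure : Tendsto S (pure (0:ℝ)) (𝓝 0) := by
    rw [tendsto_pure_left]; intro s hs; rw [h0]; exact mem_of_mem_nhds hs
  have hsup : Tendsto S ((𝓝[<] (0:ℝ) ⊔ 𝓝[>] (0:ℝ)) ⊔ pure (0:ℝ)) (𝓝 0) :=
    tendsto_sup.mpr ⟨tendsto_sup.mpr ⟨hneg, hlim⟩, hpure⟩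
  rw [nhdsLT_sup_nhdsGT, nhdsNE_sup_pure] at hsup
  unfold ContinuousAt
  rwa [h0]

/-- Paper's Theorem 0 (finite-valued case): for subadditive `S` with `S 0 = 0` and
`S(0+) = 0`, `S` is continuous at `0` iff `S zₙ → 0` for some strictly negative
sequence `zₙ` increasing to `0`; and then `S` is continuous everywhere. -/
theorem berz_theorem0 (S : ℝ → ℝ) (hsub : Subadditive' S) (h0 : S 0 = 0)
    (hlim : Tendsto S (𝓝[>] (0 : ℝ)) (𝓝 0)) :
    (ContinuousAt S 0 ↔
      ∃ z : ℕ → ℝ, (∀ n, z n < 0) ∧ StrictMono z ∧ Tendsto z atTop (𝓝 0) ∧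
        Tendsto (fun n => S (z n)) atTop (𝓝 0)) ∧
    (ContinuousAt S 0 → Continuous S) := by
  constructor
  · constructor
    · intro hc
      have hzt : Tendsto (fun n : ℕ => -(1 / ((n : ℝ) + 1))) atTop (𝓝 0) := by
        simpa using (tendsto_one_div_add_atTop_nhds_zero_nat (𝕜 := ℝ)).neg
      refine ⟨fun n => -(1 / ((n : ℝ) + 1)), ?_, ?_, hzt, ?_⟩
      · intro n
        have : (0:ℝ) < 1 / ((n : ℝ) + 1) := by positivity
        linarith
      · intro a b hab
        have h1 : (0:ℝ) < (a : ℝ) + 1 := by positivity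
        have h2 : (a : ℝ) + 1 < (b : ℝ) + 1 := by
          exact_mod_cast by omega
        have := one_div_lt_one_div_of_lt h1 h2
        simpa using neg_lt_neg this
      · have := (hc.tendsto).comp hzt
        rwa [h0] at this
    · rintro ⟨z, hz, _, hz0, hSz⟩
      exact berz_cont_at_zero S hsub h0 hlim z hz hz0 hSz
  · intro hc
    rw [continuous_iff_continuousAt]
    intro x
    have hc0 : Tendsto S (𝓝 (0:ℝ)) (𝓝 0) := by
      have := hc.tendsto; rwa [h0] at this
    have hA : Tendsto (fun y => S x - S (x - y)) (𝓝 x) (𝓝 (S x)) := by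
      have h1 : Tendsto (fun y => x - y) (𝓝 x) (𝓝 (0:ℝ)) := by
        have : Tendsto (fun y : ℝ => x - y) (𝓝 x) (𝓝 (x - x)) :=
          (tendsto_const_nhds.sub tendsto_id)
        simpa using this
      have h2 : Tendsto (fun y => S (x - y)) (𝓝 x) (𝓝 0) := hc0.comp h1
      simpa using tendsto_const_nhds.sub h2
    have hB : Tendsto (fun y => S (y - x) + S x) (𝓝 x) (𝓝 (S x)) := by
      have h1 : Tendsto (fun y : ℝ => y - x) (𝓝 x) (𝓝 (0:ℝ)) := by
        have : Tendsto (fun y : ℝ => y - x) (𝓝 x) (𝓝 (x - x)) :=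
          (tendsto_id.sub tendsto_const_nhds)
        simpa using this
      have h2 : Tendsto (fun y => S (y - x)) (𝓝 x) (𝓝 0) := hc0.comp h1
      simpa using h2.add tendsto_const_nhds
    apply tendsto_of_tendsto_of_tendsto_of_le_of_le hA hB
    · intro y
      show S x - S (x - y) ≤ S y
      have := hsub y (x - y)
      simp only [add_sub_cancel] at this
      linarith
    · intro y
      show S y ≤ S (y - x) + S x
      have := hsub (y - x) x
      simp only [sub_add_cancel] at this
      linarith
end

section
/- Let S : ℝ → ℝ be sublinear and locally bounded. Then S restricted to [0,∞) and S restricted to (−∞,0] are both linear: S(x) = x·S(1) for all x ≥ 0 and S(x) = |x|·S(−1) = −x·S(−1) for all x ≤ 0. -/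
open Filter Topology Set

/-- `S` is locally bounded: bounded on every bounded interval. -/
def LocallyBounded' (S : ℝ → ℝ) : Prop :=
  ∀ r : ℝ, 0 < r → ∃ M : ℝ, ∀ x : ℝ, |x| ≤ r → |S x| ≤ M

/-- `S` is sublinear: subadditive and `ℕ`-homogeneous. -/
def Sublinear' (S : ℝ → ℝ) : Prop :=
  Subadditive' S ∧ ∀ x : ℝ, ∀ n : ℕ, S ((n : ℝ) * x) = (n : ℝ) * S x

lemma berz_key (S : ℝ → ℝ) (hS : Sublinear' S) (hlb : LocallyBounded' S) :
    ∀ x : ℝ, 0 ≤ x → S x = x * S 1 := by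
  obtain ⟨hadd, hhom⟩ := hS
  obtain ⟨M, hM⟩ := hlb 1 one_pos
  intro x hx
  have key : ∀ n : ℕ, 1 ≤ n → |S x - x * S 1| * n ≤ M + |S 1| := by
    intro n hn
    have hn' : (0:ℝ) < n := by exact_mod_cast hn
    have hnx : 0 ≤ (n:ℝ) * x := by positivity
    have hSnx : S ((n:ℝ) * x) = n * S x := hhom x n
    have hup : (n:ℝ) * S x ≤ (n:ℝ) * x * S 1 + (M + |S 1|) := by
      set m := ⌈(n:ℝ) * x⌉₊ with hm
      have h1 : (n:ℝ) * x ≤ m := Nat.le_ceil _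
      have h2 : (m:ℝ) < (n:ℝ)*x + 1 := Nat.ceil_lt_add_one hnx
      have hSm : S m = m * S 1 := by simpa using hhom 1 m
      have h3 : S ((n:ℝ)*x) ≤ S m + S ((n:ℝ)*x - m) := by
        have := hadd (m:ℝ) ((n:ℝ)*x - m)
        simpa using this
      have h4 : |S ((n:ℝ)*x - m)| ≤ M :=
        hM _ (by rw [abs_le]; constructor <;> linarith)
      have h5 : (m:ℝ) * S 1 ≤ (n:ℝ)*x*S 1 + |S 1| := by
        have hb : ((m:ℝ) - (n:ℝ)*x) * S 1 ≤ |S 1| := by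
          calc ((m:ℝ) - (n:ℝ)*x) * S 1 ≤ |((m:ℝ) - (n:ℝ)*x) * S 1| := le_abs_self _
          _ = |(m:ℝ) - (n:ℝ)*x| * |S 1| := abs_mul _ _
          _ ≤ 1 * |S 1| := by
              apply mul_le_mul_of_nonneg_right _ (abs_nonneg _)
              rw [abs_le]; constructor <;> linarith
          _ = |S 1| := one_mul _
        nlinarith [hb]
      rw [hSnx, hSm] at h3
      have := abs_le.mp h4
      linarith
    have hlo : (n:ℝ)*x*S 1 - (M + |S 1|) ≤ (n:ℝ) * S x := by
      set m := ⌊(n:ℝ) * x⌋₊ with hm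
      have h1 : (m:ℝ) ≤ (n:ℝ) * x := Nat.floor_le hnx
      have h2 : (n:ℝ)*x < (m:ℝ) + 1 := Nat.lt_floor_add_one _
      have hSm : S m = m * S 1 := by simpa using hhom 1 m
      have h3 : S (m:ℝ) ≤ S ((n:ℝ)*x) + S ((m:ℝ) - (n:ℝ)*x) := by
        have := hadd ((n:ℝ)*x) ((m:ℝ) - (n:ℝ)*x)
        simpa using this
      have h4 : |S ((m:ℝ) - (n:ℝ)*x)| ≤ M :=
        hM _ (by rw [abs_le]; constructor <;> linarith)
      have h5 : (n:ℝ)*x*S 1 - |S 1| ≤ (m:ℝ) * S 1 := by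
        have hb : ((n:ℝ)*x - (m:ℝ)) * S 1 ≤ |S 1| := by
          calc ((n:ℝ)*x - (m:ℝ)) * S 1 ≤ |((n:ℝ)*x - (m:ℝ)) * S 1| := le_abs_self _
          _ = |(n:ℝ)*x - (m:ℝ)| * |S 1| := abs_mul _ _
          _ ≤ 1 * |S 1| := by
              apply mul_le_mul_of_nonneg_right _ (abs_nonneg _)
              rw [abs_le]; constructor <;> linarith
          _ = |S 1| := one_mul _
        nlinarith [hb]
      rw [hSnx, hSm] at h3
      have := abs_le.mp h4
      linarith
    have habs : |(n:ℝ) * S x - (n:ℝ)*x*S 1| ≤ M + |S 1| :=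
      abs_le.mpr ⟨by linarith, by linarith⟩
    calc |S x - x * S 1| * n = |(S x - x * S 1) * n| := by
          rw [abs_mul, abs_of_nonneg hn'.le]
    _ = |(n:ℝ) * S x - (n:ℝ)*x*S 1| := by ring_nf
    _ ≤ M + |S 1| := habs
  -- conclude
  have hzero : |S x - x * S 1| ≤ 0 := by
    by_contra h
    push_neg at h
    set d := |S x - x * S 1| with hd
    obtain ⟨n, hn⟩ := exists_nat_gt ((M + |S 1|) / d)
    have hn1 : 1 ≤ n := by
      by_contra hc
      push_neg at hc
      interval_cases n
      · simp at hn
        have hM0 : 0 ≤ M := le_trans (abs_nonneg _) (hM 0 (by norm_num))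
        have : 0 ≤ (M + |S 1|) / d := by positivity
        linarith
    have := key n hn1
    have hdn : (M + |S 1|) < d * n := by
      rw [div_lt_iff₀ h] at hn
      linarith [hn]
    linarith
  have := abs_nonneg (S x - x * S 1)
  have : |S x - x * S 1| = 0 := le_antisymm hzero this
  have := abs_eq_zero.mp this
  linarith

/-- Paper's Theorem 1: a locally bounded sublinear `S : ℝ → ℝ` is linear
on each of `[0,∞)` and `(-∞,0]`. -/
theorem berz_theorem1 (S : ℝ → ℝ) (hS : Sublinear' S) (hlb : LocallyBounded' S) :
    (∀ x : ℝ, 0 ≤ x → S x = x * S 1) ∧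
    (∀ x : ℝ, x ≤ 0 → S x = |x| * S (-1) ∧ S x = -x * S (-1)) := by
  constructor
  · exact berz_key S hS hlb
  · intro x hx
    set T : ℝ → ℝ := fun y => S (-y) with hT
    have hTsub : Sublinear' T := by
      constructor
      · intro a b
        have := hS.1 (-a) (-b)
        simp only [hT, neg_add]
        linarith [this]
      · intro a n
        have := hS.2 (-a) n
        simpa [hT] using this
    have hTlb : LocallyBounded' T := by
      intro r hr
      obtain ⟨M, hM⟩ := hlb r hr
      exact ⟨M, fun y hy => hM (-y) (by simpa using hy)⟩
    have := berz_key T hTsub hTlb (-x) (by linarith)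
    have hTx : S x = -x * S (-1) := by simpa [hT] using this
    exact ⟨by rw [abs_of_nonpos hx]; linarith [hTx], hTx⟩
end

section
/- Let S : ℝ → ℝ be sublinear and Lebesgue measurable. Then S restricted to [0,∞) and S restricted to (−∞,0] are both linear: S(x) = x·S(1) for all x ≥ 0 and S(x) = −x·S(−1) for all x ≤ 0. -/
open Filter Topology Set

open MeasureTheory in
/-- A measurable subadditive function is bounded above on `[0,1]`. -/
lemma berz_bound_Icc01 (S : ℝ → ℝ) (hsub : Subadditive' S) (hmeas : Measurable S) :
    ∃ C : ℝ, ∀ t ∈ Icc (0:ℝ) 1, S t ≤ C := by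
  classical
  set A : ℕ → Set ℝ := fun n => Icc (0:ℝ) 2 ∩ S ⁻¹' Iic (n:ℝ) with hA
  have hAmeas : ∀ n, MeasurableSet (A n) := fun n =>
    measurableSet_Icc.inter (hmeas measurableSet_Iic)
  have hmono : Monotone A := by
    intro n m hnm x hx
    refine ⟨hx.1, ?_⟩
    have h2 : S x ≤ (n : ℝ) := hx.2
    have h3 : (n : ℝ) ≤ (m : ℝ) := Nat.cast_le.2 hnm
    exact le_trans h2 h3
  have hunion : ⋃ n, A n = Icc (0:ℝ) 2 := by
    ext x
    simp only [hA, mem_iUnion, mem_inter_iff, mem_preimage, mem_Iic]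
    constructor
    · rintro ⟨n, hn, -⟩; exact hn
    · intro hx
      obtain ⟨n, hn⟩ := exists_nat_ge (S x)
      exact ⟨n, hx, hn⟩
  have hiSup : (⨆ n, volume (A n)) = ENNReal.ofReal 2 := by
    rw [← hmono.directed_le.measure_iUnion, hunion, Real.volume_Icc]
    norm_num
  have h32 : ENNReal.ofReal (3/2) < ⨆ n, volume (A n) := by
    rw [hiSup]; exact ENNReal.ofReal_lt_ofReal_iff (by norm_num) |>.2 (by norm_num)
  obtain ⟨N, hN⟩ := lt_iSup_iff.1 h32
  -- `S` is bounded above by `2N` on `[1,2]`.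
  have key : ∀ t ∈ Icc (1:ℝ) 2, S t ≤ 2 * N := by
    intro t ht
    set B₁ : Set ℝ := A N ∩ Icc 0 t with hB₁def
    set B₂ : Set ℝ := (fun x => t - x) ⁻¹' B₁ with hB₂def
    have hB₁meas : MeasurableSet B₁ := (hAmeas N).inter measurableSet_Icc
    have hB₂meas : MeasurableSet B₂ := hB₁meas.preimage (measurable_const.sub measurable_id)
    have hvolB₂ : volume B₂ = volume B₁ := by
      have : B₂ = Neg.neg ⁻¹' ((fun x => t + x) ⁻¹' B₁) := by
        ext x; simp [hB₂def, sub_eq_add_neg]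
      rw [this, Measure.measure_preimage_neg, measure_preimage_add]
    have hB₁sub : B₁ ⊆ Icc 0 t := inter_subset_right
    have hB₂sub : B₂ ⊆ Icc 0 t := by
      intro x hx
      have h1 : t - x ∈ Icc (0:ℝ) t := hB₁sub hx
      constructor <;> [linarith [h1.2]; linarith [h1.1]]
    -- B₁ and B₂ intersect
    have hne : (B₁ ∩ B₂).Nonempty := by
      by_contra hcontra
      rw [not_nonempty_iff_eq_empty] at hcontra
      have hdisj : Disjoint B₁ B₂ := disjoint_iff_inter_eq_empty.2 hcontra
      have hsum : volume B₁ + volume B₂ = volume (B₁ ∪ B₂) :=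
        (measure_union hdisj hB₂meas).symm
      have hle : volume (B₁ ∪ B₂) ≤ ENNReal.ofReal t := by
        have hIcc : volume (Icc (0:ℝ) t) = ENNReal.ofReal t := by
          rw [Real.volume_Icc, sub_zero]
        rw [← hIcc]
        exact measure_mono (union_subset hB₁sub hB₂sub)
      -- lower bound on volume B₁
      have hAsub : A N ⊆ B₁ ∪ Ioc t 2 := by
        intro x hx
        rcases le_or_gt x t with hxt | hxt
        · exact Or.inl ⟨hx, hx.1.1, hxt⟩
        · exact Or.inr ⟨hxt, hx.1.2⟩
      have hlow : volume (A N) ≤ volume B₁ + ENNReal.ofReal (2 - t) := by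
        calc volume (A N) ≤ volume (B₁ ∪ Ioc t 2) := measure_mono hAsub
          _ ≤ volume B₁ + volume (Ioc t 2) := measure_union_le _ _
          _ = volume B₁ + ENNReal.ofReal (2 - t) := by rw [Real.volume_Ioc]
      -- convert to reals
      have hB₁fin : volume B₁ ≠ ⊤ := by
        refine ne_of_lt (lt_of_le_of_lt (measure_mono hB₁sub) ?_)
        rw [Real.volume_Icc]; exact ENNReal.ofReal_lt_top
      set a : ℝ := (volume B₁).toReal with ha
      have ha0 : 0 ≤ a := ENNReal.toReal_nonneg
      have h2a : 2 * a ≤ t := by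
        have h0 := le_trans (le_of_eq hsum) hle
        rw [hvolB₂, ← two_mul] at h0
        have h2 := ENNReal.toReal_le_of_le_ofReal (by linarith [ht.1]) h0
        rwa [ENNReal.toReal_mul, ENNReal.toReal_ofNat] at h2
      have hagt : 3/2 < a + (2 - t) := by
        have h1 : ENNReal.ofReal (3/2) < volume B₁ + ENNReal.ofReal (2 - t) :=
          lt_of_lt_of_le hN hlow
        have h2 : volume B₁ + ENNReal.ofReal (2 - t) ≠ ⊤ :=
          ENNReal.add_ne_top.2 ⟨hB₁fin, ENNReal.ofReal_ne_top⟩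
        have h3 := (ENNReal.ofReal_lt_iff_lt_toReal (by norm_num) h2).1 h1
        rwa [ENNReal.toReal_add hB₁fin ENNReal.ofReal_ne_top,
          ENNReal.toReal_ofReal (by linarith [ht.2])] at h3
      linarith [ht.1]
    obtain ⟨x, hx₁, hx₂⟩ := hne
    have hx₁' : S x ≤ N := hx₁.1.2
    have hx₂' : S (t - x) ≤ N := (hx₂ : t - x ∈ B₁).1.2
    have hst := hsub x (t - x)
    rw [show x + (t - x) = t by ring] at hst
    linarith
  -- shift down to [0,1]
  refine ⟨2 * N + S (-1), fun t ht => ?_⟩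
  have h1 : S (t + 1) ≤ 2 * N := key (t + 1) ⟨by linarith [ht.1], by linarith [ht.2]⟩
  have h2 := hsub (t + 1) (-1)
  rw [show t + 1 + -1 = t by ring] at h2
  linarith

/-- Sublinear bounded above on `[0,1]` implies linear on `[0,∞)`. -/
lemma berz_linear_of_bound (S : ℝ → ℝ) (hS : Sublinear' S)
    (hbd : ∃ C : ℝ, ∀ t ∈ Icc (0:ℝ) 1, S t ≤ C) :
    ∀ x : ℝ, 0 ≤ x → S x = x * S 1 := by
  obtain ⟨hsub, hhom⟩ := hS
  obtain ⟨C, hC⟩ := hbd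
  have hS0 : S 0 = 0 := by
    have := hhom 0 0
    simpa using this
  set g : ℝ → ℝ := fun x => S x - x * S 1 with hg
  have hgsub : ∀ x y, g (x + y) ≤ g x + g y := by
    intro x y
    have h := hsub x y
    have e : (x + y) * S 1 = x * S 1 + y * S 1 := by ring
    simp only [hg]
    linarith
  have hghom : ∀ x : ℝ, ∀ n : ℕ, g ((n : ℝ) * x) = (n : ℝ) * g x := by
    intro x n
    simp only [hg, hhom x n]
    ring
  have hgnat : ∀ n : ℕ, g (n : ℝ) = 0 := by
    intro n
    have := hghom 1 n
    simp only [mul_one] at this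
    rw [this]
    simp [hg]
  set C' : ℝ := C + |S 1| with hC'
  have hgC' : ∀ t ∈ Icc (0:ℝ) 1, g t ≤ C' := by
    intro t ht
    have h1 : S t ≤ C := hC t ht
    have h2 : -(t * S 1) ≤ |S 1| := by
      nlinarith [mul_nonneg ht.1 (by linarith [neg_abs_le (S 1)] : (0:ℝ) ≤ S 1 + |S 1|),
        mul_nonneg (by linarith [ht.2] : (0:ℝ) ≤ 1 - t) (abs_nonneg (S 1))]
    simp only [hg]; linarith
  have hC'0 : 0 ≤ C' := by
    have := hgC' 0 ⟨le_refl 0, zero_le_one⟩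
    simp only [hg, hS0, zero_mul, sub_zero] at this
    linarith
  -- key estimates: for all y ≥ 0, g y ≤ C' and g y ≥ -C'
  have hup : ∀ y : ℝ, 0 ≤ y → g y ≤ C' := by
    intro y hy
    have hfloor : (⌊y⌋₊ : ℝ) ≤ y := Nat.floor_le hy
    have hfrac : y - ⌊y⌋₊ ∈ Icc (0:ℝ) 1 := by
      constructor
      · linarith
      · have := Nat.lt_floor_add_one y
        linarith
    have h1 : g y ≤ g (⌊y⌋₊ : ℝ) + g (y - ⌊y⌋₊) := by
      have := hgsub (⌊y⌋₊ : ℝ) (y - ⌊y⌋₊)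
      rw [show (⌊y⌋₊ : ℝ) + (y - ⌊y⌋₊) = y by ring] at this
      exact this
    rw [hgnat ⌊y⌋₊] at h1
    linarith [hgC' _ hfrac]
  have hlow : ∀ y : ℝ, 0 ≤ y → -C' ≤ g y := by
    intro y hy
    set k : ℕ := ⌊y⌋₊ + 1 with hk
    have hky : y < (k : ℝ) := by
      have := Nat.lt_floor_add_one y
      push_cast [hk]
      linarith
    have hfrac : (k : ℝ) - y ∈ Icc (0:ℝ) 1 := by
      constructor
      · linarith
      · have : (⌊y⌋₊ : ℝ) ≤ y := Nat.floor_le hy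
        push_cast [hk]
        linarith
    have h1 : g (k : ℝ) ≤ g y + g ((k : ℝ) - y) := by
      have := hgsub y ((k : ℝ) - y)
      rw [show y + ((k : ℝ) - y) = (k : ℝ) by ring] at this
      exact this
    rw [hgnat k] at h1
    linarith [hgC' _ hfrac]
  -- conclude g x = 0 for x ≥ 0
  intro x hx
  have hgx : g x = 0 := by
    have hbound : ∀ n : ℕ, 0 < n → |g x| ≤ C' / n := by
      intro n hn
      have hnx : (0:ℝ) ≤ (n : ℝ) * x := by positivity
      have h1 : (n : ℝ) * g x ≤ C' := by rw [← hghom x n]; exact hup _ hnx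
      have h2 : -C' ≤ (n : ℝ) * g x := by rw [← hghom x n]; exact hlow _ hnx
      have hnpos : (0:ℝ) < n := by exact_mod_cast hn
      have habs : |(n : ℝ) * g x| ≤ C' := abs_le.2 ⟨h2, h1⟩
      rw [abs_mul, abs_of_pos hnpos] at habs
      have h3 : (n : ℝ) * |g x| / n ≤ C' / n := by gcongr
      rwa [mul_div_cancel_left₀ _ (ne_of_gt hnpos)] at h3
    by_contra hne
    have habs : 0 < |g x| := abs_pos.2 hne
    obtain ⟨n, hn⟩ := exists_nat_gt (C' / |g x|)
    have hbig := hbound (n + 1) (Nat.succ_pos n)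
    push_cast at hbig
    have hn1 : C' / |g x| < (n : ℝ) + 1 := by linarith
    have hnp : (0:ℝ) < (n : ℝ) + 1 := by positivity
    rw [div_lt_iff₀ habs] at hn1
    rw [le_div_iff₀ hnp, mul_comm] at hbig
    linarith
  simp only [hg] at hgx
  linarith

/-- Paper's Theorem BM (measurable case): a Lebesgue-measurable sublinear
`S : ℝ → ℝ` is linear on each of `[0,∞)` and `(-∞,0]`. -/
theorem berz_theoremBM_measurable (S : ℝ → ℝ) (hS : Sublinear' S)
    (hmeas : Measurable S) :
    (∀ x : ℝ, 0 ≤ x → S x = x * S 1) ∧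
    (∀ x : ℝ, x ≤ 0 → S x = -x * S (-1)) := by
  constructor
  · exact berz_linear_of_bound S hS (berz_bound_Icc01 S hS.1 hmeas)
  · set T : ℝ → ℝ := fun x => S (-x) with hT
    have hTsub : Subadditive' T := by
      intro x y
      simp only [hT, neg_add]
      exact hS.1 (-x) (-y)
    have hThom : ∀ x : ℝ, ∀ n : ℕ, T ((n : ℝ) * x) = (n : ℝ) * T x := by
      intro x n
      simp only [hT]
      rw [show -((n:ℝ) * x) = (n:ℝ) * (-x) by ring, hS.2 (-x) n]
    have hTmeas : Measurable T := hmeas.comp measurable_neg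
    have hTlin := berz_linear_of_bound T ⟨hTsub, hThom⟩ (berz_bound_Icc01 T hTsub hTmeas)
    intro x hx
    have := hTlin (-x) (by linarith)
    simp only [hT, neg_neg] at this
    rw [this]
end

section
/- Let S : ℝ → ℝ be sublinear and have the Baire property (i.e. S is Baire measurable). Then S restricted to [0,∞) and S restricted to (−∞,0] are both linear: S(x) = x·S(1) for all x ≥ 0 and S(x) = −x·S(−1) for all x ≤ 0. -/
open Filter Topology Set

/-- `S` has the Baire property: the preimage of every open set differs from an open
set by a meagre set. -/
def HasBaireProperty (S : ℝ → ℝ) : Prop :=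
  ∀ U : Set ℝ, IsOpen U → ∃ V : Set ℝ, IsOpen V ∧ IsMeagre (symmDiff (S ⁻¹' U) V)

lemma berz_meagre_union {s t : Set ℝ} (hs : IsMeagre s) (ht : IsMeagre t) :
    IsMeagre (s ∪ t) := by
  rw [IsMeagre, compl_union]
  exact Filter.inter_mem hs ht

lemma berz_notMeagre_of_isOpen {W : Set ℝ} (hW : IsOpen W) (hne : W.Nonempty) :
    ¬ IsMeagre W := by
  intro h
  obtain ⟨y, hy1, hy2⟩ := (dense_of_mem_residual h).inter_open_nonempty W hW hne
  exact hy2 hy1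

/-- A subadditive function with the Baire property is bounded above near `0`. -/
lemma berz_bdd_near_zero (S : ℝ → ℝ) (hsub : Subadditive' S)
    (hbaire : HasBaireProperty S) :
    ∃ C δ : ℝ, 0 < δ ∧ ∀ t : ℝ, |t| < δ → S t ≤ C := by
  -- the sets `{S < n}` cover ℝ, so one of them is nonmeagre
  obtain ⟨n, hn⟩ : ∃ n : ℕ, ¬ IsMeagre (S ⁻¹' (Iio (n : ℝ))) := by
    by_contra h
    push_neg at h
    have hcov : (⋃ n : ℕ, S ⁻¹' (Iio (n : ℝ))) = univ := by
      ext x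
      simp only [mem_iUnion, mem_preimage, mem_Iio, mem_univ, iff_true]
      exact exists_nat_gt (S x)
    have : IsMeagre (univ : Set ℝ) := hcov ▸ isMeagre_iUnion h
    exact berz_notMeagre_of_isOpen isOpen_univ univ_nonempty this
  obtain ⟨V, hVopen, hVmeagre⟩ := hbaire (Iio (n : ℝ)) isOpen_Iio
  set A := S ⁻¹' (Iio (n : ℝ)) with hA
  -- V is nonempty
  have hVne : V.Nonempty := by
    rcases eq_empty_or_nonempty V with h | h
    · exfalso
      apply hn
      apply hVmeagre.mono
      intro x hx
      simp [symmDiff, h, hx]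
    · exact h
  obtain ⟨v, hv⟩ := hVne
  -- Key: S is bounded above by `2n` on `v + V`
  have key : ∀ t ∈ V, S (v + t) < 2 * n := by
    intro t ht
    set c := v + t with hc
    have hcont : Continuous (fun x : ℝ => c - x) := by continuity
    have hopen : IsOpenMap (fun x : ℝ => c - x) := by
      have heq : (fun x : ℝ => c - x) = (Homeomorph.addLeft c) ∘ (Homeomorph.neg ℝ) := by
        ext x; simp [sub_eq_add_neg]
      rw [heq]
      exact (Homeomorph.addLeft c).isOpenMap.comp (Homeomorph.neg ℝ).isOpenMap
    have hM' : IsMeagre ((fun x : ℝ => c - x) ⁻¹' (symmDiff A V)) :=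
      hVmeagre.preimage_of_isOpenMap hcont hopen
    set W := V ∩ ((fun x : ℝ => c - x) ⁻¹' V) with hW
    have hWopen : IsOpen W := hVopen.inter (hVopen.preimage hcont)
    have hWne : W.Nonempty := ⟨t, ht, by simp [hc]; exact hv⟩
    -- find a point of W avoiding both meagre sets
    have : ¬ (W ⊆ symmDiff A V ∪ (fun x : ℝ => c - x) ⁻¹' (symmDiff A V)) := by
      intro hsubset
      exact berz_notMeagre_of_isOpen hWopen hWne
        ((berz_meagre_union hVmeagre hM').mono hsubset)
    obtain ⟨x, hxW, hxM⟩ := not_subset.mp this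
    simp only [mem_union, not_or] at hxM
    obtain ⟨hxM1, hxM2⟩ := hxM
    have hxA : x ∈ A := by
      by_contra hxA
      exact hxM1 (Or.inr ⟨hxW.1, hxA⟩)
    have hcxA : c - x ∈ A := by
      by_contra hcxA
      exact hxM2 (Or.inr ⟨hxW.2, hcxA⟩)
    have h1 : S x < n := hxA
    have h2 : S (c - x) < n := hcxA
    have := hsub x (c - x)
    have hxc : x + (c - x) = c := by ring
    rw [hxc] at this
    linarith
  -- get a ball around v inside V
  obtain ⟨ε, hε, hball⟩ := Metric.isOpen_iff.mp hVopen v hv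
  refine ⟨2 * n + S (-(2 * v)), ε, hε, fun u hu => ?_⟩
  have hvu : v + u ∈ V := by
    apply hball
    simp [Real.dist_eq, abs_sub_comm]
    simpa [add_sub_cancel_left] using hu
  have h1 : S (v + (v + u)) < 2 * n := key (v + u) hvu
  have h2 := hsub (v + (v + u)) (-(2 * v))
  have h3 : v + (v + u) + -(2 * v) = u := by ring
  rw [h3] at h2
  linarith

lemma berz_S_zero (S : ℝ → ℝ) (hS : Sublinear' S) : S 0 = 0 := by
  have := hS.2 0 0
  simpa using this

lemma berz_rat_pos (S : ℝ → ℝ) (hS : Sublinear' S) (q : ℚ) (hq : 0 ≤ q) :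
    S (q : ℝ) = (q : ℝ) * S 1 := by
  have hden : (0:ℝ) < (q.den : ℝ) := by exact_mod_cast q.pos
  set m := q.num.toNat with hm
  have hnum : ((q.num : ℤ) : ℝ) = (m : ℝ) := by
    rw [hm]
    exact_mod_cast (Int.toNat_of_nonneg (Rat.num_nonneg.mpr hq)).symm
  have hcast : (q : ℝ) = (m : ℝ) / (q.den : ℝ) := by
    rw [Rat.cast_def, hnum]
  have h1 : (q.den : ℝ) * S (q : ℝ) = S ((q.den : ℝ) * (q : ℝ)) := (hS.2 (q:ℝ) q.den).symm
  have h2 : (q.den : ℝ) * (q : ℝ) = (m : ℝ) := by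
    rw [hcast]; field_simp
  have h3 : S ((m : ℝ)) = (m : ℝ) * S 1 := by
    have := hS.2 1 m
    simpa using this
  rw [h2, h3] at h1
  have h4 : S (q : ℝ) = (m : ℝ) / (q.den : ℝ) * S 1 := by
    field_simp
    linear_combination h1
  rw [h4, hcast]

lemma berz_rat_neg (S : ℝ → ℝ) (hS : Sublinear' S) (q : ℚ) (hq : q ≤ 0) :
    S (q : ℝ) = (-q : ℝ) * S (-1) := by
  have hden : (0:ℝ) < (q.den : ℝ) := by exact_mod_cast q.pos
  set m := (-q.num).toNat with hm
  have h0 : 0 ≤ -q.num := by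
    simp only [Left.nonneg_neg_iff]
    exact Rat.num_nonpos.mpr hq
  have hz : ((m : ℕ) : ℤ) = -q.num := by rw [hm]; exact Int.toNat_of_nonneg h0
  have hnum : ((q.num : ℤ) : ℝ) = -(m : ℝ) := by
    have hmr : (m : ℝ) = -(q.num : ℝ) := by exact_mod_cast hz
    linarith
  have hcast : (q : ℝ) = -(m : ℝ) / (q.den : ℝ) := by
    rw [Rat.cast_def, hnum]
  have h1 : (q.den : ℝ) * S (q : ℝ) = S ((q.den : ℝ) * (q : ℝ)) := (hS.2 (q:ℝ) q.den).symm
  have h2 : (q.den : ℝ) * (q : ℝ) = (m : ℝ) * (-1) := by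
    rw [hcast]; field_simp
  have h3 : S ((m : ℝ) * (-1)) = (m : ℝ) * S (-1) := hS.2 (-1) m
  rw [h2, h3] at h1
  have h4 : S (q : ℝ) = (m : ℝ) / (q.den : ℝ) * S (-1) := by
    field_simp
    linear_combination h1
  rw [h4, hcast]
  ring

lemma berz_small (S : ℝ → ℝ) (hS : Sublinear' S) (hbaire : HasBaireProperty S) :
    ∀ ε : ℝ, 0 < ε → ∃ δ : ℝ, 0 < δ ∧ ∀ t : ℝ, |t| < δ → |S t| < ε := by
  obtain ⟨C, δ, hδ, hC⟩ := berz_bdd_near_zero S hS.1 hbaire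
  intro ε hε
  set C' := max C 1 with hC'
  have hC'pos : 0 < C' := lt_of_lt_of_le one_pos (le_max_right _ _)
  obtain ⟨n, hn⟩ := exists_nat_gt (C' / ε)
  have hnpos : 0 < (n : ℝ) := lt_trans (div_pos hC'pos hε) hn
  have hbound : ∀ t : ℝ, |t| < δ / n → S t ≤ C' / n := by
    intro t ht
    have hnt : |(n : ℝ) * t| < δ := by
      rw [abs_mul, abs_of_pos hnpos]
      calc (n : ℝ) * |t| < (n : ℝ) * (δ / n) := by
            exact (mul_lt_mul_iff_right₀ hnpos).mpr ht
        _ = δ := by field_simp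
    have h1 : S ((n : ℝ) * t) ≤ C := hC _ hnt
    have h2 : S ((n : ℝ) * t) = (n : ℝ) * S t := hS.2 t n
    rw [h2] at h1
    rw [le_div_iff₀ hnpos]
    calc S t * (n : ℝ) = (n : ℝ) * S t := by ring
      _ ≤ C := h1
      _ ≤ C' := le_max_left _ _
  refine ⟨δ / n, div_pos hδ hnpos, fun t ht => ?_⟩
  have hCn : C' / n < ε := by
    rw [div_lt_iff₀ hnpos]
    rw [div_lt_iff₀ hε] at hn
    linarith
  rw [abs_lt]
  constructor
  · have h0 : S 0 = 0 := berz_S_zero S hS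
    have := hS.1 t (-t)
    rw [show t + -t = 0 by ring, h0] at this
    have h2 : S (-t) ≤ C' / n := hbound (-t) (by rwa [abs_neg])
    linarith
  · exact lt_of_le_of_lt (hbound t ht) hCn

/-- Paper's Theorem BM (Baire case): a sublinear `S : ℝ → ℝ` with the Baire property
is linear on each of `[0,∞)` and `(-∞,0]`. -/
theorem berz_theoremBM_baire (S : ℝ → ℝ) (hS : Sublinear' S)
    (hbaire : HasBaireProperty S) :
    (∀ x : ℝ, 0 ≤ x → S x = x * S 1) ∧
    (∀ x : ℝ, x ≤ 0 → S x = -x * S (-1)) := by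
  have key := berz_small S hS hbaire
  have h0 : S 0 = 0 := berz_S_zero S hS
  constructor
  · intro x hx
    rcases eq_or_lt_of_le hx with h | hxpos
    · rw [← h, h0]; ring
    have hK : (0:ℝ) < 1 + |S 1| := by positivity
    apply le_antisymm
    · apply le_of_forall_pos_le_add
      intro ε hε
      set ε' := ε / (2 * (1 + |S 1|)) with hε'def
      have hε' : 0 < ε' := by positivity
      obtain ⟨δ, hδ, hsmall⟩ := key ε' hε'
      set θ := min δ (min x ε') with hθ
      have hθpos : 0 < θ := lt_min hδ (lt_min hxpos hε')
      obtain ⟨q, hq1, hq2⟩ := exists_rat_btwn (show x - θ < x by linarith)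
      have hqpos : (0:ℝ) ≤ (q:ℝ) := by
        have : θ ≤ x := le_trans (min_le_right _ _) (min_le_left _ _)
        linarith
      have hqS : S (q:ℝ) = (q:ℝ) * S 1 := berz_rat_pos S hS q (by exact_mod_cast hqpos)
      have hxq1 : 0 < x - q := by linarith
      have hxq2 : x - q < θ := by linarith
      have hxqδ : |x - (q:ℝ)| < δ := by
        rw [abs_of_pos hxq1]
        exact lt_of_lt_of_le hxq2 (min_le_left _ _)
      have hsm := hsmall _ hxqδ
      have hSxq : S (x - q) < ε' := lt_of_le_of_lt (le_abs_self _) hsm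
      have hsub := hS.1 (q:ℝ) (x - q)
      rw [show (q:ℝ) + (x - q) = x by ring, hqS] at hsub
      -- (x - q) * (-S 1) ≤ ε' * |S 1|
      have hθε' : x - (q:ℝ) ≤ ε' :=
        le_trans (le_of_lt hxq2) (le_trans (min_le_right _ _) (min_le_right _ _))
      have hprod : (x - (q:ℝ)) * (-(S 1)) ≤ ε' * |S 1| := by
        calc (x - (q:ℝ)) * (-(S 1)) ≤ (x - (q:ℝ)) * |S 1| :=
              mul_le_mul_of_nonneg_left (neg_le_abs _) (le_of_lt hxq1)
          _ ≤ ε' * |S 1| := mul_le_mul_of_nonneg_right hθε' (abs_nonneg _)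
      have hεeq : ε' * (1 + |S 1|) = ε / 2 := by
        rw [hε'def]; field_simp
      nlinarith [abs_nonneg (S 1)]
    · apply le_of_forall_pos_le_add
      intro ε hε
      set ε' := ε / (2 * (1 + |S 1|)) with hε'def
      have hε' : 0 < ε' := by positivity
      obtain ⟨δ, hδ, hsmall⟩ := key ε' hε'
      set θ := min δ ε' with hθ
      have hθpos : 0 < θ := lt_min hδ hε'
      obtain ⟨q, hq1, hq2⟩ := exists_rat_btwn (show x < x + θ by linarith)
      have hqpos : (0:ℝ) ≤ (q:ℝ) := by linarith
      have hqS : S (q:ℝ) = (q:ℝ) * S 1 := berz_rat_pos S hS q (by exact_mod_cast hqpos)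
      have hxq1 : 0 < (q:ℝ) - x := by linarith
      have hxq2 : (q:ℝ) - x < θ := by linarith
      have hxqδ : |(q:ℝ) - x| < δ := by
        rw [abs_of_pos hxq1]
        exact lt_of_lt_of_le hxq2 (min_le_left _ _)
      have hsm := hsmall _ hxqδ
      have hSqx : S ((q:ℝ) - x) < ε' := lt_of_le_of_lt (le_abs_self _) hsm
      have hsub := hS.1 x ((q:ℝ) - x)
      rw [show x + ((q:ℝ) - x) = (q:ℝ) by ring, hqS] at hsub
      have hθε' : (q:ℝ) - x ≤ ε' := le_trans (le_of_lt hxq2) (min_le_right _ _)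
      have hprod : ((q:ℝ) - x) * (-(S 1)) ≤ ε' * |S 1| := by
        calc ((q:ℝ) - x) * (-(S 1)) ≤ ((q:ℝ) - x) * |S 1| :=
              mul_le_mul_of_nonneg_left (neg_le_abs _) (le_of_lt hxq1)
          _ ≤ ε' * |S 1| := mul_le_mul_of_nonneg_right hθε' (abs_nonneg _)
      have hεeq : ε' * (1 + |S 1|) = ε / 2 := by
        rw [hε'def]; field_simp
      nlinarith [abs_nonneg (S 1)]
  · intro x hx
    rcases eq_or_lt_of_le hx with h | hxneg
    · rw [h, h0]; ring
    have hK : (0:ℝ) < 1 + |S (-1)| := by positivity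
    apply le_antisymm
    · apply le_of_forall_pos_le_add
      intro ε hε
      set ε' := ε / (2 * (1 + |S (-1)|)) with hε'def
      have hε' : 0 < ε' := by positivity
      obtain ⟨δ, hδ, hsmall⟩ := key ε' hε'
      set θ := min δ ε' with hθ
      have hθpos : 0 < θ := lt_min hδ hε'
      obtain ⟨q, hq1, hq2⟩ := exists_rat_btwn (show x - θ < x by linarith)
      have hqneg : (q:ℝ) ≤ 0 := by linarith
      have hqS : S (q:ℝ) = (-(q:ℝ)) * S (-1) := by
        have := berz_rat_neg S hS q (by exact_mod_cast hqneg)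
        push_cast at this
        convert this using 2
      have hxq1 : 0 < x - (q:ℝ) := by linarith
      have hxq2 : x - (q:ℝ) < θ := by linarith
      have hxqδ : |x - (q:ℝ)| < δ := by
        rw [abs_of_pos hxq1]
        exact lt_of_lt_of_le hxq2 (min_le_left _ _)
      have hsm := hsmall _ hxqδ
      have hSxq : S (x - q) < ε' := lt_of_le_of_lt (le_abs_self _) hsm
      have hsub := hS.1 (q:ℝ) (x - q)
      rw [show (q:ℝ) + (x - q) = x by ring, hqS] at hsub
      have hθε' : x - (q:ℝ) ≤ ε' := le_trans (le_of_lt hxq2) (min_le_right _ _)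
      have hprod : (x - (q:ℝ)) * (S (-1)) ≤ ε' * |S (-1)| := by
        calc (x - (q:ℝ)) * (S (-1)) ≤ (x - (q:ℝ)) * |S (-1)| :=
              mul_le_mul_of_nonneg_left (le_abs_self _) (le_of_lt hxq1)
          _ ≤ ε' * |S (-1)| := mul_le_mul_of_nonneg_right hθε' (abs_nonneg _)
      have hεeq : ε' * (1 + |S (-1)|) = ε / 2 := by
        rw [hε'def]; field_simp
      nlinarith [abs_nonneg (S (-1))]
    · apply le_of_forall_pos_le_add
      intro ε hε
      set ε' := ε / (2 * (1 + |S (-1)|)) with hε'def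
      have hε' : 0 < ε' := by positivity
      obtain ⟨δ, hδ, hsmall⟩ := key ε' hε'
      set θ := min δ (min (-x) ε') with hθ
      have hθpos : 0 < θ := lt_min hδ (lt_min (by linarith) hε')
      obtain ⟨q, hq1, hq2⟩ := exists_rat_btwn (show x < x + θ by linarith)
      have hqneg : (q:ℝ) ≤ 0 := by
        have : θ ≤ -x := le_trans (min_le_right _ _) (min_le_left _ _)
        linarith
      have hqS : S (q:ℝ) = (-(q:ℝ)) * S (-1) := by
        have := berz_rat_neg S hS q (by exact_mod_cast hqneg)
        push_cast at this
        convert this using 2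
      have hxq1 : 0 < (q:ℝ) - x := by linarith
      have hxq2 : (q:ℝ) - x < θ := by linarith
      have hxqδ : |(q:ℝ) - x| < δ := by
        rw [abs_of_pos hxq1]
        exact lt_of_lt_of_le hxq2 (min_le_left _ _)
      have hsm := hsmall _ hxqδ
      have hSqx : S ((q:ℝ) - x) < ε' := lt_of_le_of_lt (le_abs_self _) hsm
      have hsub := hS.1 x ((q:ℝ) - x)
      rw [show x + ((q:ℝ) - x) = (q:ℝ) by ring, hqS] at hsub
      have hθε' : (q:ℝ) - x ≤ ε' :=
        le_trans (le_of_lt hxq2) (le_trans (min_le_right _ _) (min_le_right _ _))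
      have hprod : ((q:ℝ) - x) * (S (-1)) ≤ ε' * |S (-1)| := by
        calc ((q:ℝ) - x) * (S (-1)) ≤ ((q:ℝ) - x) * |S (-1)| :=
              mul_le_mul_of_nonneg_left (le_abs_self _) (le_of_lt hxq1)
          _ ≤ ε' * |S (-1)| := mul_le_mul_of_nonneg_right hθε' (abs_nonneg _)
      have hεeq : ε' * (1 + |S (-1)|) = ε / 2 := by
        rw [hε'def]; field_simp
      nlinarith [abs_nonneg (S (-1))]
end

section
/- Let S : ℝ → ℝ be subadditive and locally bounded, and let 𝔸 be a nontrivial additive subgroup of ℝ (𝔸 ≠ {0}) such that the restriction S|𝔸 is additive, i.e. S(a+b) = S(a) + S(b) for all a, b ∈ 𝔸. Then S|𝔸 is linear: there exists c ∈ ℝ such that S(a) = c·a for all a ∈ 𝔸. -/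
open Filter Topology Set

/-- Paper's Theorem 2 (first part): if `S : ℝ → ℝ` is subadditive and locally bounded
and `𝔸` is a nontrivial additive subgroup of `ℝ` on which `S` is additive,
then `S` restricted to `𝔸` is linear. -/
theorem berz_theorem2_first (S : ℝ → ℝ) (hsub : Subadditive' S) (hlb : LocallyBounded' S)
    (A : AddSubgroup ℝ) (hA : A ≠ ⊥)
    (hadd : ∀ a ∈ A, ∀ b ∈ A, S (a + b) = S a + S b) :
    ∃ c : ℝ, ∀ a ∈ A, S a = c * a := by
  -- S 0 = 0
  have hS0 : S 0 = 0 := by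
    have := hadd 0 A.zero_mem 0 A.zero_mem
    simp at this; linarith
  -- the additive hom on A
  let f : A →+ ℝ :=
    { toFun := fun a => S a
      map_zero' := by simpa using hS0
      map_add' := fun a b => hadd a a.2 b b.2 }
  have hf : ∀ a : A, f a = S a := fun a => rfl
  -- pick nonzero a₀ ∈ A
  obtain ⟨a₀, ha₀A, ha₀⟩ : ∃ a₀ ∈ A, a₀ ≠ 0 := by
    by_contra h
    push_neg at h
    apply hA
    ext x
    simp only [AddSubgroup.mem_bot]
    exact ⟨fun hx => h x hx, fun hx => hx ▸ A.zero_mem⟩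
  have ha₀pos : 0 < |a₀| := abs_pos.mpr ha₀
  obtain ⟨M, hM⟩ := hlb |a₀| ha₀pos
  have hM0 : 0 ≤ M := le_trans (abs_nonneg _) (hM 0 (by simpa using le_of_lt ha₀pos))
  set c : ℝ := S a₀ / a₀ with hc
  have hca₀ : c * a₀ = S a₀ := div_mul_cancel₀ _ ha₀
  refine ⟨c, fun a ha => ?_⟩
  set K : ℝ := M + |c| * |a₀| with hK
  -- key bound: for all n : ℕ, n * |S a - c * a| ≤ K
  have key : ∀ n : ℕ, (n : ℝ) * |S a - c * a| ≤ K := by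
    intro n
    set m : ℤ := ⌊(n : ℝ) * a / a₀⌋ with hm
    -- h1 : |n*a - m*a₀| ≤ |a₀|
    have hfr : |(n : ℝ) * a / a₀ - m| ≤ 1 := by
      rw [hm]
      have h1 := Int.floor_le ((n : ℝ) * a / a₀)
      have h2 := Int.lt_floor_add_one ((n : ℝ) * a / a₀)
      rw [abs_le]; constructor <;> linarith
    have h1 : |(n : ℝ) * a - m * a₀| ≤ |a₀| := by
      have : (n : ℝ) * a - m * a₀ = ((n : ℝ) * a / a₀ - m) * a₀ := by
        field_simp
      rw [this, abs_mul]
      calc |(n : ℝ) * a / a₀ - m| * |a₀| ≤ 1 * |a₀| :=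
            mul_le_mul_of_nonneg_right hfr (abs_nonneg _)
        _ = |a₀| := one_mul _
    -- element of A
    have hmem : (n : ℝ) * a - m * a₀ ∈ A :=
      A.sub_mem (by simpa using A.nsmul_mem ha n) (by simpa using A.zsmul_mem ha₀A m)
    -- h2 : S of that element
    have h2 : S ((n : ℝ) * a - m * a₀) = (n : ℝ) * S a - m * S a₀ := by
      have := map_sub f ((n : ℕ) • (⟨a, ha⟩ : A)) (m • (⟨a₀, ha₀A⟩ : A))
      rw [map_nsmul, map_zsmul] at this
      have hcoe : (((n : ℕ) • (⟨a, ha⟩ : A) - m • (⟨a₀, ha₀A⟩ : A) : A) : ℝ)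
          = (n : ℝ) * a - m * a₀ := by
        push_cast [zsmul_eq_mul]
        ring
      calc S ((n : ℝ) * a - m * a₀)
          = f ((n : ℕ) • (⟨a, ha⟩ : A) - m • (⟨a₀, ha₀A⟩ : A)) := by
            rw [hf]; congr 1; exact hcoe.symm
        _ = (n : ℕ) • f (⟨a, ha⟩ : A) - m • f (⟨a₀, ha₀A⟩ : A) := this
        _ = (n : ℝ) * S a - m * S a₀ := by
            rw [hf, hf]; push_cast [zsmul_eq_mul]; ring
    have h3 : |(n : ℝ) * S a - m * S a₀| ≤ M := by
      rw [← h2]; exact hM _ h1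
    -- combine
    have hdecomp : (n : ℝ) * (S a - c * a)
        = ((n : ℝ) * S a - m * S a₀) + c * (m * a₀ - (n : ℝ) * a) := by
      have : (m : ℝ) * S a₀ = m * (c * a₀) := by rw [hca₀]
      rw [this]; ring
    calc (n : ℝ) * |S a - c * a| = |(n : ℝ) * (S a - c * a)| := by
          rw [abs_mul, Nat.abs_cast]
      _ ≤ |(n : ℝ) * S a - m * S a₀| + |c * (m * a₀ - (n : ℝ) * a)| := by
          rw [hdecomp]; exact abs_add_le _ _
      _ ≤ M + |c| * |a₀| := by
          gcongr
          rw [abs_mul, abs_sub_comm]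
          exact mul_le_mul_of_nonneg_left h1 (abs_nonneg _)
  -- conclude
  by_contra h
  have hpos : 0 < |S a - c * a| := abs_pos.mpr (sub_ne_zero.mpr h)
  obtain ⟨n, hn⟩ := exists_nat_gt (K / |S a - c * a|)
  have : K < (n : ℝ) * |S a - c * a| := by
    rw [div_lt_iff₀ hpos] at hn; linarith
  exact absurd (key n) (not_le.mpr this)
end

section
/- Let 𝔸 be a dense, divisible additive subgroup of ℝ and let S : 𝔸 → ℝ be locally bounded (bounded on every bounded subset of 𝔸) and sublinear on 𝔸 (S(a+b) ≤ S(a)+S(b) and S(na) = nS(a) for all a, b ∈ 𝔸 and n ∈ ℕ). Then S⁺(x) := lim_{δ→0} sup{S(t) : t ∈ (x−δ, x+δ) ∩ 𝔸} and S⁻(x) := lim_{δ→0} inf{S(t) : t ∈ (x−δ, x+δ) ∩ 𝔸} define real-valued, locally bounded, subadditive functions S⁺, S⁻ : ℝ → ℝ satisfying S⁺(kx) = kS⁺(x) and S⁻(kx) = kS⁻(x) for all x ∈ ℝ and k ∈ ℕ, with S⁻(x) ≤ S⁺(x) for all x ∈ ℝ and S⁻(a) ≤ S(a) ≤ S⁺(a)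 for all a ∈ 𝔸. -/
open Filter Topology Set

/-- `S⁺_𝔸(x) = lim_{δ→0} sup {S t : t ∈ (x-δ, x+δ) ∩ 𝔸}`, i.e. the upper limit of
`S` at `x` through the set `A`. -/
noncomputable def SPlus (A : Set ℝ) (S : ℝ → ℝ) (x : ℝ) : ℝ :=
  Filter.limsup S (𝓝[A] x)

/-- `S⁻_𝔸(x) = lim_{δ→0} inf {S t : t ∈ (x-δ, x+δ) ∩ 𝔸}`, i.e. the lower limit of
`S` at `x` through the set `A`. -/
noncomputable def SMinus (A : Set ℝ) (S : ℝ → ℝ) (x : ℝ) : ℝ :=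
  Filter.liminf S (𝓝[A] x)

lemma limsup_map' {α β : Type*} (u : β → ℝ) (m : α → β) (f : Filter α) :
    Filter.limsup u (Filter.map m f) = Filter.limsup (u ∘ m) f := by
  simp [Filter.limsup, Filter.map_map]

lemma liminf_map' {α β : Type*} (u : β → ℝ) (m : α → β) (f : Filter α) :
    Filter.liminf u (Filter.map m f) = Filter.liminf (u ∘ m) f := by
  simp [Filter.liminf, Filter.map_map]

/-- First half of the paper's Theorem 3: for `𝔸` a dense divisible additive subgroup
of `ℝ` and `S` locally bounded and sublinear on `𝔸`, the induced functions
`S⁺ = SPlus 𝔸 S` and `S⁻ = SMinus 𝔸 S` are locally bounded, subadditive and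
`ℕ`-homogeneous on `ℝ`, with `S⁻ ≤ S⁺` everywhere and `S⁻ ≤ S ≤ S⁺` on `𝔸`. -/
theorem berz_theorem3_first (A : AddSubgroup ℝ) (hdense : Dense (A : Set ℝ))
    (hdiv : ∀ a ∈ A, ∀ k : ℕ, 0 < k → a / (k : ℝ) ∈ A)
    (S : ℝ → ℝ)
    (hlb : ∀ r : ℝ, 0 < r → ∃ M : ℝ, ∀ a ∈ A, |a| ≤ r → |S a| ≤ M)
    (hsub : ∀ a ∈ A, ∀ b ∈ A, S (a + b) ≤ S a + S b)
    (hhom : ∀ a ∈ A, ∀ n : ℕ, S ((n : ℝ) * a) = (n : ℝ) * S a) :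
    LocallyBounded' (SPlus (A : Set ℝ) S) ∧ LocallyBounded' (SMinus (A : Set ℝ) S) ∧
    Subadditive' (SPlus (A : Set ℝ) S) ∧ Subadditive' (SMinus (A : Set ℝ) S) ∧
    (∀ x : ℝ, ∀ k : ℕ,
      SPlus (A : Set ℝ) S ((k : ℝ) * x) = (k : ℝ) * SPlus (A : Set ℝ) S x ∧
      SMinus (A : Set ℝ) S ((k : ℝ) * x) = (k : ℝ) * SMinus (A : Set ℝ) S x) ∧
    (∀ x : ℝ, SMinus (A : Set ℝ) S x ≤ SPlus (A : Set ℝ) S x) ∧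
    (∀ a ∈ A, SMinus (A : Set ℝ) S a ≤ S a ∧ S a ≤ SPlus (A : Set ℝ) S a) := by
  -- basic filter facts
  have hne : ∀ x : ℝ, (𝓝[(A : Set ℝ)] x).NeBot := fun x =>
    mem_closure_iff_nhdsWithin_neBot.mp (hdense x)
  -- eventual boundedness of S along the filter
  have hbd : ∀ x : ℝ, ∃ M : ℝ, ∀ᶠ t in 𝓝[(A : Set ℝ)] x, |S t| ≤ M := by
    intro x
    obtain ⟨M, hM⟩ := hlb (|x| + 1) (by positivity)
    refine ⟨M, ?_⟩
    have h1 : ∀ᶠ t in 𝓝[(A : Set ℝ)] x, t ∈ Metric.ball x 1 :=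
      eventually_nhdsWithin_of_eventually_nhds (Metric.ball_mem_nhds x one_pos)
    have h2 : ∀ᶠ t in 𝓝[(A : Set ℝ)] x, t ∈ (A : Set ℝ) :=
      eventually_mem_nhdsWithin
    filter_upwards [h1, h2] with t ht htA
    refine hM t htA ?_
    have : |t - x| < 1 := by simpa [Real.dist_eq] using ht
    calc |t| = |x + (t - x)| := by ring_nf
    _ ≤ |x| + |t - x| := abs_add_le _ _
    _ ≤ |x| + 1 := by linarith
  have hba : ∀ x : ℝ, IsBoundedUnder (· ≤ ·) (𝓝[(A : Set ℝ)] x) S := by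
    intro x; obtain ⟨M, hM⟩ := hbd x
    exact ⟨M, hM.mono fun t ht => (abs_le.mp ht).2⟩
  have hbb : ∀ x : ℝ, IsBoundedUnder (· ≥ ·) (𝓝[(A : Set ℝ)] x) S := by
    intro x; obtain ⟨M, hM⟩ := hbd x
    exact ⟨-M, hM.mono fun t ht => (abs_le.mp ht).1⟩
  have hcoa : ∀ x : ℝ, IsCoboundedUnder (· ≤ ·) (𝓝[(A : Set ℝ)] x) S := fun x =>
    haveI := hne x; (hbb x).isCoboundedUnder_flip
  have hcob : ∀ x : ℝ, IsCoboundedUnder (· ≥ ·) (𝓝[(A : Set ℝ)] x) S := fun x =>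
    haveI := hne x; (hba x).isCoboundedUnder_flip
  -- S⁻ ≤ S⁺
  have hle : ∀ x : ℝ, SMinus (A : Set ℝ) S x ≤ SPlus (A : Set ℝ) S x := by
    intro x
    haveI := hne x
    exact liminf_le_limsup (hba x) (hbb x)
  -- pure a ≤ 𝓝[A] a when a ∈ A
  have hpure : ∀ a ∈ A, pure a ≤ 𝓝[(A : Set ℝ)] a := by
    intro a ha
    refine le_inf (pure_le_nhds a) ?_
    simpa [Filter.le_principal_iff] using ha
  -- S⁻ ≤ S ≤ S⁺ on A
  have hsandwich : ∀ a ∈ A, SMinus (A : Set ℝ) S a ≤ S a ∧ S a ≤ SPlus (A : Set ℝ) S a := by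
    intro a ha
    have hfreq : ∃ᶠ t in 𝓝[(A : Set ℝ)] a, S t = S a :=
      Filter.Frequently.filter_mono ((Filter.eventually_pure.mpr rfl).frequently) (hpure a ha)
    constructor
    · exact liminf_le_of_frequently_le (hfreq.mono fun t ht => ht.le) (hbb a)
    · exact le_limsup_of_frequently_le (hfreq.mono fun t ht => ht.ge) (hba a)
  -- Local boundedness
  have hlbP : LocallyBounded' (SPlus (A : Set ℝ) S) ∧ LocallyBounded' (SMinus (A : Set ℝ) S) := by
    have key : ∀ r : ℝ, 0 < r → ∃ M : ℝ, ∀ x : ℝ, |x| ≤ r →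
        |SPlus (A : Set ℝ) S x| ≤ M ∧ |SMinus (A : Set ℝ) S x| ≤ M := by
      intro r hr
      obtain ⟨M, hM⟩ := hlb (r + 1) (by positivity)
      refine ⟨M, fun x hx => ?_⟩
      haveI := hne x
      have hev : ∀ᶠ t in 𝓝[(A : Set ℝ)] x, |S t| ≤ M := by
        have h1 : ∀ᶠ t in 𝓝[(A : Set ℝ)] x, t ∈ Metric.ball x 1 :=
          eventually_nhdsWithin_of_eventually_nhds (Metric.ball_mem_nhds x one_pos)
        filter_upwards [h1, eventually_mem_nhdsWithin] with t ht htA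
        refine hM t htA ?_
        have : |t - x| < 1 := by simpa [Real.dist_eq] using ht
        calc |t| = |x + (t - x)| := by ring_nf
        _ ≤ |x| + |t - x| := abs_add_le _ _
        _ ≤ r + 1 := by linarith
      have h1 : SPlus (A : Set ℝ) S x ≤ M :=
        limsup_le_of_le (hcoa x) (hev.mono fun t ht => (abs_le.mp ht).2)
      have h2 : -M ≤ SMinus (A : Set ℝ) S x :=
        le_liminf_of_le (hcob x) (hev.mono fun t ht => (abs_le.mp ht).1)
      have h3 := hle x
      constructor <;> rw [abs_le] <;> constructor <;> linarith
    exact ⟨fun r hr => (key r hr).imp fun M hM x hx => (hM x hx).1,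
           fun r hr => (key r hr).imp fun M hM x hx => (hM x hx).2⟩
  -- Subadditivity of S⁺
  have hsubP : Subadditive' (SPlus (A : Set ℝ) S) := by
    intro x y
    haveI := hne (x + y)
    refine le_of_forall_pos_le_add fun ε hε => ?_
    have hx' : SPlus (A : Set ℝ) S x < SPlus (A : Set ℝ) S x + ε / 2 := by linarith
    have hy' : SPlus (A : Set ℝ) S y < SPlus (A : Set ℝ) S y + ε / 2 := by linarith
    have hevx := eventually_lt_of_limsup_lt hx' (hba x)
    have hevy := eventually_lt_of_limsup_lt hy' (hba y)
    rw [eventually_nhdsWithin_iff] at hevx hevy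
    obtain ⟨δx, hδx, hUx⟩ := Metric.eventually_nhds_iff_ball.mp hevx
    obtain ⟨δy, hδy, hUy⟩ := Metric.eventually_nhds_iff_ball.mp hevy
    -- choose a ∈ A close to x
    set δ := min δx (δy / 2) with hδdef
    have hδpos : 0 < δ := lt_min hδx (by linarith)
    obtain ⟨a, haA, hax⟩ : ∃ a ∈ (A : Set ℝ), a ∈ Metric.ball x δ :=
      hdense.exists_mem_open Metric.isOpen_ball ⟨x, Metric.mem_ball_self hδpos⟩
    have hSa : S a < SPlus (A : Set ℝ) S x + ε / 2 :=
      hUx a (Metric.mem_ball.mpr (lt_of_lt_of_le (Metric.mem_ball.mp hax) (min_le_left _ _))) haA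
    -- eventually bound at x + y
    have hev : ∀ᶠ t in 𝓝[(A : Set ℝ)] (x + y),
        S t ≤ SPlus (A : Set ℝ) S x + SPlus (A : Set ℝ) S y + ε := by
      have h1 : ∀ᶠ t in 𝓝[(A : Set ℝ)] (x + y), t ∈ Metric.ball (x + y) (δy / 2) :=
        eventually_nhdsWithin_of_eventually_nhds
          (Metric.ball_mem_nhds _ (by linarith))
      filter_upwards [h1, eventually_mem_nhdsWithin] with t ht htA
      have htaA : t - a ∈ A := A.sub_mem htA haA
      have hdist : dist (t - a) y < δy := by
        have h2 : dist t (x + y) < δy / 2 := Metric.mem_ball.mp ht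
        have h3 : dist a x < δy / 2 := lt_of_lt_of_le (Metric.mem_ball.mp hax)
          (min_le_right _ _)
        rw [Real.dist_eq] at h2 h3 ⊢
        have : t - a - y = (t - (x + y)) - (a - x) := by ring
        rw [this]
        calc |t - (x + y) - (a - x)| ≤ |t - (x + y)| + |a - x| := abs_sub _ _
        _ < δy / 2 + δy / 2 := by exact add_lt_add h2 h3
        _ = δy := by ring
      have hSta : S (t - a) < SPlus (A : Set ℝ) S y + ε / 2 :=
        hUy (t - a) (Metric.mem_ball.mpr hdist) htaA
      have : S t ≤ S a + S (t - a) := by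
        have := hsub a haA (t - a) htaA
        simpa using this
      linarith
    exact limsup_le_of_le (hcoa (x + y)) hev
  -- Subadditivity of S⁻
  have hsubM : Subadditive' (SMinus (A : Set ℝ) S) := by
    intro x y
    haveI := hne x; haveI := hne y; haveI := hne (x + y)
    refine le_of_forall_pos_le_add fun ε hε => ?_
    have hfreq : ∃ᶠ t in 𝓝[(A : Set ℝ)] (x + y),
        S t ≤ SMinus (A : Set ℝ) S x + SMinus (A : Set ℝ) S y + ε := by
      rw [Filter.Frequently]
      intro hevcon
      rw [eventually_nhdsWithin_iff] at hevcon
      obtain ⟨δ, hδ, hU⟩ := Metric.eventually_nhds_iff_ball.mp hevcon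
      -- find a near x with small S, b near y with small S
      have hltx : SMinus (A : Set ℝ) S x < SMinus (A : Set ℝ) S x + ε / 2 := by linarith
      have hlty : SMinus (A : Set ℝ) S y < SMinus (A : Set ℝ) S y + ε / 2 := by linarith
      have hfx : ∃ᶠ t in 𝓝[(A : Set ℝ)] x, S t < SMinus (A : Set ℝ) S x + ε / 2 :=
        frequently_lt_of_liminf_lt (hcob x) hltx
      have hfy : ∃ᶠ t in 𝓝[(A : Set ℝ)] y, S t < SMinus (A : Set ℝ) S y + ε / 2 :=
        frequently_lt_of_liminf_lt (hcob y) hlty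
      have hex : ∀ᶠ t in 𝓝[(A : Set ℝ)] x, t ∈ Metric.ball x (δ / 2) ∧ t ∈ (A : Set ℝ) :=
        (eventually_nhdsWithin_of_eventually_nhds
          (Metric.ball_mem_nhds _ (by linarith))).and eventually_mem_nhdsWithin
      have hey : ∀ᶠ t in 𝓝[(A : Set ℝ)] y, t ∈ Metric.ball y (δ / 2) ∧ t ∈ (A : Set ℝ) :=
        (eventually_nhdsWithin_of_eventually_nhds
          (Metric.ball_mem_nhds _ (by linarith))).and eventually_mem_nhdsWithin
      obtain ⟨a, hSa, haball, haA⟩ := (hfx.and_eventually hex).exists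
      obtain ⟨b, hSb, hbball, hbA⟩ := (hfy.and_eventually hey).exists
      have habA : a + b ∈ A := A.add_mem haA hbA
      have hdist : a + b ∈ Metric.ball (x + y) δ := by
        rw [Metric.mem_ball, Real.dist_eq] at *
        have : a + b - (x + y) = (a - x) + (b - y) := by ring
        rw [this]
        calc |(a - x) + (b - y)| ≤ |a - x| + |b - y| := abs_add_le _ _
        _ < δ / 2 + δ / 2 := add_lt_add haball hbball
        _ = δ := by ring
      have hSab : S (a + b) ≤ S a + S b := hsub a haA b hbA
      exact hU (a + b) hdist habA (by linarith)
    exact liminf_le_of_frequently_le hfreq (hbb (x + y))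
  -- Homogeneity for positive k
  have hhomPos : ∀ x : ℝ, ∀ k : ℕ, 0 < k →
      SPlus (A : Set ℝ) S ((k : ℝ) * x) = (k : ℝ) * SPlus (A : Set ℝ) S x ∧
      SMinus (A : Set ℝ) S ((k : ℝ) * x) = (k : ℝ) * SMinus (A : Set ℝ) S x := by
    intro x k hk
    haveI := hne x
    have hk0 : (k : ℝ) ≠ 0 := Nat.cast_ne_zero.mpr hk.ne'
    have hkpos : (0 : ℝ) < k := Nat.cast_pos.mpr hk
    -- image of A under multiplication by k is A
    have himg : (fun t : ℝ => (k : ℝ) * t) '' (A : Set ℝ) = (A : Set ℝ) := by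
      apply Set.Subset.antisymm
      · rintro _ ⟨t, htA, rfl⟩
        have := A.nsmul_mem htA k
        simpa [nsmul_eq_mul] using this
      · intro a ha
        exact ⟨a / k, hdiv a ha k hk, by field_simp⟩
    -- the filter maps correctly
    have hmapf : Filter.map (fun t : ℝ => (k : ℝ) * t) (𝓝[(A : Set ℝ)] x)
        = 𝓝[(A : Set ℝ)] ((k : ℝ) * x) := by
      have := (Homeomorph.mulLeft₀ (k : ℝ) hk0).isEmbedding.map_nhdsWithin_eq
        (A : Set ℝ) x
      simpa [himg, Homeomorph.coe_mulLeft₀] using this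
    have hevhom : ∀ᶠ t in 𝓝[(A : Set ℝ)] x, S ((k : ℝ) * t) = (k : ℝ) * S t := by
      filter_upwards [eventually_mem_nhdsWithin] with t htA
      exact hhom t htA k
    have hmono : Monotone (fun r : ℝ => (k : ℝ) * r) := fun u v huv =>
      mul_le_mul_of_nonneg_left huv hkpos.le
    constructor
    · rw [SPlus, ← hmapf, limsup_map']
      have h1 : Filter.limsup (S ∘ fun t : ℝ => (k : ℝ) * t) (𝓝[(A : Set ℝ)] x)
          = Filter.limsup (fun t => (k : ℝ) * S t) (𝓝[(A : Set ℝ)] x) :=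
        limsup_congr (hevhom.mono fun t ht => ht)
      rw [h1]
      exact (hmono.map_limsup_of_continuousAt S
        ((continuous_const.mul continuous_id).continuousAt) (hba x) (hcoa x)).symm
    · rw [SMinus, ← hmapf, liminf_map']
      have h1 : Filter.liminf (S ∘ fun t : ℝ => (k : ℝ) * t) (𝓝[(A : Set ℝ)] x)
          = Filter.liminf (fun t => (k : ℝ) * S t) (𝓝[(A : Set ℝ)] x) :=
        liminf_congr (hevhom.mono fun t ht => ht)
      rw [h1]
      exact (hmono.map_liminf_of_continuousAt S
        ((continuous_const.mul continuous_id).continuousAt) (hcob x) (hbb x)).symm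
  -- SPlus 0 = 0 and SMinus 0 = 0
  have hP0 : SPlus (A : Set ℝ) S 0 = 0 := by
    have := (hhomPos 0 2 (by norm_num)).1
    push_cast at this
    rw [mul_zero] at this
    linarith
  have hM0 : SMinus (A : Set ℝ) S 0 = 0 := by
    have := (hhomPos 0 2 (by norm_num)).2
    push_cast at this
    rw [mul_zero] at this
    linarith
  -- full homogeneity
  have hhomFull : ∀ x : ℝ, ∀ k : ℕ,
      SPlus (A : Set ℝ) S ((k : ℝ) * x) = (k : ℝ) * SPlus (A : Set ℝ) S x ∧
      SMinus (A : Set ℝ) S ((k : ℝ) * x) = (k : ℝ) * SMinus (A : Set ℝ) S x := by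
    intro x k
    rcases Nat.eq_zero_or_pos k with rfl | hk
    · simp [hP0, hM0]
    · exact hhomPos x k hk
  exact ⟨hlbP.1, hlbP.2, hsubP, hsubM, hhomFull, hle, hsandwich⟩
end

section
/- Let 𝔸 be a dense, divisible additive subgroup of ℝ and let S : 𝔸 → ℝ be locally bounded (bounded on every bounded subset of 𝔸) and sublinear on 𝔸 (S(a+b) ≤ S(a)+S(b) and S(na) = nS(a) for all a, b ∈ 𝔸 and n ∈ ℕ). With S⁺(x) := lim_{δ→0} sup{S(t) : t ∈ (x−δ, x+δ) ∩ 𝔸} and S⁻(x) := lim_{δ→0} inf{S(t) : t ∈ (x−δ, x+δ) ∩ 𝔸} we have: (i) S⁺ = S⁻ on [0,∞) and S⁺ = S⁻ on (−∞,0]; (ii) there exist c⁺, c⁻ ∈ ℝ with S⁺(x) = c⁺·x for all x ≥ 0 and S⁺(x) = c⁻·x for all x ≤ 0 (in particular S(a) = c⁺·a for a ∈ 𝔸, a ≥ 0, and S(a) = c⁻·a for a ∈ 𝔸, a ≤ 0); (iii) S⁺(a) = S⁻(a) = S(a) for all a ∈ 𝔸. -/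
open Filter Topology Set

lemma key_lin (A : AddSubgroup ℝ)
    (hdiv : ∀ a ∈ A, ∀ k : ℕ, 0 < k → a / (k : ℝ) ∈ A)
    (S : ℝ → ℝ)
    (hlb : ∀ r : ℝ, 0 < r → ∃ M : ℝ, ∀ a ∈ A, |a| ≤ r → |S a| ≤ M)
    (hsub : ∀ a ∈ A, ∀ b ∈ A, S (a + b) ≤ S a + S b)
    (hhom : ∀ a ∈ A, ∀ n : ℕ, S ((n : ℝ) * a) = (n : ℝ) * S a)
    (a₀ : ℝ) (ha₀ : a₀ ∈ A) (ha₀pos : 0 < a₀) :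
    ∃ c : ℝ, ∀ a ∈ A, 0 ≤ a → S a = c * a := by
  have hS0 : S 0 = 0 := by simpa using hhom 0 A.zero_mem 0
  -- rational homogeneity
  have hq : ∀ a ∈ A, ∀ q : ℚ, 0 ≤ q →
      ((q : ℝ) * a ∈ A ∧ S ((q : ℝ) * a) = (q : ℝ) * S a) := by
    intro a ha q hq0
    set n : ℕ := q.num.toNat with hn
    set k : ℕ := q.den with hk
    have hkpos : 0 < k := q.pos
    have hcast : (q : ℝ) = (n : ℝ) / (k : ℝ) := by
      rw [Rat.cast_def]
      congr 1
      rw [hn]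
      norm_cast
      exact (Int.toNat_of_nonneg (Rat.num_nonneg.mpr hq0)).symm
    have hak : a / (k : ℝ) ∈ A := hdiv a ha k hkpos
    have hkne : (k : ℝ) ≠ 0 := by positivity
    have heq : (q : ℝ) * a = (n : ℝ) * (a / (k : ℝ)) := by rw [hcast]; ring
    have hmem : (q : ℝ) * a ∈ A := by
      rw [heq, ← nsmul_eq_mul]
      exact AddSubgroup.nsmul_mem A hak n
    refine ⟨hmem, ?_⟩
    have hSak : S a = (k : ℝ) * S (a / (k : ℝ)) := by
      have : (k : ℝ) * (a / (k : ℝ)) = a := mul_div_cancel₀ a hkne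
      rw [← hhom (a / (k : ℝ)) hak k, this]
    rw [heq, hhom (a / (k : ℝ)) hak n, hcast, hSak]
    field_simp
  obtain ⟨M, hM⟩ := hlb 1 one_pos
  have hM0 : 0 ≤ M := le_trans (abs_nonneg _) (hM 0 A.zero_mem (by simp))
  have hsmall : ∀ n : ℕ, 0 < n → ∀ t ∈ A, |t| ≤ 1 / (n : ℝ) → |S t| ≤ M / (n : ℝ) := by
    intro n hn t ht hts
    have hnpos : (0 : ℝ) < (n : ℝ) := by exact_mod_cast hn
    have hmem : (n : ℝ) * t ∈ A := by
      rw [← nsmul_eq_mul]; exact AddSubgroup.nsmul_mem A ht n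
    have habs : |(n : ℝ) * t| ≤ 1 := by
      rw [abs_mul, abs_of_pos hnpos]
      calc (n : ℝ) * |t| ≤ (n : ℝ) * (1 / (n : ℝ)) := by
            exact mul_le_mul_of_nonneg_left hts (le_of_lt hnpos)
        _ = 1 := by field_simp
    have := hM ((n : ℝ) * t) hmem habs
    rw [hhom t ht n, abs_mul, abs_of_pos hnpos] at this
    rw [le_div_iff₀ hnpos]
    linarith
  have hle : ∀ a ∈ A, 0 < a → ∀ b ∈ A, 0 < b → S b * a ≤ S a * b := by
    intro a ha hapos b hb hbpos
    refine le_of_forall_pos_le_add ?_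
    intro δ hδ
    obtain ⟨n, hn⟩ := exists_nat_gt (2 * M * a / δ)
    have hnpos : 0 < n := by
      have : (0:ℝ) ≤ 2 * M * a / δ := by positivity
      exact_mod_cast Nat.cast_pos.mp (lt_of_le_of_lt this hn)
    have hnR : (0:ℝ) < (n : ℝ) := by exact_mod_cast hnpos
    have hMan : M * a / (n : ℝ) ≤ δ / 2 := by
      rw [div_le_div_iff₀ hnR two_pos]
      rw [div_lt_iff₀ hδ] at hn
      nlinarith
    set ε : ℝ := min (1 / ((n : ℝ) * a)) (δ / (2 * a * (|S a| + 1))) with hε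
    have hεpos : 0 < ε := by
      apply lt_min
      · positivity
      · positivity
    obtain ⟨q, hq1, hq2⟩ := exists_rat_btwn (show b / a < b / a + ε by linarith)
    have hqpos : (0:ℝ) < (q : ℝ) := lt_trans (by positivity) hq1
    have hq0 : (0:ℚ) ≤ q := by exact_mod_cast le_of_lt hqpos
    obtain ⟨hqmem, hqS⟩ := hq a ha q hq0
    have hba : b < (q : ℝ) * a := by
      rw [div_lt_iff₀ hapos] at hq1; linarith
    have hub : (q : ℝ) * a < b + ε * a := by
      have h := mul_lt_mul_of_pos_right hq2 hapos
      have h2 : (b / a + ε) * a = b + ε * a := by field_simp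
      linarith
    set t : ℝ := b - (q : ℝ) * a with hta
    have htmem : t ∈ A := A.sub_mem hb hqmem
    have hεa : ε * a ≤ 1 / (n : ℝ) := by
      have h1 : ε ≤ 1 / ((n : ℝ) * a) := min_le_left _ _
      have h2 : (1 / ((n : ℝ) * a)) * a = 1 / (n : ℝ) := by
        field_simp [mul_comm]
      calc ε * a ≤ (1 / ((n : ℝ) * a)) * a := mul_le_mul_of_nonneg_right h1 (le_of_lt hapos)
        _ = 1 / (n : ℝ) := h2
    have htabs : |t| ≤ 1 / (n : ℝ) := by
      rw [abs_le]
      constructor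
      · simp only [hta]; linarith
      · simp only [hta]; linarith
    have hst := hsmall n hnpos t htmem htabs
    have hSb : S b ≤ (q : ℝ) * S a + M / (n : ℝ) := by
      have h1 : S ((q : ℝ) * a + t) ≤ S ((q : ℝ) * a) + S t := hsub _ hqmem _ htmem
      have h2 : (q : ℝ) * a + t = b := by simp [hta]
      rw [h2, hqS] at h1
      have h3 : S t ≤ M / (n : ℝ) := le_trans (le_abs_self _) hst
      linarith
    -- main arithmetic
    have hqSa : (q : ℝ) * a * S a ≤ b * S a + ε * a * |S a| := by
      rcases le_or_gt 0 (S a) with h | h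
      · rw [abs_of_nonneg h]
        nlinarith [mul_le_mul_of_nonneg_right (le_of_lt hub) h]
      · have h3 : (q : ℝ) * a * S a ≤ b * S a :=
          mul_le_mul_of_nonpos_right (le_of_lt hba) (le_of_lt h)
        nlinarith [mul_nonneg (mul_nonneg hεpos.le hapos.le) (abs_nonneg (S a))]
    have hεsmall : ε * a * |S a| ≤ δ / 2 := by
      have h1 : ε ≤ δ / (2 * a * (|S a| + 1)) := min_le_right _ _
      have h2 : 0 < 2 * a * (|S a| + 1) := by positivity
      rw [le_div_iff₀ h2] at h1
      nlinarith [abs_nonneg (S a), mul_nonneg hεpos.le hapos.le]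
    have : S b * a ≤ (q : ℝ) * a * S a + M * a / (n : ℝ) := by
      have := mul_le_mul_of_nonneg_right hSb (le_of_lt hapos)
      calc S b * a ≤ ((q : ℝ) * S a + M / (n : ℝ)) * a := this
        _ = (q : ℝ) * a * S a + M * a / (n : ℝ) := by ring
    linarith [this, hqSa, hεsmall, hMan, mul_comm (S a) b]
  refine ⟨S a₀ / a₀, ?_⟩
  intro a ha ha0
  rcases eq_or_lt_of_le ha0 with h | h
  · simp [← h, hS0]
  · have h1 := hle a₀ ha₀ ha₀pos a ha h
    have h2 := hle a ha h a₀ ha₀ ha₀pos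
    have : S a * a₀ = S a₀ * a := le_antisymm h1 h2
    field_simp
    linarith

/-- Parts (i)-(iii) of the paper's Theorem 3: for `𝔸` a dense divisible additive
subgroup of `ℝ` and `S` locally bounded and sublinear on `𝔸`:
(i) `S⁺ = S⁻` on `[0,∞)` and on `(-∞,0]`;
(ii) `S⁺` is linear on each half-line (hence so is `S` on `𝔸 ∩ ℝ₊` and `𝔸 ∩ ℝ₋`);
(iii) `S⁺ = S⁻ = S` on `𝔸`. -/
theorem berz_theorem3_parts_i_iii (A : AddSubgroup ℝ) (hdense : Dense (A : Set ℝ))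
    (hdiv : ∀ a ∈ A, ∀ k : ℕ, 0 < k → a / (k : ℝ) ∈ A)
    (S : ℝ → ℝ)
    (hlb : ∀ r : ℝ, 0 < r → ∃ M : ℝ, ∀ a ∈ A, |a| ≤ r → |S a| ≤ M)
    (hsub : ∀ a ∈ A, ∀ b ∈ A, S (a + b) ≤ S a + S b)
    (hhom : ∀ a ∈ A, ∀ n : ℕ, S ((n : ℝ) * a) = (n : ℝ) * S a) :
    (∀ x : ℝ, 0 ≤ x → SPlus (A : Set ℝ) S x = SMinus (A : Set ℝ) S x) ∧
    (∀ x : ℝ, x ≤ 0 → SPlus (A : Set ℝ) S x = SMinus (A : Set ℝ) S x) ∧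
    (∃ cp cm : ℝ,
      (∀ x : ℝ, 0 ≤ x → SPlus (A : Set ℝ) S x = cp * x) ∧
      (∀ x : ℝ, x ≤ 0 → SPlus (A : Set ℝ) S x = cm * x) ∧
      (∀ a ∈ A, 0 ≤ a → S a = cp * a) ∧
      (∀ a ∈ A, a ≤ 0 → S a = cm * a)) ∧
    (∀ a ∈ A, SPlus (A : Set ℝ) S a = S a ∧ SMinus (A : Set ℝ) S a = S a) := by
  -- a positive element of A
  obtain ⟨a₀, ha₀, ha₀pos, _⟩ : ∃ a ∈ A, 0 < a ∧ a < 1 := by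
    obtain ⟨a, haA, ha⟩ := hdense.exists_between (show (0:ℝ) < 1 by norm_num)
    exact ⟨a, haA, ha.1, ha.2⟩
  -- linearity of S on the nonnegative part of A
  obtain ⟨cp, hcp⟩ := key_lin A hdiv S hlb hsub hhom a₀ ha₀ ha₀pos
  -- linearity on the nonpositive part, via x ↦ S (-x)
  obtain ⟨c, hc⟩ : ∃ c : ℝ, ∀ a ∈ A, 0 ≤ a → S (-a) = c * a := by
    refine key_lin A hdiv (fun x => S (-x)) ?_ ?_ ?_ a₀ ha₀ ha₀pos
    · intro r hr
      obtain ⟨M, hM⟩ := hlb r hr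
      exact ⟨M, fun a ha har => hM (-a) (A.neg_mem ha) (by rwa [abs_neg])⟩
    · intro a ha b hb
      show S (-(a + b)) ≤ S (-a) + S (-b)
      rw [neg_add]
      exact hsub (-a) (A.neg_mem ha) (-b) (A.neg_mem hb)
    · intro a ha n
      show S (-((n:ℝ) * a)) = (n:ℝ) * S (-a)
      rw [show -((n:ℝ) * a) = (n:ℝ) * (-a) by ring]
      exact hhom (-a) (A.neg_mem ha) n
  set cm : ℝ := -c with hcm
  have hcm' : ∀ a ∈ A, a ≤ 0 → S a = cm * a := by
    intro a ha ha0
    have := hc (-a) (A.neg_mem ha) (by linarith)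
    rw [neg_neg] at this
    rw [this, hcm]; ring
  -- the continuous linear-by-parts function g agreeing with S on A
  set g : ℝ → ℝ := fun x => cp * max x 0 + cm * min x 0 with hgdef
  have hg : Continuous g := by
    apply Continuous.add
    · exact continuous_const.mul (continuous_id.max continuous_const)
    · exact continuous_const.mul (continuous_id.min continuous_const)
  have hgpos : ∀ x : ℝ, 0 ≤ x → g x = cp * x := by
    intro x hx
    simp [hgdef, max_eq_left hx, min_eq_right hx]
  have hgneg : ∀ x : ℝ, x ≤ 0 → g x = cm * x := by
    intro x hx
    simp [hgdef, max_eq_right hx, min_eq_left hx]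
  have hSg : ∀ a ∈ A, S a = g a := by
    intro a ha
    rcases le_total 0 a with h | h
    · rw [hgpos a h]; exact hcp a ha h
    · rw [hgneg a h]; exact hcm' a ha h
  have hne : ∀ x : ℝ, (𝓝[(A : Set ℝ)] x).NeBot := fun x =>
    mem_closure_iff_nhdsWithin_neBot.mp (hdense x)
  have htend : ∀ x : ℝ, Tendsto S (𝓝[(A : Set ℝ)] x) (𝓝 (g x)) := by
    intro x
    have h1 : Tendsto g (𝓝[(A : Set ℝ)] x) (𝓝 (g x)) :=
      (hg.tendsto x).mono_left nhdsWithin_le_nhds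
    refine Tendsto.congr' ?_ h1
    filter_upwards [eventually_mem_nhdsWithin] with t ht
    exact (hSg t ht).symm
  have hplus : ∀ x : ℝ, SPlus (A : Set ℝ) S x = g x := by
    intro x
    haveI := hne x
    exact (htend x).limsup_eq
  have hminus : ∀ x : ℝ, SMinus (A : Set ℝ) S x = g x := by
    intro x
    haveI := hne x
    exact (htend x).liminf_eq
  refine ⟨fun x _ => by rw [hplus, hminus],
    fun x _ => by rw [hplus, hminus],
    ⟨cp, cm, fun x hx => by rw [hplus, hgpos x hx],
      fun x hx => by rw [hplus, hgneg x hx], hcp, hcm'⟩,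
    fun a ha => ⟨by rw [hplus, ← hSg a ha], by rw [hminus, ← hSg a ha]⟩⟩
end

section
/- Let 𝔸 be a dense, divisible additive subgroup of ℝ and let S : 𝔸 → ℝ be additive (S(a+b) = S(a) + S(b) for all a, b ∈ 𝔸) and locally bounded (bounded on every bounded subset of 𝔸). Then S is linear: there exists c ∈ ℝ such that S(a) = c·a for all a ∈ 𝔸; moreover the functions S⁺(x) := lim_{δ→0} sup{S(t) : t ∈ (x−δ, x+δ) ∩ 𝔸} and S⁻(x) := lim_{δ→0} inf{S(t) : t ∈ (x−δ, x+δ) ∩ 𝔸} coincide and equal the linear function x ↦ c·x on all of ℝ. -/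
open Filter Topology Set

/-- Part (iv) of the paper's Theorem 3: for `𝔸` a dense divisible additive subgroup
of `ℝ` and `S` additive on `𝔸` and locally bounded, `S` is linear on `𝔸`, and
`S⁺ = S⁻` is the corresponding linear function on all of `ℝ`. -/
theorem berz_theorem3_part_iv (A : AddSubgroup ℝ) (hdense : Dense (A : Set ℝ))
    (hdiv : ∀ a ∈ A, ∀ k : ℕ, 0 < k → a / (k : ℝ) ∈ A)
    (S : ℝ → ℝ)
    (hlb : ∀ r : ℝ, 0 < r → ∃ M : ℝ, ∀ a ∈ A, |a| ≤ r → |S a| ≤ M)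
    (hadd : ∀ a ∈ A, ∀ b ∈ A, S (a + b) = S a + S b) :
    ∃ c : ℝ, (∀ a ∈ A, S a = c * a) ∧
      (∀ x : ℝ, SPlus (A : Set ℝ) S x = c * x ∧ SMinus (A : Set ℝ) S x = c * x) := by
  -- basic consequences of additivity
  have hS0 : S 0 = 0 := by
    have := hadd 0 A.zero_mem 0 A.zero_mem
    simp at this; linarith
  have hnsmul : ∀ a ∈ A, ∀ n : ℕ, S ((n : ℝ) * a) = n * S a := by
    intro a ha n
    induction n with
    | zero => simp [hS0]
    | succ k ih =>
      have hka : (k : ℝ) * a ∈ A := by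
        simpa [nsmul_eq_mul] using AddSubgroup.nsmul_mem A ha k
      push_cast
      rw [add_mul, one_mul, hadd _ hka a ha, ih]
      ring
  have hneg : ∀ a ∈ A, S (-a) = - S a := by
    intro a ha
    have := hadd a ha (-a) (A.neg_mem ha)
    simp [hS0] at this; linarith
  have hzsmul : ∀ a ∈ A, ∀ m : ℤ, S ((m : ℝ) * a) = m * S a := by
    intro a ha m
    rcases le_or_gt 0 m with h | h
    · lift m to ℕ using h
      exact_mod_cast hnsmul a ha m
    · have hn : 0 ≤ -m := by omega
      have hma : ((-m : ℤ) : ℝ) * a ∈ A := by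
        lift (-m) to ℕ using hn with n hn'
        push_cast
        simpa [nsmul_eq_mul] using AddSubgroup.nsmul_mem A ha n
      have h1 : S (((-m : ℤ) : ℝ) * a) = (-m : ℤ) * S a := by
        lift (-m) to ℕ using hn with n hn'
        exact_mod_cast hnsmul a ha n
      have h2 : ((m : ℤ) : ℝ) * a = -(((-m : ℤ) : ℝ) * a) := by push_cast; ring
      rw [h2, hneg _ hma, h1]; push_cast; ring
  -- choose a nonzero element of A in (0,1)
  obtain ⟨a0, ha0A, ha0⟩ := hdense.exists_between (zero_lt_one (α := ℝ))
  have ha0pos : 0 < a0 := ha0.1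
  have ha0lt : a0 < 1 := ha0.2
  -- local bound at scale 1
  obtain ⟨M, hM⟩ := hlb 1 one_pos
  -- small elements have small image
  have hsmall : ∀ d ∈ A, ∀ n : ℕ, 0 < n → |d| ≤ 1 / n → |S d| ≤ M / n := by
    intro d hd n hn hdle
    have hnd : (n : ℝ) * d ∈ A := by
      simpa [nsmul_eq_mul] using AddSubgroup.nsmul_mem A hd n
    have hnpos : (0 : ℝ) < n := by exact_mod_cast hn
    have habs : |(n : ℝ) * d| ≤ 1 := by
      rw [abs_mul, abs_of_nonneg (le_of_lt hnpos)]
      calc (n : ℝ) * |d| ≤ n * (1 / n) := by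
            exact mul_le_mul_of_nonneg_left hdle (le_of_lt hnpos)
        _ = 1 := by field_simp
    have := hM _ hnd habs
    rw [hnsmul d hd n, abs_mul, abs_of_nonneg (le_of_lt hnpos)] at this
    rw [le_div_iff₀ hnpos]
    linarith [this]
  set c : ℝ := S a0 / a0 with hc
  have hlin : ∀ b ∈ A, S b = c * b := by
    intro b hb
    set K : ℝ := M + |S a0| / a0 with hK
    have hbound : ∀ n : ℕ, 0 < n → |S b - c * b| ≤ K / n := by
      intro n hn
      have hnpos : (0 : ℝ) < n := by exact_mod_cast hn
      set m : ℤ := ⌊(n : ℝ) * b / a0⌋ with hm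
      have ha0n : a0 / n ∈ A := hdiv a0 ha0A n hn
      have hma0n : (m : ℝ) * (a0 / n) ∈ A := by
        simpa [zsmul_eq_mul] using AddSubgroup.zsmul_mem A ha0n m
      set d : ℝ := b - (m : ℝ) * (a0 / n) with hd
      have hdA : d ∈ A := A.sub_mem hb hma0n
      -- bounds on d : 0 ≤ d ≤ a0/n ≤ 1/n
      have hfl1 : (m : ℝ) * a0 ≤ (n : ℝ) * b :=
        (le_div_iff₀ ha0pos).mp (Int.floor_le _)
      have hfl2 : (n : ℝ) * b < ((m : ℝ) + 1) * a0 :=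
        (div_lt_iff₀ ha0pos).mp (Int.lt_floor_add_one _)
      have hd0 : 0 ≤ d := by
        rw [hd]
        have h1 : (m : ℝ) * (a0 / n) ≤ b := by
          rw [mul_div_assoc', div_le_iff₀ hnpos]
          nlinarith
        linarith
      have hdle : d ≤ a0 / n := by
        have h1 : b ≤ ((m : ℝ) + 1) * a0 / n := by
          rw [le_div_iff₀ hnpos]; nlinarith
        have h2 : ((m : ℝ) + 1) * a0 / n = (m : ℝ) * (a0 / n) + a0 / n := by ring
        rw [hd]; linarith [h2 ▸ h1]
      have hd1n : |d| ≤ 1 / n := by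
        rw [abs_of_nonneg hd0]
        calc d ≤ a0 / n := hdle
          _ ≤ 1 / n := by gcongr <;> linarith
      have hSd : |S d| ≤ M / n := hsmall d hdA n hn hd1n
      -- express S b
      have hSa0n : S (a0 / n) = S a0 / n := by
        have h1 := hnsmul (a0 / n) ha0n n
        have h2 : (n : ℝ) * (a0 / n) = a0 := by field_simp
        rw [h2] at h1
        rw [eq_div_iff (ne_of_gt hnpos)]
        linarith
      have hb' : b = d + (m : ℝ) * (a0 / n) := by rw [hd]; ring
      have hSb : S b = S d + (m : ℝ) * (S a0 / n) := by
        rw [hb'] at *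
        rw [hadd d hdA _ hma0n, hzsmul (a0 / n) ha0n m, hSa0n]
      have hkey : S b - c * b = S d - c * d := by
        rw [hSb, hc, hd]
        field_simp
        ring
      have hcd : |c * d| ≤ (|S a0| / a0) / n := by
        rw [abs_mul, hc, abs_div, abs_of_pos ha0pos, abs_of_nonneg hd0]
        calc |S a0| / a0 * d ≤ |S a0| / a0 * (1 / n) := by
              apply mul_le_mul_of_nonneg_left (hdle.trans ?_) (by positivity)
              gcongr <;> linarith
          _ = (|S a0| / a0) / n := by ring
      calc |S b - c * b| = |S d - c * d| := by rw [hkey]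
        _ ≤ |S d| + |c * d| := abs_sub _ _
        _ ≤ M / n + (|S a0| / a0) / n := add_le_add hSd hcd
        _ = K / n := by rw [hK]; ring
    -- conclude S b = c * b
    have h0 : Tendsto (fun n : ℕ => K / n) atTop (𝓝 0) :=
      tendsto_const_div_atTop_nhds_zero_nat K
    have hle : |S b - c * b| ≤ 0 := by
      refine ge_of_tendsto h0 ?_
      filter_upwards [eventually_gt_atTop 0] with n hn using hbound n hn
    have : S b - c * b = 0 := abs_nonpos_iff.mp hle
    linarith
  refine ⟨c, hlin, ?_⟩
  intro x
  have hxc : x ∈ closure (A : Set ℝ) := hdense x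
  have hne : (𝓝[(A : Set ℝ)] x).NeBot := mem_closure_iff_nhdsWithin_neBot.mp hxc
  have htc : Tendsto (fun t : ℝ => c * t) (𝓝[(A : Set ℝ)] x) (𝓝 (c * x)) :=
    ((continuous_const.mul continuous_id).tendsto x).mono_left nhdsWithin_le_nhds
  have heq : ∀ᶠ t in 𝓝[(A : Set ℝ)] x, S t = c * t := by
    filter_upwards [self_mem_nhdsWithin] with t ht using hlin t ht
  have htS : Tendsto S (𝓝[(A : Set ℝ)] x) (𝓝 (c * x)) := htc.congr' (heq.mono fun t h => h.symm)
  exact ⟨htS.limsup_eq, htS.liminf_eq⟩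
end

section
/- Let Σ ⊆ [0,∞) be locally Steinhaus–Weil and accumulate at 0, and let S : ℝ → ℝ be subadditive with S(0) = 0. If there is c ∈ ℝ with S(σ) ≤ c·σ for all σ ∈ Σ, then S(x) ≤ c·x for all x > 0; consequently limsup_{x↓0} S(x) ≤ 0 and lim_{x↓0} S(x) = 0. If in addition there exists a strictly negative sequence z_n increasing to 0 with S(z_n) → 0, then S is continuous at 0 and hence continuous everywhere on ℝ. -/
open Filter Topology Set Pointwise

/-- `Σ ⊆ ℝ` is locally Steinhaus–Weil: for `x, y ∈ Σ` and all sufficiently small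
`δ > 0`, `x + y` lies in the interior of `Σ_x^δ + Σ_y^δ` and `x - y` lies in the
interior of `Σ_x^δ - Σ_y^δ`, where `Σ_z^δ := Σ ∩ (z - δ, z + δ)`. -/
def LocallySW (Sig : Set ℝ) : Prop :=
  ∀ x ∈ Sig, ∀ y ∈ Sig, ∃ δ₀ : ℝ, 0 < δ₀ ∧ ∀ δ : ℝ, 0 < δ → δ ≤ δ₀ →
    x + y ∈ interior ((Sig ∩ Set.Ioo (x - δ) (x + δ)) + (Sig ∩ Set.Ioo (y - δ) (y + δ))) ∧
    x - y ∈ interior ((Sig ∩ Set.Ioo (x - δ) (x + δ)) - (Sig ∩ Set.Ioo (y - δ) (y + δ)))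

/-- In `Σ` accumulating at `0` with `Σ ⊆ [0,∞)` we can find arbitrarily small
positive elements. -/
lemma berz_acc_pos {Sig : Set ℝ} (hSig : Sig ⊆ Set.Ici (0:ℝ))
    (hacc : AccPt (0:ℝ) (𝓟 Sig)) :
    ∀ η : ℝ, 0 < η → ∃ σ ∈ Sig, 0 < σ ∧ σ < η := by
  intro η hη
  obtain ⟨y, ⟨hy1, hy2⟩, hy3⟩ :=
    accPt_iff_nhds.1 hacc (Metric.ball 0 η) (Metric.ball_mem_nhds _ hη)
  have hy0 : 0 ≤ y := hSig hy2
  have : |y| < η := by simpa [Real.dist_eq] using hy1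
  exact ⟨y, hy2, lt_of_le_of_ne hy0 (Ne.symm hy3), by rwa [abs_of_nonneg hy0] at this⟩

/-- From the SW property at `σ ∈ Σ` one gets an interval around `2σ` on which
`S` is bounded by `c·t`. -/
lemma berz_intervalA {Sig : Set ℝ} (hSW : LocallySW Sig) {σ : ℝ} (hσ : σ ∈ Sig)
    {S : ℝ → ℝ} (hsub : Subadditive' S) {c : ℝ} (hc : ∀ s ∈ Sig, S s ≤ c * s) :
    ∃ ε : ℝ, 0 < ε ∧ ∀ t : ℝ, |t - (σ + σ)| < ε → S t ≤ c * t := by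
  obtain ⟨δ₀, hδ₀, h⟩ := hSW σ hσ σ hσ
  obtain ⟨hadd, -⟩ := h δ₀ hδ₀ le_rfl
  set A := Sig ∩ Set.Ioo (σ - δ₀) (σ + δ₀) with hA
  obtain ⟨ε, hε, hball⟩ := Metric.isOpen_iff.1 (isOpen_interior (s := A + A)) _ hadd
  refine ⟨ε, hε, fun t ht => ?_⟩
  have htm : t ∈ A + A := interior_subset (hball (by simpa [Real.dist_eq] using ht))
  obtain ⟨a, ha, b, hb, hab⟩ := htm
  have hab : a + b = t := hab
  calc S t = S (a + b) := by rw [hab]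
    _ ≤ S a + S b := hsub a b
    _ ≤ c * a + c * b := add_le_add (hc a ha.1) (hc b hb.1)
    _ = c * t := by rw [← hab]; ring

/-- First assertion of Theorem 0⁺: `S x ≤ c·x` for all `x > 0`. -/
lemma berz_part1 {Sig : Set ℝ} (hSig : Sig ⊆ Set.Ici (0:ℝ)) (hSW : LocallySW Sig)
    (hacc : AccPt (0:ℝ) (𝓟 Sig)) {S : ℝ → ℝ} (hsub : Subadditive' S)
    {c : ℝ} (hc : ∀ s ∈ Sig, S s ≤ c * s) : ∀ x : ℝ, 0 < x → S x ≤ c * x := by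
  intro x hx
  obtain ⟨σ, hσS, hσ0, hσx⟩ := berz_acc_pos hSig hacc (x/4) (by linarith)
  obtain ⟨ε, hε, hball⟩ := berz_intervalA hSW hσS hsub hc
  obtain ⟨σ', hσ'S, hσ'0, hσ'ε⟩ := berz_acc_pos hSig hacc ε hε
  have key : ∀ n : ℕ, ∀ t : ℝ, |t - (σ + σ)| < ε → S (t + n * σ') ≤ c * (t + n * σ') := by
    intro n
    induction n with
    | zero => intro t ht; simpa using hball t ht
    | succ k ih =>
      intro t ht
      have h1 : S (t + k * σ' + σ') ≤ S (t + k * σ') + S σ' := hsub _ _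
      have h2 : S σ' ≤ c * σ' := hc σ' hσ'S
      have h3 := ih t ht
      have heq : t + (↑(k+1)) * σ' = t + k * σ' + σ' := by push_cast; ring
      rw [heq]
      calc S (t + k * σ' + σ') ≤ c * (t + k * σ') + c * σ' := by linarith
        _ = c * (t + k * σ' + σ') := by ring
  have hx2 : 0 < x - (σ + σ) := by linarith
  set k := ⌊(x - (σ + σ)) / σ'⌋₊ with hk
  have hk1 : (k : ℝ) * σ' ≤ x - (σ + σ) := by
    have := Nat.floor_le (a := (x - (σ + σ)) / σ') (by positivity)
    calc (k:ℝ) * σ' ≤ ((x - (σ + σ)) / σ') * σ' := by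
          exact mul_le_mul_of_nonneg_right this hσ'0.le
      _ = x - (σ + σ) := by field_simp
  have hk2 : x - (σ + σ) < (k + 1) * σ' := by
    have := Nat.lt_floor_add_one ((x - (σ + σ)) / σ')
    calc x - (σ + σ) = ((x - (σ + σ)) / σ') * σ' := by field_simp
      _ < (k + 1) * σ' := by
          exact mul_lt_mul_of_pos_right (by exact_mod_cast this) hσ'0
  have habs : |(x - k * σ') - (σ + σ)| < ε := by
    rw [abs_lt]
    constructor <;> nlinarith
  have := key k (x - k * σ') habs
  simpa using this

/-- Linear lower bound for a subadditive `S` near `0⁺`. -/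
lemma berz_lower_bound {S : ℝ → ℝ} (hsub : Subadditive' S) {c : ℝ}
    (hP1 : ∀ x : ℝ, 0 < x → S x ≤ c * x) :
    ∃ m : ℝ, m ≤ 0 ∧ ∀ x : ℝ, 0 < x → x < 2 → m * x ≤ S x := by
  refine ⟨min (S 3 - 2 * |c|) 0, min_le_right _ _, ?_⟩
  set m := min (S 3 - 2 * |c|) 0 with hm
  have hm0 : m ≤ 0 := min_le_right _ _
  have hbase : ∀ x : ℝ, 1 ≤ x → x < 2 → m * x ≤ S x := by
    intro x h1 h2
    have h3 : S 3 ≤ S x + S (3 - x) := by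
      have := hsub x (3 - x); rwa [show x + (3 - x) = 3 by ring] at this
    have h4 : S (3 - x) ≤ c * (3 - x) := hP1 _ (by linarith)
    have h5 : c * (3 - x) ≤ |c| * (3 - x) :=
      mul_le_mul_of_nonneg_right (le_abs_self c) (by linarith)
    have h6 : |c| * (3 - x) ≤ |c| * 2 :=
      mul_le_mul_of_nonneg_left (by linarith) (abs_nonneg c)
    have h7 : m ≤ S 3 - 2 * |c| := min_le_left _ _
    nlinarith [mul_le_mul_of_nonpos_left h1 hm0]
  have key : ∀ n : ℕ, ∀ x : ℝ, 1 / 2 ^ n ≤ x → x < 2 → m * x ≤ S x := by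
    intro n
    induction n with
    | zero => intro x h1 h2; exact hbase x (by simpa using h1) h2
    | succ k ih =>
      intro x h1 h2
      by_cases hcase : 1 / 2 ^ k ≤ x
      · exact ih x hcase h2
      push_neg at hcase
      have hxpos : 0 < x := lt_of_lt_of_le (by positivity) h1
      have hx1 : x < 1 := lt_of_lt_of_le hcase (by
        have : (1:ℝ) ≤ 2 ^ k := one_le_pow₀ (by norm_num)
        rw [div_le_one (by positivity)]; linarith)
      have h2x1 : 1 / 2 ^ k ≤ 2 * x := by
        rw [pow_succ] at h1
        have : 1 / (2 ^ k * 2) ≤ x := h1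
        rw [div_le_iff₀ (by positivity)] at this ⊢
        nlinarith
      have h2x2 : 2 * x < 2 := by linarith
      have hih := ih (2 * x) h2x1 h2x2
      have hsx := hsub x x
      rw [show x + x = 2 * x by ring] at hsx
      nlinarith
  intro x hx hx2
  obtain ⟨n, hn⟩ := pow_unbounded_of_one_lt (1 / x) (y := (2:ℝ)) (by norm_num)
  have : 1 / 2 ^ n ≤ x := by
    rw [div_le_iff₀ (by positivity)]
    rw [div_lt_iff₀ hx] at hn
    nlinarith
  exact key n x this hx2

/-- Right limit `S(0+) = 0`, by squeezing between `m·x` and `c·x`. -/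
lemma berz_right_tendsto {S : ℝ → ℝ} {c m : ℝ}
    (hup : ∀ x : ℝ, 0 < x → S x ≤ c * x)
    (hlo : ∀ x : ℝ, 0 < x → x < 2 → m * x ≤ S x) :
    Tendsto S (𝓝[>] (0:ℝ)) (𝓝 0) := by
  have hmem : Set.Ioo (0:ℝ) 2 ∈ 𝓝[>] (0:ℝ) :=
    Ioo_mem_nhdsGT_of_mem (by constructor <;> norm_num)
  have hid : Tendsto (fun x : ℝ => x) (𝓝[>] (0:ℝ)) (𝓝 0) :=
    tendsto_id.mono_left nhdsWithin_le_nhds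
  have hg : Tendsto (fun x : ℝ => m * x) (𝓝[>] (0:ℝ)) (𝓝 0) := by
    simpa using hid.const_mul m
  have hh : Tendsto (fun x : ℝ => c * x) (𝓝[>] (0:ℝ)) (𝓝 0) := by
    simpa using hid.const_mul c
  refine tendsto_of_tendsto_of_tendsto_of_le_of_le' hg hh ?_ ?_
  · filter_upwards [hmem] with x hx using hlo x hx.1 hx.2
  · filter_upwards [self_mem_nhdsWithin] with x hx using hup x hx

/-- Left limit `S(0−) = 0`, given the witnessing negative sequence. -/
lemma berz_left_tendsto {S : ℝ → ℝ} (hsub : Subadditive' S) (h0 : S 0 = 0) {c : ℝ}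
    (hP1 : ∀ x : ℝ, 0 < x → S x ≤ c * x)
    {z : ℕ → ℝ} (hzneg : ∀ n, z n < 0) (hz0 : Tendsto z atTop (𝓝 0))
    (hSz : Tendsto (fun n => S (z n)) atTop (𝓝 0)) :
    Tendsto S (𝓝[<] (0:ℝ)) (𝓝 0) := by
  have hSneg : ∀ x : ℝ, x < 0 → c * x ≤ S x := by
    intro x hx
    have h1 : (0:ℝ) ≤ S x + S (-x) := by
      have := hsub x (-x); rw [show x + -x = 0 by ring, h0] at this; linarith
    have h2 : S (-x) ≤ c * (-x) := hP1 _ (by linarith)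
    linarith
  rw [tendsto_order]
  constructor
  · intro a ha
    have hd : (0:ℝ) < -a / (|c| + 1) := div_pos (by linarith) (by positivity)
    have hmem : Set.Ioo (-(-a / (|c| + 1))) 0 ∈ 𝓝[<] (0:ℝ) :=
      Ioo_mem_nhdsLT_of_mem ⟨by linarith, le_refl 0⟩
    filter_upwards [hmem] with x hx
    have h1 : c * x ≤ S x := hSneg x hx.2
    have h2 : |c| * x ≤ c * x := mul_le_mul_of_nonpos_right (le_abs_self c) hx.2.le
    have hxlt : -x < -a / (|c| + 1) := by linarith [hx.1]
    have h3 : |c| * (-x) < (|c| + 1) * (-a / (|c| + 1)) := by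
      nlinarith [abs_nonneg c, hxlt]
    have h4 : (|c| + 1) * (-a / (|c| + 1)) = -a := by field_simp
    nlinarith
  · intro ε hε
    have h1 : ∀ᶠ n in atTop, |S (z n)| < ε / 2 := by
      have := hSz.eventually (eventually_abs_sub_lt 0 (by positivity : (0:ℝ) < ε/2))
      simpa using this
    have h2 : ∀ᶠ n in atTop, |z n| < ε / (2 * (|c| + 1)) := by
      have := hz0.eventually (eventually_abs_sub_lt 0
        (by positivity : (0:ℝ) < ε / (2 * (|c| + 1))))
      simpa using this
    obtain ⟨n, hn1, hn2⟩ := (h1.and h2).exists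
    have hzn := hzneg n
    have hmem : Set.Ioo (z n) 0 ∈ 𝓝[<] (0:ℝ) :=
      Ioo_mem_nhdsLT_of_mem ⟨hzn, le_refl 0⟩
    filter_upwards [hmem] with x hx
    have hd : S x ≤ S (z n) + S (x - z n) := by
      have := hsub (z n) (x - z n)
      rwa [show z n + (x - z n) = x by ring] at this
    have hpos : 0 < x - z n := by linarith [hx.1]
    have h3 : S (x - z n) ≤ c * (x - z n) := hP1 _ hpos
    have h4 : c * (x - z n) ≤ |c| * (x - z n) :=
      mul_le_mul_of_nonneg_right (le_abs_self c) hpos.le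
    have h5 : x - z n ≤ -z n := by linarith [hx.2]
    have h6 : |c| * (x - z n) ≤ (|c| + 1) * (-z n) := by
      nlinarith [abs_nonneg c]
    have h7 : (|c| + 1) * (-z n) < ε / 2 := by
      have : -z n < ε / (2 * (|c| + 1)) := by
        rw [abs_of_neg hzn] at hn2; exact hn2
      rw [lt_div_iff₀ (by positivity)] at this
      nlinarith [abs_nonneg c]
    have h8 : S (z n) < ε / 2 := (abs_lt.1 hn1).2
    linarith

/-- Continuity at `0` and everywhere, from the one-sided limits. -/
lemma berz_continuity {S : ℝ → ℝ} (hsub : Subadditive' S) (h0 : S 0 = 0)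
    (hleft : Tendsto S (𝓝[<] (0:ℝ)) (𝓝 0))
    (hright : Tendsto S (𝓝[>] (0:ℝ)) (𝓝 0)) :
    ContinuousAt S 0 ∧ Continuous S := by
  have hpure : Tendsto S (pure (0:ℝ)) (𝓝 0) := by
    have := tendsto_pure_nhds S (0:ℝ)
    rwa [h0] at this
  have hge : Tendsto S (𝓝[≥] (0:ℝ)) (𝓝 0) := by
    rw [show Set.Ici (0:ℝ) = insert 0 (Set.Ioi 0) by
        rw [Set.Ioi_insert], nhdsWithin_insert]
    exact tendsto_sup.2 ⟨hpure, hright⟩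
  have hcont0 : Tendsto S (𝓝 (0:ℝ)) (𝓝 0) := by
    have := tendsto_sup.2 ⟨hleft, hge⟩
    rwa [nhdsLT_sup_nhdsGE (0:ℝ)] at this
  have hCA : ContinuousAt S 0 := by rw [ContinuousAt, h0]; exact hcont0
  refine ⟨hCA, continuous_iff_continuousAt.2 fun x => ?_⟩
  rw [ContinuousAt]
  have hgx : Tendsto (fun y : ℝ => S x - S (x - y)) (𝓝 x) (𝓝 (S x)) := by
    have h1 : Tendsto (fun y : ℝ => x - y) (𝓝 x) (𝓝 0) := by
      have h : Tendsto (fun y : ℝ => x - y) (𝓝 x) (𝓝 (x - x)) :=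
        (continuous_const.sub continuous_id).tendsto x
      simpa using h
    have h2 : Tendsto (fun y : ℝ => S (x - y)) (𝓝 x) (𝓝 0) := hcont0.comp h1
    simpa using tendsto_const_nhds.sub h2
  have hhx : Tendsto (fun y : ℝ => S x + S (y - x)) (𝓝 x) (𝓝 (S x)) := by
    have h1 : Tendsto (fun y : ℝ => y - x) (𝓝 x) (𝓝 0) := by
      have h : Tendsto (fun y : ℝ => y - x) (𝓝 x) (𝓝 (x - x)) :=
        (continuous_id.sub continuous_const).tendsto x
      simpa using h
    have h2 : Tendsto (fun y : ℝ => S (y - x)) (𝓝 x) (𝓝 0) := hcont0.comp h1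
    simpa using tendsto_const_nhds.add h2
  refine tendsto_of_tendsto_of_tendsto_of_le_of_le hgx hhx ?_ ?_
  · intro y
    have := hsub y (x - y)
    rw [show y + (x - y) = x by ring] at this
    simp only; linarith
  · intro y
    have := hsub x (y - x)
    rw [show x + (y - x) = y by ring] at this
    simp only; linarith

/-- Paper's Theorem 0⁺: for `Σ ⊆ [0,∞)` locally Steinhaus–Weil and accumulating at
`0`, and `S` subadditive with `S 0 = 0` linearly bounded above by `c·σ` on `Σ`,
one has `S x ≤ c·x` for all `x > 0`, `limsup_{x↓0} S x ≤ 0` and `S(0+) = 0`;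
if moreover `S zₙ → 0` for some strictly negative sequence `zₙ` increasing to `0`,
then `S` is continuous at `0` and hence everywhere. -/
theorem berz_theorem0_plus (Sig : Set ℝ) (hSig : Sig ⊆ Set.Ici (0 : ℝ))
    (hSW : LocallySW Sig) (hacc : AccPt (0 : ℝ) (𝓟 Sig))
    (S : ℝ → ℝ) (hsub : Subadditive' S) (h0 : S 0 = 0)
    (c : ℝ) (hc : ∀ σ ∈ Sig, S σ ≤ c * σ) :
    (∀ x : ℝ, 0 < x → S x ≤ c * x) ∧
    Filter.limsup S (𝓝[>] (0 : ℝ)) ≤ 0 ∧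
    Tendsto S (𝓝[>] (0 : ℝ)) (𝓝 0) ∧
    ((∃ z : ℕ → ℝ, (∀ n, z n < 0) ∧ StrictMono z ∧ Tendsto z atTop (𝓝 0) ∧
        Tendsto (fun n => S (z n)) atTop (𝓝 0)) →
      ContinuousAt S 0 ∧ Continuous S) := by
  have hP1 : ∀ x : ℝ, 0 < x → S x ≤ c * x := berz_part1 hSig hSW hacc hsub hc
  obtain ⟨m, hm0, hlo⟩ := berz_lower_bound hsub hP1
  have hright : Tendsto S (𝓝[>] (0:ℝ)) (𝓝 0) := berz_right_tendsto hP1 hlo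
  refine ⟨hP1, le_of_eq (hright.limsup_eq), hright, ?_⟩
  rintro ⟨z, hzneg, -, hz0, hSz⟩
  exact berz_continuity hsub h0 (berz_left_tendsto hsub h0 hP1 hzneg hz0 hSz) hright
end

section
/- Let S : ℝ → ℝ be locally bounded and subadditive with S(0) = 0, and suppose S satisfies the strong Heiberg–Seneta condition, i.e. γ := limsup_{t↓0} S(t)/t < ∞. Define S* : ℝ → ℝ ∪ {+∞} by S*(x) := limsup_{n→∞} n·S(x/n) (limsup taken in the extended reals). Then: S(x) ≤ S*(x) for all x; S*(x+y) ≤ S*(x) + S*(y) for all x, y; S*(kx) = k·S*(x) for all x ∈ ℝ and all k ∈ ℕ, k ≥ 1; and for all t ≥ 0 one has β_S·t ≤ S(t) ≤ S*(t) ≤ γ·t, where β_S := inf_{t>0} S(t)/t. In particular lim_{t↓0} S(t) = 0, lim_{t↓0} S*(t) = 0, and sup_{t>0} S(t)/t ≤ γ. -/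
open Filter Topology Set

/-- The upper sublinear envelope `S*(x) := limsup_{n→∞} n·S(x/n)`, taken in the
extended reals (so `S*` maps into `ℝ ∪ {±∞}`, and the paper's claims show it is
in fact `ℝ ∪ {+∞}`-valued). -/
noncomputable def SStar (S : ℝ → ℝ) (x : ℝ) : EReal :=
  Filter.limsup (fun n : ℕ => (((n : ℝ) * S (x / (n : ℝ)) : ℝ) : EReal)) Filter.atTop

/-- `γ_S⁺ := limsup_{t↓0} S t / t`, in the extended reals. -/
noncomputable def gammaPlus (S : ℝ → ℝ) : EReal :=
  Filter.limsup (fun t : ℝ => ((S t / t : ℝ) : EReal)) (𝓝[>] (0 : ℝ))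

/-- `β_S := inf_{t>0} S t / t`. -/
noncomputable def betaS (S : ℝ → ℝ) : ℝ :=
  sInf ((fun t => S t / t) '' Set.Ioi (0 : ℝ))

lemma nat_mul_bound {S : ℝ → ℝ} (hsub : Subadditive' S) (h0 : S 0 = 0) :
    ∀ (n : ℕ) (x : ℝ), S ((n : ℝ) * x) ≤ (n : ℝ) * S x := by
  intro n
  induction n with
  | zero => intro x; simp [h0]
  | succ m ih =>
      intro x
      have h1 : ((m + 1 : ℕ) : ℝ) * x = (m : ℝ) * x + x := by push_cast; ring
      rw [h1]
      calc S ((m : ℝ) * x + x) ≤ S ((m : ℝ) * x) + S x := hsub _ _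
        _ ≤ (m : ℝ) * S x + S x := by linarith [ih x]
        _ = ((m + 1 : ℕ) : ℝ) * S x := by push_cast; ring

lemma upper_bound {S : ℝ → ℝ} (hsub : Subadditive' S) (h0 : S 0 = 0) {c : ℝ}
    (hc : gammaPlus S < (c : EReal)) : ∀ t : ℝ, 0 < t → S t ≤ c * t := by
  have hev : ∀ᶠ s in 𝓝[>] (0:ℝ), ((S s / s : ℝ) : EReal) < (c : EReal) :=
    Filter.eventually_lt_of_limsup_lt hc
  obtain ⟨δ, hδ, hIoc⟩ := (mem_nhdsGT_iff_exists_Ioc_subset).1 hev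
  have hδ0 : (0:ℝ) < δ := hδ
  have key : ∀ s ∈ Ioc (0:ℝ) δ, S s ≤ c * s := by
    intro s hs
    have h1 : ((S s / s : ℝ) : EReal) < (c : EReal) := hIoc hs
    have h2 : S s / s < c := by exact_mod_cast h1
    have h3 := (div_lt_iff₀ hs.1).1 h2
    linarith
  intro t ht
  set n : ℕ := max 1 ⌈t / δ⌉₊ with hn
  have hn1 : 1 ≤ n := le_max_left _ _
  have hnpos : (0:ℝ) < (n : ℝ) := by exact_mod_cast hn1
  have hle : t / (n : ℝ) ≤ δ := by
    rw [div_le_iff₀ hnpos]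
    have h3 : t / δ ≤ (⌈t / δ⌉₊ : ℝ) := Nat.le_ceil _
    have h4 : ((⌈t / δ⌉₊ : ℕ) : ℝ) ≤ (n : ℝ) := by exact_mod_cast le_max_right 1 ⌈t / δ⌉₊
    have h5 : t = (t / δ) * δ := by field_simp
    nlinarith
  have hpos : 0 < t / (n : ℝ) := div_pos ht hnpos
  have hs := key (t / (n : ℝ)) ⟨hpos, hle⟩
  have hA := nat_mul_bound hsub h0 n (t / (n : ℝ))
  rw [mul_div_cancel₀ t hnpos.ne'] at hA
  have heq : (n : ℝ) * (c * (t / (n : ℝ))) = c * t := by field_simp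
  calc S t ≤ (n : ℝ) * S (t / (n : ℝ)) := hA
    _ ≤ (n : ℝ) * (c * (t / (n : ℝ))) := mul_le_mul_of_nonneg_left hs hnpos.le
    _ = c * t := heq

lemma lower_bound {S : ℝ → ℝ} (hlb : LocallyBounded' S) (hsub : Subadditive' S) (h0 : S 0 = 0) :
    ∃ b : ℝ, ∀ t : ℝ, 0 < t → b * t ≤ S t := by
  obtain ⟨M, hM⟩ := hlb 1 one_pos
  have hM0 : 0 ≤ M := le_trans (abs_nonneg _) (hM 0 (by norm_num))
  refine ⟨-3 * M, fun t ht => ?_⟩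
  rcases le_or_gt t (1/2) with hts | hts
  · -- small t
    set n : ℕ := ⌊1 / t⌋₊ with hn
    have h2t : (2:ℝ) ≤ 1 / t := by rw [le_div_iff₀ ht]; linarith
    have hn2 : 2 ≤ n := by
      have := Nat.le_floor (α := ℝ) (n := 2) (by exact_mod_cast h2t)
      exact_mod_cast this
    have hnpos : (0:ℝ) < (n : ℝ) := by
      have : (0:ℕ) < n := by omega
      exact_mod_cast this
    have hfl : (n : ℝ) ≤ 1 / t := Nat.floor_le (by positivity)
    have hfl2 : 1 / t < (n : ℝ) + 1 := Nat.lt_floor_add_one _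
    have hnt1 : (n : ℝ) * t ≤ 1 := (le_div_iff₀ ht).1 hfl
    have hnt2 : (1:ℝ) / 2 ≤ (n : ℝ) * t := by
      have : 1 - t < (n : ℝ) * t := by
        have := (div_lt_iff₀ ht).1 hfl2; nlinarith
      linarith
    have hSnt : -M ≤ S ((n : ℝ) * t) := by
      have := hM ((n:ℝ) * t) (by rw [abs_of_nonneg (by positivity)]; exact hnt1)
      linarith [abs_le.1 this |>.1]
    have hA := nat_mul_bound hsub h0 n t
    nlinarith
  · -- t > 1/2
    set m : ℕ := ⌈t⌉₊ with hm
    have hm1 : 1 ≤ m := Nat.one_le_ceil_iff.2 (by linarith)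
    have hmpos : (0:ℝ) < (m : ℝ) := by exact_mod_cast hm1
    have hmt : t ≤ (m : ℝ) := Nat.le_ceil t
    have hmt2 : (m : ℝ) < t + 1 := Nat.ceil_lt_add_one ht.le
    have habs : |(-t) / (m : ℝ)| ≤ 1 := by
      rw [abs_div, abs_neg, abs_of_nonneg ht.le, abs_of_nonneg hmpos.le,
        div_le_one hmpos]
      exact hmt
    have hSm : S ((-t) / (m : ℝ)) ≤ M := le_trans (le_abs_self _) (hM _ habs)
    have hA := nat_mul_bound hsub h0 m ((-t) / (m : ℝ))
    rw [mul_div_cancel₀ (-t) hmpos.ne'] at hA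
    have hneg : 0 ≤ S t + S (-t) := by
      have := hsub t (-t); simp [h0] at this; linarith
    have hSnegt : S (-t) ≤ (m : ℝ) * M :=
      le_trans hA (mul_le_mul_of_nonneg_left hSm hmpos.le)
    nlinarith

noncomputable def erealMulIso (c : ℝ) (hc : 0 < c) : EReal ≃o EReal where
  toFun a := (c : EReal) * a
  invFun a := a / (c : EReal)
  left_inv a := by
    show (c : EReal) * a / (c : EReal) = a
    rw [← EReal.mul_div (c : EReal) a (c : EReal)]
    exact EReal.mul_div_cancel (by simp) (by simp) (by exact_mod_cast hc.ne')
  right_inv a := by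
    show (c : EReal) * (a / (c : EReal)) = a
    exact EReal.mul_div_cancel (by simp) (by simp) (by exact_mod_cast hc.ne')
  map_rel_iff' := by
    intro a b
    show (c : EReal) * a ≤ (c : EReal) * b ↔ a ≤ b
    constructor
    · intro h
      have h2 := EReal.div_le_div_right_of_nonneg (c := (c:EReal)) (by exact_mod_cast hc.le) h
      rwa [← EReal.mul_div, ← EReal.mul_div,
        EReal.mul_div_cancel (by simp) (by simp) (by exact_mod_cast hc.ne'),
        EReal.mul_div_cancel (by simp) (by simp) (by exact_mod_cast hc.ne')] at h2
    · intro h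
      exact mul_le_mul_of_nonneg_left h (by exact_mod_cast hc.le)

lemma erealMulIso_apply (c : ℝ) (hc : 0 < c) (a : EReal) :
    erealMulIso c hc a = (c : EReal) * a := rfl

lemma limsup_coe_const_mul {α : Type*} (F : Filter α) (c : ℝ) (hc : 0 < c) (g : α → ℝ) :
    Filter.limsup (fun n => ((c * g n : ℝ) : EReal)) F
      = (c : EReal) * Filter.limsup (fun n => ((g n : ℝ) : EReal)) F := by
  have h := (erealMulIso c hc).limsup_apply (f := F) (u := fun n => ((g n : ℝ) : EReal))
  simp only [erealMulIso_apply] at h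
  simp only [EReal.coe_mul]
  exact h.symm

lemma tendsto_const_mul_zero' (c : ℝ) :
    Filter.Tendsto (fun t : ℝ => c * t) (𝓝[>] (0:ℝ)) (𝓝 0) := by
  have h : Filter.Tendsto (fun t : ℝ => c * t) (𝓝 (0:ℝ)) (𝓝 (c * 0)) :=
    (continuous_const.mul continuous_id).tendsto 0
  rw [mul_zero] at h
  exact h.mono_left nhdsWithin_le_nhds

/-- Paper's Proposition 1: for `S` locally bounded, subadditive, with `S 0 = 0` and
satisfying the strong Heiberg–Seneta condition `γ_S⁺ < ∞`, the envelope `S*`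
dominates `S`, is subadditive and `ℕ`-homogeneous, and `β_S·t ≤ S t ≤ S* t ≤ γ_S⁺·t`
for `t ≥ 0`; in particular `S(0+) = S*(0+) = 0` and `sup_{t>0} S t / t ≤ γ_S⁺`. -/
theorem berz_proposition1 (S : ℝ → ℝ) (hlb : LocallyBounded' S) (hsub : Subadditive' S)
    (h0 : S 0 = 0) (hSHS : gammaPlus S < ⊤) :
    (∀ x : ℝ, (S x : EReal) ≤ SStar S x) ∧
    (∀ x y : ℝ, SStar S (x + y) ≤ SStar S x + SStar S y) ∧
    (∀ x : ℝ, ∀ k : ℕ, 1 ≤ k → SStar S ((k : ℝ) * x) = ((k : ℝ) : EReal) * SStar S x) ∧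
    (∀ t : ℝ, 0 ≤ t →
      ((betaS S * t : ℝ) : EReal) ≤ (S t : EReal) ∧
      (S t : EReal) ≤ SStar S t ∧
      SStar S t ≤ gammaPlus S * (t : EReal)) ∧
    Tendsto S (𝓝[>] (0 : ℝ)) (𝓝 0) ∧
    Tendsto (SStar S) (𝓝[>] (0 : ℝ)) (𝓝 (0 : EReal)) ∧
    (∀ t : ℝ, 0 < t → ((S t / t : ℝ) : EReal) ≤ gammaPlus S) := by
  obtain ⟨b, hb⟩ := lower_bound hlb hsub h0
  -- Part 1 : S ≤ S*
  have part1 : ∀ x : ℝ, (S x : EReal) ≤ SStar S x := by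
    intro x
    refine Filter.le_limsup_of_frequently_le
      (((eventually_ge_atTop 1).mono fun n hn => ?_).frequently) (by isBoundedDefault)
    have hnpos : (0:ℝ) < (n:ℝ) := by exact_mod_cast hn
    have h1 := nat_mul_bound hsub h0 n (x / (n:ℝ))
    rw [mul_div_cancel₀ x hnpos.ne'] at h1
    exact_mod_cast h1
  -- gamma is a real number
  have hγb : (b : EReal) ≤ gammaPlus S := by
    refine Filter.le_limsup_of_frequently_le
      ((eventually_mem_nhdsWithin.mono fun t (ht : t ∈ Ioi (0:ℝ)) => ?_).frequently)
      (by isBoundedDefault)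
    have h1 : b ≤ S t / t := (le_div_iff₀ ht).2 (hb t ht)
    exact_mod_cast h1
  have hγbot : gammaPlus S ≠ ⊥ := (lt_of_lt_of_le (EReal.bot_lt_coe b) hγb).ne'
  set g : ℝ := (gammaPlus S).toReal with hgdef
  have hg : (g : EReal) = gammaPlus S := EReal.coe_toReal hSHS.ne hγbot
  -- S t ≤ g * t for t > 0
  have hF : ∀ t : ℝ, 0 < t → S t ≤ g * t := by
    intro t ht
    by_contra hcon
    push_neg at hcon
    have h1 : g < S t / t := (lt_div_iff₀ ht).2 hcon
    set c := (g + S t / t) / 2 with hc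
    have h2 : g < c := by rw [hc]; linarith
    have h3 : gammaPlus S < (c : EReal) := by rw [← hg]; exact_mod_cast h2
    have h4 := upper_bound hsub h0 h3 t ht
    have h5 : c < S t / t := by rw [hc]; linarith
    have h6 : c * t < S t := (lt_div_iff₀ ht).1 h5
    linarith
  -- betaS facts
  have hbdd : BddBelow ((fun t => S t / t) '' Ioi (0:ℝ)) := by
    refine ⟨b, ?_⟩
    rintro y ⟨t, ht, rfl⟩
    exact (le_div_iff₀ ht).2 (hb t ht)
  have hbeta : ∀ t : ℝ, 0 ≤ t → betaS S * t ≤ S t := by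
    intro t ht
    rcases eq_or_lt_of_le ht with h|h
    · simp [← h, h0]
    · have h1 : betaS S ≤ S t / t := csInf_le hbdd ⟨t, h, rfl⟩
      calc betaS S * t ≤ (S t / t) * t := by nlinarith
        _ = S t := by field_simp
  -- SStar upper bound
  have hSS0 : SStar S 0 = 0 := by
    unfold SStar
    have : (fun n : ℕ => (((n : ℝ) * S (0 / (n : ℝ)) : ℝ) : EReal)) = fun _ => (0 : EReal) := by
      funext n; simp [h0]
    rw [this, limsup_const]
  have hSSle : ∀ t : ℝ, 0 < t → SStar S t ≤ ((g * t : ℝ) : EReal) := by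
    intro t ht
    apply Filter.limsup_le_of_le (by isBoundedDefault)
    refine (eventually_ge_atTop 1).mono fun n hn => ?_
    have hnpos : (0:ℝ) < (n:ℝ) := by exact_mod_cast hn
    have h1 := hF (t / (n:ℝ)) (div_pos ht hnpos)
    have h2 : (n:ℝ) * S (t/(n:ℝ)) ≤ (n:ℝ) * (g * (t/(n:ℝ))) :=
      mul_le_mul_of_nonneg_left h1 hnpos.le
    have h3 : (n:ℝ) * (g * (t/(n:ℝ))) = g * t := by field_simp
    have h4 : (n:ℝ) * S (t/(n:ℝ)) ≤ g * t := by linarith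
    exact_mod_cast h4
  have hSSgamma : ∀ t : ℝ, 0 ≤ t → SStar S t ≤ gammaPlus S * (t : EReal) := by
    intro t ht
    rcases eq_or_lt_of_le ht with h|h
    · rw [← h, hSS0, ← hg]
      rw [show ((0:ℝ):EReal) = ((0:ℝ):EReal) from rfl, ← EReal.coe_mul]
      simp
    · calc SStar S t ≤ ((g * t : ℝ) : EReal) := hSSle t h
        _ = gammaPlus S * (t : EReal) := by rw [← hg, EReal.coe_mul]
  -- Part 2 : subadditivity
  have part2 : ∀ x y : ℝ, SStar S (x + y) ≤ SStar S x + SStar S y := by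
    intro x y
    have hmono : SStar S (x + y) ≤
        Filter.limsup ((fun n : ℕ => (((n:ℝ) * S (x/(n:ℝ)) : ℝ) : EReal)) +
          (fun n : ℕ => (((n:ℝ) * S (y/(n:ℝ)) : ℝ) : EReal))) Filter.atTop := by
      refine Filter.limsup_le_limsup (Eventually.of_forall fun n => ?_)
        (by isBoundedDefault) (by isBoundedDefault)
      show (((n:ℝ) * S ((x+y)/(n:ℝ)) : ℝ) : EReal) ≤
        (((n:ℝ) * S (x/(n:ℝ)) : ℝ) : EReal) + (((n:ℝ) * S (y/(n:ℝ)) : ℝ) : EReal)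
      rw [← EReal.coe_add]
      have h1 : (x+y)/(n:ℝ) = x/(n:ℝ) + y/(n:ℝ) := add_div _ _ _
      have h2 : S ((x+y)/(n:ℝ)) ≤ S (x/(n:ℝ)) + S (y/(n:ℝ)) := by rw [h1]; exact hsub _ _
      have h3 : (n:ℝ) * S ((x+y)/(n:ℝ)) ≤ (n:ℝ) * S (x/(n:ℝ)) + (n:ℝ) * S (y/(n:ℝ)) := by
        nlinarith [Nat.cast_nonneg (α := ℝ) n]
      exact_mod_cast h3
    refine hmono.trans (EReal.limsup_add_le ?_ ?_)
    · exact Or.inl (lt_of_lt_of_le (EReal.bot_lt_coe _) (part1 x)).ne'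
    · exact Or.inr (lt_of_lt_of_le (EReal.bot_lt_coe _) (part1 y)).ne'
  -- Part 3 : homogeneity
  have part3 : ∀ x : ℝ, ∀ k : ℕ, 1 ≤ k →
      SStar S ((k : ℝ) * x) = ((k : ℝ) : EReal) * SStar S x := by
    intro x k hk
    have hkpos : (0:ℝ) < (k:ℝ) := by exact_mod_cast hk
    apply le_antisymm
    · have h1 : SStar S ((k:ℝ)*x) ≤
          Filter.limsup (fun n : ℕ => (((k:ℝ) * ((n:ℝ) * S (x/(n:ℝ))) : ℝ) : EReal))
            Filter.atTop := by
        refine Filter.limsup_le_limsup (Eventually.of_forall fun n => ?_)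
          (by isBoundedDefault) (by isBoundedDefault)
        show (((n:ℝ) * S ((k:ℝ)*x/(n:ℝ)) : ℝ) : EReal)
          ≤ (((k:ℝ) * ((n:ℝ) * S (x/(n:ℝ))) : ℝ) : EReal)
        have harg : (k:ℝ)*x/(n:ℝ) = (k:ℝ)*(x/(n:ℝ)) := mul_div_assoc _ _ _
        have h2 : S ((k:ℝ)*(x/(n:ℝ))) ≤ (k:ℝ) * S (x/(n:ℝ)) := nat_mul_bound hsub h0 k _
        have h3 : (n:ℝ) * S ((k:ℝ)*x/(n:ℝ)) ≤ (k:ℝ) * ((n:ℝ) * S (x/(n:ℝ))) := by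
          rw [harg]; nlinarith [Nat.cast_nonneg (α := ℝ) n]
        exact_mod_cast h3
      rwa [limsup_coe_const_mul Filter.atTop (k:ℝ) hkpos (fun n : ℕ => (n:ℝ) * S (x/(n:ℝ)))] at h1
    · have hmap : Tendsto (fun m : ℕ => k * m) atTop atTop := by
        apply Filter.tendsto_atTop_atTop.2
        intro c
        exact ⟨c, fun m hm => le_trans hm (Nat.le_mul_of_pos_left m (by omega))⟩
      have heqfun : (fun m : ℕ => (((k:ℝ) * ((m:ℝ) * S (x/(m:ℝ))) : ℝ) : EReal))
          = (fun n : ℕ => (((n:ℝ) * S ((k:ℝ)*x/(n:ℝ)) : ℝ) : EReal)) ∘ (fun m : ℕ => k * m) := by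
        funext m
        show (((k:ℝ) * ((m:ℝ) * S (x/(m:ℝ))) : ℝ) : EReal)
          = ((((k*m:ℕ):ℝ) * S ((k:ℝ)*x/((k*m:ℕ):ℝ)) : ℝ) : EReal)
        rcases Nat.eq_zero_or_pos m with rfl|hm
        · simp [h0]
        · have hm' : (0:ℝ) < (m:ℝ) := by exact_mod_cast hm
          have hcast : ((k*m:ℕ):ℝ) = (k:ℝ)*(m:ℝ) := by push_cast; ring
          have harg : (k:ℝ)*x/((k:ℝ)*(m:ℝ)) = x/(m:ℝ) := mul_div_mul_left x (m:ℝ) hkpos.ne'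
          rw [hcast, harg]
          push_cast
          rw [mul_assoc]
      have hcomp : Filter.limsup ((fun n : ℕ => (((n:ℝ) * S ((k:ℝ)*x/(n:ℝ)) : ℝ) : EReal))
            ∘ (fun m : ℕ => k * m)) Filter.atTop ≤ SStar S ((k:ℝ)*x) := by
        have hmm : Filter.limsup ((fun n : ℕ => (((n:ℝ) * S ((k:ℝ)*x/(n:ℝ)) : ℝ) : EReal))
              ∘ (fun m : ℕ => k * m)) Filter.atTop
            = Filter.limsup (fun n : ℕ => (((n:ℝ) * S ((k:ℝ)*x/(n:ℝ)) : ℝ) : EReal))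
              (Filter.map (fun m : ℕ => k * m) Filter.atTop) := by
          rw [Filter.limsup, Filter.limsup, Filter.map_map]
        rw [hmm]
        exact Filter.limsup_le_limsup_of_le hmap
      calc ((k:ℝ) : EReal) * SStar S x
          = Filter.limsup (fun m : ℕ => (((k:ℝ) * ((m:ℝ) * S (x/(m:ℝ))) : ℝ) : EReal))
            Filter.atTop :=
            (limsup_coe_const_mul Filter.atTop (k:ℝ) hkpos (fun m : ℕ => (m:ℝ) * S (x/(m:ℝ)))).symm
        _ ≤ SStar S ((k:ℝ)*x) := by rw [heqfun]; exact hcomp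
  -- Part 5 : tendsto of S
  have part5 : Tendsto S (𝓝[>] (0:ℝ)) (𝓝 0) := by
    refine tendsto_of_tendsto_of_tendsto_of_le_of_le'
      (tendsto_const_mul_zero' b) (tendsto_const_mul_zero' g) ?_ ?_
    · exact eventually_mem_nhdsWithin.mono fun t ht => hb t ht
    · exact eventually_mem_nhdsWithin.mono fun t ht => hF t ht
  -- Part 6 : tendsto of SStar
  have part6 : Tendsto (SStar S) (𝓝[>] (0:ℝ)) (𝓝 (0:EReal)) := by
    have hlo : Tendsto (fun t : ℝ => ((betaS S * t : ℝ) : EReal)) (𝓝[>] (0:ℝ)) (𝓝 (0:EReal)) := by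
      rw [show (0:EReal) = ((0:ℝ):EReal) from rfl]
      exact EReal.tendsto_coe.2 (tendsto_const_mul_zero' _)
    have hhi : Tendsto (fun t : ℝ => ((g * t : ℝ) : EReal)) (𝓝[>] (0:ℝ)) (𝓝 (0:EReal)) := by
      rw [show (0:EReal) = ((0:ℝ):EReal) from rfl]
      exact EReal.tendsto_coe.2 (tendsto_const_mul_zero' _)
    refine tendsto_of_tendsto_of_tendsto_of_le_of_le' hlo hhi ?_ ?_
    · refine eventually_mem_nhdsWithin.mono fun t (ht : t ∈ Ioi (0:ℝ)) => ?_
      calc ((betaS S * t : ℝ) : EReal) ≤ ((S t : ℝ) : EReal) := by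
            exact_mod_cast hbeta t (le_of_lt ht)
        _ ≤ SStar S t := part1 t
    · exact eventually_mem_nhdsWithin.mono fun t (ht : t ∈ Ioi (0:ℝ)) => hSSle t ht
  -- Part 7
  have part7 : ∀ t : ℝ, 0 < t → ((S t / t : ℝ) : EReal) ≤ gammaPlus S := by
    intro t ht
    rw [← hg]
    have h1 : S t / t ≤ g := (div_le_iff₀ ht).2 (by linarith [hF t ht])
    exact_mod_cast h1
  exact ⟨part1, part2, part3,
    fun t ht => ⟨by exact_mod_cast hbeta t ht, part1 t, hSSgamma t ht⟩,
    part5, part6, part7⟩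
end

section
/- Let S : ℝ → ℝ be locally bounded and subadditive with S(0) = 0, satisfying the weak Heiberg–Seneta condition: there is a locally Steinhaus–Weil set Σ ⊆ (0,∞) accumulating at 0 with limsup_{t↓0, t∈Σ} S(t)/t < ∞. Let S*(x) := limsup_{n→∞} n·S(x/n), and suppose there is a strictly negative sequence t_n increasing to 0 with S*(t_n) → 0. Then S and S* are both continuous on ℝ, and S* is linear on each half-line: there exist c⁺, c⁻ ∈ ℝ with S*(x) = c⁺·x for all x ≥ 0 and S*(x) = c⁻·x for all x ≤ 0. -/
open Filter Topology Set Pointwise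

/-! ### Auxiliary definitions and lemmas -/

/-- The real-valued version of the sublinear envelope, as a supremum. -/
noncomputable def Tfun (S : ℝ → ℝ) (x : ℝ) : ℝ :=
  ⨆ n : ℕ, (((n : ℕ) + 1 : ℕ) : ℝ) * S (x / (((n : ℕ) + 1 : ℕ) : ℝ))

/-- Iterated subadditivity. -/
lemma S_nsmul {S : ℝ → ℝ} (hsub : Subadditive' S) (h0 : S 0 = 0) :
    ∀ (k : ℕ) (y : ℝ), S ((k : ℝ) * y) ≤ (k : ℝ) * S y := by
  intro k
  induction k with
  | zero => intro y; simp [h0]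
  | succ n ih =>
      intro y
      have : ((n : ℝ) + 1) * y = (n : ℝ) * y + y := by ring
      calc S (((n + 1 : ℕ) : ℝ) * y) = S ((n : ℝ) * y + y) := by push_cast; rw [this]
        _ ≤ S ((n : ℝ) * y) + S y := hsub _ _
        _ ≤ (n : ℝ) * S y + S y := by linarith [ih y]
        _ = ((n + 1 : ℕ) : ℝ) * S y := by push_cast; ring

/-- Monotonicity of `n ↦ n S(x/n)` along multiples. -/
lemma a_mul {S : ℝ → ℝ} (hsub : Subadditive' S) (h0 : S 0 = 0) (x : ℝ)
    (m k : ℕ) (hm : 1 ≤ m) (hk : 1 ≤ k) :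
    (m : ℝ) * S (x / (m : ℝ)) ≤ ((m * k : ℕ) : ℝ) * S (x / ((m * k : ℕ) : ℝ)) := by
  have hm0 : (0:ℝ) < m := by exact_mod_cast hm
  have hk0 : (0:ℝ) < k := by exact_mod_cast hk
  have hx : x / (m : ℝ) = (k : ℝ) * (x / ((m * k : ℕ) : ℝ)) := by
    push_cast; field_simp
  have := S_nsmul hsub h0 k (x / ((m * k : ℕ) : ℝ))
  calc (m : ℝ) * S (x / (m : ℝ)) = (m : ℝ) * S ((k : ℝ) * (x / ((m * k : ℕ) : ℝ))) := by rw [hx]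
    _ ≤ (m : ℝ) * ((k : ℝ) * S (x / ((m * k : ℕ) : ℝ))) := by
        exact mul_le_mul_of_nonneg_left this (le_of_lt hm0)
    _ = ((m * k : ℕ) : ℝ) * S (x / ((m * k : ℕ) : ℝ)) := by push_cast; ring

/-- Each `m S(x/m)` (for `m ≥ 1`) is a lower bound for `S*`. -/
lemma le_sstar {S : ℝ → ℝ} (hsub : Subadditive' S) (h0 : S 0 = 0) (x : ℝ)
    (m : ℕ) (hm : 1 ≤ m) :
    (((m : ℝ) * S (x / (m : ℝ)) : ℝ) : EReal) ≤ SStar S x := by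
  apply Filter.le_limsup_of_frequently_le (hu_le := Filter.isBoundedUnder_of ⟨⊤, fun _ => le_top⟩)
  rw [Filter.frequently_atTop]
  intro N
  refine ⟨m * (N + 1), ?_, ?_⟩
  · calc N ≤ N + 1 := Nat.le_succ N
      _ ≤ m * (N + 1) := Nat.le_mul_of_pos_left _ hm
  · exact_mod_cast a_mul hsub h0 x m (N + 1) hm (Nat.le_add_left 1 N)

section TLemmas
variable {S : ℝ → ℝ} {C : ℝ} (hsub : Subadditive' S) (h0 : S 0 = 0)
  (hb : ∀ v : ℝ, |S v| ≤ C * |v|)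

include hb in
lemma T_term_le (x : ℝ) (n : ℕ) :
    (((n : ℕ) + 1 : ℕ) : ℝ) * S (x / (((n : ℕ) + 1 : ℕ) : ℝ)) ≤ C * |x| := by
  have hn : (0:ℝ) < ((n + 1 : ℕ) : ℝ) := by positivity
  have h := hb (x / ((n + 1 : ℕ) : ℝ))
  have habs : |x / ((n + 1 : ℕ) : ℝ)| = |x| / ((n + 1 : ℕ) : ℝ) := by
    rw [abs_div, abs_of_pos hn]
  rw [habs] at h
  have h1 : S (x / ((n + 1 : ℕ) : ℝ)) ≤ C * (|x| / ((n + 1 : ℕ) : ℝ)) :=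
    le_trans (le_abs_self _) h
  calc ((n + 1 : ℕ) : ℝ) * S (x / ((n + 1 : ℕ) : ℝ))
      ≤ ((n + 1 : ℕ) : ℝ) * (C * (|x| / ((n + 1 : ℕ) : ℝ))) :=
        mul_le_mul_of_nonneg_left h1 (le_of_lt hn)
    _ = C * |x| := by field_simp

include hb in
lemma T_bddAbove (x : ℝ) :
    BddAbove (Set.range fun n : ℕ => (((n : ℕ) + 1 : ℕ) : ℝ) * S (x / (((n : ℕ) + 1 : ℕ) : ℝ))) := by
  refine ⟨C * |x|, ?_⟩
  rintro _ ⟨n, rfl⟩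
  exact T_term_le hb x n

include hb in
lemma T_le_term (x : ℝ) (m : ℕ) (hm : 1 ≤ m) : (m : ℝ) * S (x / (m : ℝ)) ≤ Tfun S x := by
  obtain ⟨n, rfl⟩ : ∃ n : ℕ, m = n + 1 := ⟨m - 1, (Nat.succ_pred_eq_of_pos hm).symm⟩
  exact le_ciSup (T_bddAbove hb x) n

include hb in
lemma T_le_bound (x : ℝ) : Tfun S x ≤ C * |x| := by
  exact ciSup_le fun n => T_term_le hb x n

include hb in
lemma S_le_T (x : ℝ) : S x ≤ Tfun S x := by
  have := T_le_term hb x 1 le_rfl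
  simpa using this

include hsub h0 hb in
lemma sstar_eq_T (x : ℝ) : SStar S x = ((Tfun S x : ℝ) : EReal) := by
  apply le_antisymm
  · apply Filter.limsup_le_of_le Filter.isCobounded_le_of_bot
    filter_upwards [Filter.eventually_ge_atTop 1] with n hn
    exact_mod_cast EReal.coe_le_coe_iff.mpr (T_le_term hb x n hn)
  · have hcoe : ((Tfun S x : ℝ) : EReal)
        = ⨆ n : ℕ, ((((n + 1 : ℕ) : ℝ) * S (x / ((n + 1 : ℕ) : ℝ)) : ℝ) : EReal) := by
      exact Monotone.map_ciSup_of_continuousAt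
        (continuous_coe_real_ereal.continuousAt)
        (fun a b hab => EReal.coe_le_coe_iff.mpr hab) (T_bddAbove hb x)
    rw [hcoe]
    apply iSup_le
    intro n
    exact le_sstar hsub h0 x (n + 1) (Nat.le_add_left 1 n)

include h0 in
lemma T_zero : Tfun S 0 = 0 := by
  have : ∀ n : ℕ, (((n : ℕ) + 1 : ℕ) : ℝ) * S (0 / (((n : ℕ) + 1 : ℕ) : ℝ)) = 0 := by
    intro n; simp [h0]
  unfold Tfun
  simp only [this, ciSup_const]

include hsub hb in
lemma T_subadd (x y : ℝ) : Tfun S (x + y) ≤ Tfun S x + Tfun S y := by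
  apply ciSup_le
  intro n
  have key : (x + y) / ((n + 1 : ℕ) : ℝ) = x / ((n + 1 : ℕ) : ℝ) + y / ((n + 1 : ℕ) : ℝ) := by
    ring
  have hn : (0:ℝ) ≤ ((n + 1 : ℕ) : ℝ) := by positivity
  calc ((n + 1 : ℕ) : ℝ) * S ((x + y) / ((n + 1 : ℕ) : ℝ))
      ≤ ((n + 1 : ℕ) : ℝ) * (S (x / ((n + 1 : ℕ) : ℝ)) + S (y / ((n + 1 : ℕ) : ℝ))) := by
        apply mul_le_mul_of_nonneg_left _ hn
        rw [key]; exact hsub _ _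
    _ = ((n + 1 : ℕ) : ℝ) * S (x / ((n + 1 : ℕ) : ℝ))
        + ((n + 1 : ℕ) : ℝ) * S (y / ((n + 1 : ℕ) : ℝ)) := by ring
    _ ≤ Tfun S x + Tfun S y :=
        add_le_add (T_le_term hb x (n+1) (Nat.le_add_left 1 n))
          (T_le_term hb y (n+1) (Nat.le_add_left 1 n))

include hsub h0 hb in
lemma T_lipschitz (x y : ℝ) : Tfun S x - Tfun S y ≤ C * |x - y| := by
  have := T_subadd hsub hb (y) (x - y)
  simp only [add_sub_cancel] at this
  have h2 : Tfun S (x - y) ≤ C * |x - y| := T_le_bound hb _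
  linarith

include hsub h0 hb in
lemma T_cont : Continuous (Tfun S) := by
  have hC : 0 ≤ C := by
    have := hb 1
    have h1 : (0:ℝ) ≤ |S 1| := abs_nonneg _
    simpa using le_trans h1 this
  apply LipschitzWith.continuous (K := Real.toNNReal C)
  apply LipschitzWith.of_dist_le_mul
  intro x y
  rw [Real.dist_eq, Real.dist_eq, Real.coe_toNNReal C hC]
  rw [abs_sub_le_iff]
  constructor
  · exact T_lipschitz hsub h0 hb x y
  · have := T_lipschitz hsub h0 hb y x
    rwa [abs_sub_comm] at this

include hsub h0 hb in
lemma T_nat_homog (k : ℕ) (hk : 1 ≤ k) (y : ℝ) : Tfun S ((k : ℝ) * y) = (k : ℝ) * Tfun S y := by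
  have hk0 : (0:ℝ) < (k : ℝ) := by exact_mod_cast hk
  apply le_antisymm
  · apply ciSup_le
    intro n
    have key : (k : ℝ) * y / ((n + 1 : ℕ) : ℝ) = (k : ℝ) * (y / ((n + 1 : ℕ) : ℝ)) := by ring
    have hn : (0:ℝ) ≤ ((n + 1 : ℕ) : ℝ) := by positivity
    calc ((n + 1 : ℕ) : ℝ) * S ((k : ℝ) * y / ((n + 1 : ℕ) : ℝ))
        ≤ ((n + 1 : ℕ) : ℝ) * ((k : ℝ) * S (y / ((n + 1 : ℕ) : ℝ))) := by
          apply mul_le_mul_of_nonneg_left _ hn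
          rw [key]; exact S_nsmul hsub h0 k _
      _ = (k : ℝ) * (((n + 1 : ℕ) : ℝ) * S (y / ((n + 1 : ℕ) : ℝ))) := by ring
      _ ≤ (k : ℝ) * Tfun S y :=
          mul_le_mul_of_nonneg_left (T_le_term hb y (n+1) (Nat.le_add_left 1 n)) (le_of_lt hk0)
  · rw [mul_comm, ← le_div_iff₀ hk0]
    apply ciSup_le
    intro n
    rw [le_div_iff₀ hk0, mul_comm]
    have key : ((k * (n + 1) : ℕ) : ℝ) * S ((k : ℝ) * y / ((k * (n + 1) : ℕ) : ℝ))
        = (k : ℝ) * (((n + 1 : ℕ) : ℝ) * S (y / ((n + 1 : ℕ) : ℝ))) := by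
      have h1 : (k : ℝ) * y / ((k * (n + 1) : ℕ) : ℝ) = y / ((n + 1 : ℕ) : ℝ) := by
        push_cast
        field_simp
      rw [h1]; push_cast; ring
    calc (k : ℝ) * (((n + 1 : ℕ) : ℝ) * S (y / ((n + 1 : ℕ) : ℝ)))
        = ((k * (n + 1) : ℕ) : ℝ) * S ((k : ℝ) * y / ((k * (n + 1) : ℕ) : ℝ)) := key.symm
      _ ≤ Tfun S ((k : ℝ) * y) := by
          apply T_le_term hb _ (k * (n + 1))
          exact Nat.one_le_iff_ne_zero.mpr (by positivity)

include hsub h0 hb in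
lemma T_rat_homog (r : ℚ) (hr : 0 < r) (y : ℝ) : Tfun S ((r : ℝ) * y) = (r : ℝ) * Tfun S y := by
  have hden : 1 ≤ r.den := r.pos
  have hnum : 1 ≤ r.num.toNat := by
    have : 0 < r.num := Rat.num_pos.mpr hr
    omega
  have hq0 : (0:ℝ) < (r.den : ℝ) := by exact_mod_cast hden
  have hcast : ((r.den : ℕ) : ℝ) * ((r : ℝ) * y) = ((r.num.toNat : ℕ) : ℝ) * y := by
    have h1 : ((r.num.toNat : ℕ) : ℝ) = (r.num : ℝ) := by
      have : (0:ℤ) ≤ r.num := le_of_lt (Rat.num_pos.mpr hr)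
      exact_mod_cast Int.toNat_of_nonneg this
    rw [h1, Rat.cast_def]
    field_simp
  have e1 : Tfun S (((r.den : ℕ) : ℝ) * ((r : ℝ) * y)) = ((r.den : ℕ) : ℝ) * Tfun S ((r : ℝ) * y) :=
    T_nat_homog hsub h0 hb r.den hden _
  have e2 : Tfun S (((r.num.toNat : ℕ) : ℝ) * y) = ((r.num.toNat : ℕ) : ℝ) * Tfun S y :=
    T_nat_homog hsub h0 hb r.num.toNat hnum _
  rw [hcast, e2] at e1
  have h1 : ((r.num.toNat : ℕ) : ℝ) = (r.num : ℝ) := by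
    have : (0:ℤ) ≤ r.num := le_of_lt (Rat.num_pos.mpr hr)
    exact_mod_cast Int.toNat_of_nonneg this
  have : Tfun S ((r : ℝ) * y) = ((r.num : ℝ) / (r.den : ℝ)) * Tfun S y := by
    rw [← h1]
    field_simp at e1 ⊢
    linarith [e1]
  rw [this, ← Rat.cast_def]

include hsub h0 hb in
lemma T_real_homog (c : ℝ) (hc : 0 < c) (y : ℝ) : Tfun S (c * y) = c * Tfun S y := by
  have hrs : ∀ n : ℕ, ∃ q : ℚ, c < (q : ℝ) ∧ (q : ℝ) < c + 1 / ((n : ℝ) + 1) := by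
    intro n
    apply exists_rat_btwn
    have : (0:ℝ) < 1 / ((n : ℝ) + 1) := by positivity
    linarith
  choose rs hrs1 hrs2 using hrs
  have hrspos : ∀ n, (0:ℚ) < rs n := by
    intro n
    have : (0:ℝ) < (rs n : ℝ) := lt_trans hc (hrs1 n)
    exact_mod_cast this
  have htend : Tendsto (fun n : ℕ => ((rs n : ℝ))) atTop (𝓝 c) := by
    apply tendsto_of_tendsto_of_tendsto_of_le_of_le (g := fun _ : ℕ => c)
      (h := fun n : ℕ => c + 1 / ((n : ℝ) + 1))
    · exact tendsto_const_nhds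
    · have := tendsto_one_div_add_atTop_nhds_zero_nat (𝕜 := ℝ)
      have h2 : Tendsto (fun n : ℕ => c + 1 / ((n : ℝ) + 1)) atTop (𝓝 (c + 0)) :=
        tendsto_const_nhds.add this
      simpa using h2
    · exact fun n => le_of_lt (hrs1 n)
    · exact fun n => le_of_lt (hrs2 n)
  have h1 : Tendsto (fun n : ℕ => Tfun S ((rs n : ℝ) * y)) atTop (𝓝 (Tfun S (c * y))) := by
    apply (T_cont hsub h0 hb).continuousAt.tendsto.comp
    exact htend.mul_const y
  have h2 : ∀ n, Tfun S ((rs n : ℝ) * y) = (rs n : ℝ) * Tfun S y :=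
    fun n => T_rat_homog hsub h0 hb (rs n) (hrspos n) y
  have h3 : Tendsto (fun n : ℕ => (rs n : ℝ) * Tfun S y) atTop (𝓝 (c * Tfun S y)) :=
    htend.mul_const _
  rw [funext h2] at h1
  exact tendsto_nhds_unique h1 h3
end TLemmas

/-- Semigroup covering lemma: an additive subsemigroup of `ℝ` containing an interval
`(a,b)` and an interval `(a',b')` of small enough scale contains all of `(a,∞)`. -/
lemma G_cover {G : Set ℝ} (hadd : ∀ u ∈ G, ∀ v ∈ G, u + v ∈ G)
    {a b a' b' : ℝ} (ha'0 : 0 ≤ a') (hab : a < b) (ha'b' : a' < b')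
    (hsmall : 2 * a' < b - a)
    (hI : Set.Ioo a b ⊆ G) (hI' : Set.Ioo a' b' ⊆ G) :
    ∀ u : ℝ, a < u → u ∈ G := by
  have hnsmul : ∀ (j : ℕ), 1 ≤ j → ∀ g ∈ G, ((j : ℝ)) * g ∈ G := by
    intro j hj
    induction j with
    | zero => omega
    | succ n ih =>
        intro g hg
        rcases Nat.eq_or_lt_of_le hj with h1 | h1
        · simp [← h1] at *; simpa using hg
        · have hn : 1 ≤ n := by omega
          have := ih hn g hg
          have heq : ((n + 1 : ℕ) : ℝ) * g = (n : ℝ) * g + g := by push_cast; ring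
          rw [heq]
          exact hadd _ this _ hg
  intro u hu
  rcases lt_or_ge u b with hub | hub
  · exact hI ⟨hu, hub⟩
  · have hb'0 : 0 < b' := lt_of_le_of_lt ha'0 ha'b'
    have hub0 : 0 ≤ (u - b) / b' := div_nonneg (by linarith) (le_of_lt hb'0)
    set j : ℕ := ⌈(u - b) / b'⌉₊ + 1 with hj_def
    have hj1 : 1 ≤ j := Nat.le_add_left 1 _
    have hjR : (1:ℝ) ≤ (j : ℝ) := by exact_mod_cast hj1
    have hjb : u - b < (j : ℝ) * b' := by
      have h1 : (u - b) / b' ≤ (⌈(u - b) / b'⌉₊ : ℝ) := Nat.le_ceil _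
      have h2 : u - b ≤ (⌈(u - b) / b'⌉₊ : ℝ) * b' := by
        rw [← div_le_iff₀ hb'0]; exact h1
      have : (j : ℝ) * b' = (⌈(u - b) / b'⌉₊ : ℝ) * b' + b' := by
        rw [hj_def]; push_cast; ring
      linarith
    have hja : (j : ℝ) * a' < u - a := by
      have h1 : (⌈(u - b) / b'⌉₊ : ℝ) < (u - b) / b' + 1 := Nat.ceil_lt_add_one hub0
      have h2 : (j : ℝ) < (u - b) / b' + 2 := by
        rw [hj_def]; push_cast; linarith
      have h3 : (j : ℝ) * a' ≤ ((u - b) / b' + 2) * a' := by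
        apply mul_le_mul_of_nonneg_right (le_of_lt h2) ha'0
      have h4 : (u - b) / b' * a' ≤ u - b := by
        have : (u - b) / b' * a' ≤ (u - b) / b' * b' :=
          mul_le_mul_of_nonneg_left (le_of_lt ha'b') hub0
        rwa [div_mul_cancel₀ _ (ne_of_gt hb'0)] at this
      nlinarith
    set lo := max a (u - (j : ℝ) * b') with hlo_def
    set hi := min b (u - (j : ℝ) * a') with hhi_def
    have hja' : (j:ℝ) * a' < (j:ℝ) * b' := by
      apply mul_lt_mul_of_pos_left ha'b'
      linarith
    have hlohi : lo < hi := by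
      rw [hlo_def, hhi_def]
      apply max_lt <;> apply lt_min
      · exact hab
      · linarith
      · linarith
      · linarith
    set v := (lo + hi) / 2 with hv_def
    have hvlo : lo < v := by rw [hv_def]; linarith
    have hvhi : v < hi := by rw [hv_def]; linarith
    have hvab : v ∈ Set.Ioo a b :=
      ⟨lt_of_le_of_lt (le_max_left _ _) hvlo, lt_of_lt_of_le hvhi (min_le_left _ _)⟩
    have hw1 : (j : ℝ) * a' < u - v := by
      have := lt_of_lt_of_le hvhi (min_le_right _ _)
      linarith
    have hw2 : u - v < (j : ℝ) * b' := by
      have := lt_of_le_of_lt (le_max_right a (u - (j : ℝ) * b')) hvlo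
      linarith
    have hj0 : (0:ℝ) < (j : ℝ) := by linarith
    have hwj : (u - v) / (j : ℝ) ∈ Set.Ioo a' b' := by
      constructor
      · rw [lt_div_iff₀ hj0]; linarith [hw1]
      · rw [div_lt_iff₀ hj0]; linarith [hw2]
    have hmem : (j : ℝ) * ((u - v) / (j : ℝ)) ∈ G := hnsmul j hj1 _ (hI' hwj)
    have heq : v + (j : ℝ) * ((u - v) / (j : ℝ)) = u := by
      field_simp; ring
    have := hadd v (hI hvab) _ hmem
    rwa [heq] at this

/-- The linear upper bound on the positive half-line, from the weak Heiberg–Seneta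
condition and the Steinhaus–Weil property. -/
lemma pos_bound {S : ℝ → ℝ} (hsub : Subadditive' S)
    {Sig : Set ℝ} (hSig : Sig ⊆ Set.Ioi (0 : ℝ)) (hSW : LocallySW Sig)
    (hacc : AccPt (0 : ℝ) (𝓟 Sig))
    (hWHS : Filter.limsup (fun t : ℝ => ((S t / t : ℝ) : EReal)) (𝓝[Sig] (0 : ℝ)) < ⊤) :
    ∃ K : ℝ, 0 ≤ K ∧ ∀ u : ℝ, 0 < u → S u ≤ K * u := by
  obtain ⟨K₁, hK₁, -⟩ := EReal.lt_iff_exists_real_btwn.mp hWHS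
  have ev : ∀ᶠ τ in 𝓝[Sig] (0:ℝ), ((S τ / τ : ℝ) : EReal) < (K₁ : EReal) :=
    Filter.eventually_lt_of_limsup_lt hK₁ (Filter.isBoundedUnder_of ⟨⊤, fun _ => le_top⟩)
  rw [Filter.eventually_iff] at ev
  obtain ⟨ρ, hρ, hball⟩ := Metric.mem_nhdsWithin_iff.mp ev
  set K := max K₁ 0 with hK_def
  have hK0 : 0 ≤ K := le_max_right _ _
  have hSb : ∀ σ ∈ Sig, σ < ρ → S σ ≤ K * σ := by
    intro σ hσ hσρ
    have hσ0 : 0 < σ := hSig hσ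
    have hmem : σ ∈ Metric.ball (0:ℝ) ρ ∩ Sig := by
      constructor
      · rw [Metric.mem_ball, Real.dist_eq, sub_zero, abs_of_pos hσ0]; exact hσρ
      · exact hσ
    have := hball hmem
    simp only [Set.mem_setOf_eq] at this
    have hlt : S σ / σ < K₁ := by exact_mod_cast this
    have : S σ < K₁ * σ := by
      rw [div_lt_iff₀ hσ0] at hlt; linarith
    have hK₁K : K₁ ≤ K := le_max_left _ _
    nlinarith
  set G : Set ℝ := {u | 0 < u ∧ S u ≤ K * u} with hG_def
  have hGadd : ∀ u ∈ G, ∀ v ∈ G, u + v ∈ G := by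
    rintro u ⟨hu0, hu⟩ v ⟨hv0, hv⟩
    exact ⟨by linarith, by have := hsub u v; rw [mul_add]; linarith⟩
  have hfind : ∀ ε : ℝ, 0 < ε → ∃ s ∈ Sig, s < ε ∧ 0 < s := by
    intro ε hε
    obtain ⟨y, ⟨hy1, hy2⟩, -⟩ := (accPt_iff_nhds (x := (0:ℝ)) (C := Sig)).mp hacc
      (Metric.ball 0 ε) (Metric.ball_mem_nhds 0 hε)
    have hy0 : 0 < y := hSig hy2
    refine ⟨y, hy2, ?_, hy0⟩
    rw [Metric.mem_ball, Real.dist_eq, sub_zero, abs_of_pos hy0] at hy1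
    exact hy1
  have hint : ∀ c : ℝ, 0 < c → ∃ a b : ℝ, 0 ≤ a ∧ a < b ∧ a < c ∧ Set.Ioo a b ⊆ G := by
    intro c hc
    obtain ⟨s, hsS, hsc, hs0⟩ := hfind (min (c/2) (ρ/2)) (by positivity)
    have hsc2 : s < c/2 := lt_of_lt_of_le hsc (min_le_left _ _)
    have hsρ : s < ρ/2 := lt_of_lt_of_le hsc (min_le_right _ _)
    obtain ⟨δ₀, hδ₀, hδprop⟩ := hSW s hsS s hsS
    set δ := min δ₀ s with hδ_def
    have hδpos : 0 < δ := lt_min hδ₀ hs0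
    have hδs : δ ≤ s := min_le_right _ _
    obtain ⟨hplus, -⟩ := hδprop δ hδpos (min_le_left _ _)
    set P := Sig ∩ Set.Ioo (s - δ) (s + δ) with hP_def
    have hPG : P + P ⊆ G := by
      rintro u hu
      obtain ⟨p, hp, q, hq, rfl⟩ := Set.mem_add.mp hu
      obtain ⟨hpS, -, hp2⟩ := hp
      obtain ⟨hqS, -, hq2⟩ := hq
      have hp0 : 0 < p := hSig hpS
      have hq0 : 0 < q := hSig hqS
      have hpρ : p < ρ := by linarith
      have hqρ : q < ρ := by linarith
      refine ⟨by linarith, ?_⟩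
      have h1 := hSb p hpS hpρ
      have h2 := hSb q hqS hqρ
      rw [mul_add]; linarith [hsub p q]
    rw [mem_interior_iff_mem_nhds, Metric.mem_nhds_iff] at hplus
    obtain ⟨ε₂, hε₂, hball₂⟩ := hplus
    rw [Real.ball_eq_Ioo] at hball₂
    refine ⟨max (s + s - ε₂) 0, s + s + ε₂, le_max_right _ _, ?_, ?_, ?_⟩
    · apply max_lt <;> linarith
    · apply max_lt <;> linarith
    · intro z hz
      apply hPG
      apply hball₂
      exact ⟨lt_of_le_of_lt (le_max_left _ _) hz.1, hz.2⟩
  refine ⟨K, hK0, ?_⟩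
  intro u hu
  obtain ⟨a, b, ha0, hab, hau, hIab⟩ := hint u hu
  obtain ⟨a', b', ha'0, ha'b', ha'small, hIa'b'⟩ := hint ((b - a)/2) (by linarith)
  have := G_cover hGadd ha'0 hab ha'b' (by linarith) hIab hIa'b' u hau
  exact this.2

/-- The linear upper bound on the negative half-line, from the sequence `tₙ`. -/
lemma neg_bound {S : ℝ → ℝ} (hsub : Subadditive' S) (h0 : S 0 = 0)
    {K : ℝ} (hK0 : 0 ≤ K) (hpos : ∀ u : ℝ, 0 < u → S u ≤ K * u)
    {τ : ℝ} (hτ : τ < 0) (hτS : ∀ m : ℕ, 1 ≤ m → (m : ℝ) * S (τ / (m : ℝ)) ≤ 1) :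
    ∀ v : ℝ, v ≤ 0 → S v ≤ (1 / (-τ)) * (-v) := by
  have hτ0 : 0 < -τ := by linarith
  intro v hv
  rcases eq_or_lt_of_le hv with rfl | hv0
  · simp [h0]
  have key : ∀ m : ℕ, 1 ≤ m → S v ≤ (-v) / (-τ) + (1 + K * (-τ)) / (m : ℝ) := by
    intro m hm
    have hm0 : (0:ℝ) < (m : ℝ) := by exact_mod_cast hm
    set k : ℕ := ⌈(-v) * (m : ℝ) / (-τ)⌉₊ with hk_def
    have harg0 : 0 ≤ (-v) * (m : ℝ) / (-τ) := by
      apply div_nonneg _ (le_of_lt hτ0)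
      nlinarith
    have hk1 : (-v) * (m : ℝ) / (-τ) ≤ (k : ℝ) := Nat.le_ceil _
    have hk2 : (k : ℝ) < (-v) * (m : ℝ) / (-τ) + 1 := Nat.ceil_lt_add_one harg0
    have hAτ : ((-v) * (m : ℝ) / (-τ)) * (-τ) = (-v) * (m : ℝ) :=
      div_mul_cancel₀ _ (ne_of_gt hτ0)
    set r : ℝ := v + (k : ℝ) * (-τ) / (m : ℝ) with hr_def
    have hr0 : 0 ≤ r := by
      rw [hr_def]
      have h1 : (-v) * (m:ℝ) ≤ (k : ℝ) * (-τ) := by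
        calc (-v) * (m:ℝ) = ((-v) * (m:ℝ) / (-τ)) * (-τ) := hAτ.symm
          _ ≤ (k : ℝ) * (-τ) := mul_le_mul_of_nonneg_right hk1 (le_of_lt hτ0)
      have h2 : (-v) ≤ (k : ℝ) * (-τ) / (m : ℝ) := by
        rw [le_div_iff₀ hm0]; exact h1
      linarith
    have hr1 : r < (-τ) / (m : ℝ) := by
      have h1 : (k : ℝ) * (-τ) < (-v) * (m : ℝ) + (-τ) := by
        have := mul_lt_mul_of_pos_right hk2 hτ0
        rw [add_mul, hAτ, one_mul] at this
        exact this
      have h2 : (k : ℝ) * (-τ) / (m : ℝ) < (-v) + (-τ) / (m : ℝ) := by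
        rw [div_lt_iff₀ hm0, add_mul, div_mul_cancel₀ _ (ne_of_gt hm0)]
        exact h1
      rw [hr_def]; linarith
    have hkm : (k : ℝ) / (m : ℝ) < (-v) / (-τ) + 1 / (m : ℝ) := by
      rw [div_lt_iff₀ hm0]
      have hre : (-v) * (m:ℝ) / (-τ) = (-v)/(-τ) * (m:ℝ) := by ring
      have hrhs : ((-v)/(-τ) + 1/(m:ℝ)) * (m:ℝ) = (-v)/(-τ) * (m:ℝ) + 1 := by
        field_simp
      rw [hrhs]
      linarith [hk2, hre.symm.le, hre.le]
    have hSτm : S (τ / (m : ℝ)) ≤ 1 / (m : ℝ) := by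
      have := hτS m hm
      rw [le_div_iff₀ hm0]; linarith
    have hsplit : S v ≤ (k : ℝ) * S (τ / (m : ℝ)) + S r := by
      have heq : (k : ℝ) * (τ / (m : ℝ)) + r = v := by rw [hr_def]; field_simp; ring
      calc S v = S ((k : ℝ) * (τ / (m : ℝ)) + r) := by rw [heq]
        _ ≤ S ((k : ℝ) * (τ / (m : ℝ))) + S r := hsub _ _
        _ ≤ (k : ℝ) * S (τ / (m : ℝ)) + S r := by linarith [S_nsmul hsub h0 k (τ / (m : ℝ))]
    have hkS : (k : ℝ) * S (τ / (m : ℝ)) ≤ (k : ℝ) / (m : ℝ) := by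
      calc (k : ℝ) * S (τ / (m : ℝ)) ≤ (k : ℝ) * (1 / (m : ℝ)) :=
            mul_le_mul_of_nonneg_left hSτm (Nat.cast_nonneg k)
        _ = (k : ℝ) / (m : ℝ) := by ring
    have hSr : S r ≤ K * (-τ) / (m : ℝ) := by
      rcases eq_or_lt_of_le hr0 with hre | hrp
      · rw [← hre, h0]; positivity
      · calc S r ≤ K * r := hpos r hrp
          _ ≤ K * ((-τ) / (m:ℝ)) := mul_le_mul_of_nonneg_left (le_of_lt hr1) hK0
          _ = K * (-τ) / (m : ℝ) := by ring
    calc S v ≤ (k : ℝ) * S (τ / (m : ℝ)) + S r := hsplit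
      _ ≤ (k : ℝ) / (m : ℝ) + K * (-τ) / (m : ℝ) := add_le_add hkS hSr
      _ ≤ ((-v) / (-τ) + 1 / (m : ℝ)) + K * (-τ) / (m : ℝ) := by linarith
      _ = (-v) / (-τ) + (1 + K * (-τ)) / (m : ℝ) := by ring
  have hfinal : S v ≤ (-v) / (-τ) := by
    apply le_of_forall_pos_le_add
    intro ε hε
    have hc0 : 0 < 1 + K * (-τ) := by nlinarith
    obtain ⟨n, hn⟩ := exists_nat_gt ((1 + K * (-τ)) / ε)
    have hn0 : (0:ℝ) < (n:ℝ) := lt_trans (by positivity) hn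
    have hn1 : 1 ≤ n := by exact_mod_cast hn0
    have hne : (1 + K * (-τ)) / (n : ℝ) < ε := by
      rw [div_lt_iff₀ hn0]
      have h5 : ((1 + K * (-τ)) / ε) * ε = 1 + K * (-τ) := by field_simp
      nlinarith [mul_lt_mul_of_pos_right hn hε]
    linarith [key n hn1]
  calc S v ≤ (-v) / (-τ) := hfinal
    _ = (1 / (-τ)) * (-v) := by ring

/-- Paper's Theorem 4: for `S` locally bounded and subadditive with `S 0 = 0`,
satisfying the weak Heiberg–Seneta condition, if `S*(tₙ) → 0` for some strictly
negative sequence `tₙ` increasing to `0`, then `S` and its sublinear envelope `S*`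
are continuous, and `S*` is linear on each of `[0,∞)` and `(-∞,0]`. -/
theorem berz_theorem4 (S : ℝ → ℝ) (hlb : LocallyBounded' S) (hsub : Subadditive' S)
    (h0 : S 0 = 0)
    (Sig : Set ℝ) (hSig : Sig ⊆ Set.Ioi (0 : ℝ)) (hSW : LocallySW Sig)
    (hacc : AccPt (0 : ℝ) (𝓟 Sig))
    (hWHS : Filter.limsup (fun t : ℝ => ((S t / t : ℝ) : EReal)) (𝓝[Sig] (0 : ℝ)) < ⊤)
    (t : ℕ → ℝ) (htneg : ∀ n, t n < 0) (htmono : StrictMono t)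
    (htlim : Tendsto t atTop (𝓝 0))
    (htS : Tendsto (fun n => SStar S (t n)) atTop (𝓝 (0 : EReal))) :
    Continuous S ∧ Continuous (SStar S) ∧
    ∃ cp cm : ℝ,
      (∀ x : ℝ, 0 ≤ x → SStar S x = ((cp * x : ℝ) : EReal)) ∧
      (∀ x : ℝ, x ≤ 0 → SStar S x = ((cm * x : ℝ) : EReal)) := by
  obtain ⟨N, hN⟩ := (htS.eventually_lt_const (show (0:EReal) < 1 by norm_num)).exists
  set τ := t N with hτ_def
  have hτneg : τ < 0 := htneg N
  obtain ⟨K, hK0, hKpos⟩ := pos_bound hsub hSig hSW hacc hWHS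
  have hτS : ∀ m : ℕ, 1 ≤ m → (m : ℝ) * S (τ / (m : ℝ)) ≤ 1 := by
    intro m hm
    have h1 := le_sstar hsub h0 τ m hm
    have h2 : (((m:ℝ) * S (τ/(m:ℝ)) : ℝ) : EReal) < ((1:ℝ) : EReal) := by
      calc (((m:ℝ) * S (τ/(m:ℝ)) : ℝ) : EReal) ≤ SStar S τ := h1
        _ < 1 := hN
    exact_mod_cast h2.le
  have hneg := neg_bound hsub h0 hK0 hKpos hτneg hτS
  set Kb := max K (1 / (-τ)) with hKb_def
  have hKb0 : 0 ≤ Kb := le_trans hK0 (le_max_left _ _)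
  have hb : ∀ v : ℝ, |S v| ≤ Kb * |v| := by
    have hup : ∀ w : ℝ, S w ≤ Kb * |w| := by
      intro w
      rcases lt_trichotomy w 0 with hw | hw | hw
      · calc S w ≤ (1/(-τ)) * (-w) := hneg w (le_of_lt hw)
          _ ≤ Kb * |w| := by
            rw [abs_of_neg hw]
            apply mul_le_mul_of_nonneg_right (le_max_right _ _)
            linarith
      · simp [hw, h0]
      · calc S w ≤ K * w := hKpos w hw
          _ ≤ Kb * |w| := by
            rw [abs_of_pos hw]
            exact mul_le_mul_of_nonneg_right (le_max_left _ _) (le_of_lt hw)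
    intro v
    rw [abs_le]
    constructor
    · have h1 := hsub v (-v)
      have h2 : S 0 ≤ S v + S (-v) := by simpa using h1
      have h3 := hup (-v)
      rw [abs_neg] at h3
      rw [h0] at h2
      linarith
    · exact hup v
  have hScont : Continuous S := by
    apply LipschitzWith.continuous (K := Real.toNNReal Kb)
    apply LipschitzWith.of_dist_le_mul
    intro x y
    rw [Real.dist_eq, Real.dist_eq, Real.coe_toNNReal Kb hKb0, abs_sub_le_iff]
    constructor
    · have h1 : S x ≤ S y + S (x - y) := by
        have := hsub y (x - y); simpa using this
      have h2 := (abs_le.mp (hb (x - y))).2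
      linarith
    · have h1 : S y ≤ S x + S (y - x) := by
        have := hsub x (y - x); simpa using this
      have h2 := (abs_le.mp (hb (y - x))).2
      rw [abs_sub_comm] at h2
      linarith
  have hTeq : SStar S = fun x => ((Tfun S x : ℝ) : EReal) := funext (sstar_eq_T hsub h0 hb)
  refine ⟨hScont, ?_, Tfun S 1, -(Tfun S (-1)), ?_, ?_⟩
  · rw [hTeq]
    exact continuous_coe_real_ereal.comp (T_cont hsub h0 hb)
  · intro x hx
    rw [hTeq]
    rcases eq_or_lt_of_le hx with rfl | hx0
    · simp [T_zero h0]
    · have h1 : Tfun S (x * 1) = x * Tfun S 1 := T_real_homog hsub h0 hb x hx0 1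
      rw [mul_one] at h1
      exact EReal.coe_eq_coe_iff.mpr (by rw [h1]; ring)
  · intro x hx
    rw [hTeq]
    rcases eq_or_lt_of_le hx with heq | hx0
    · subst heq
      simp [T_zero h0]
    · have hxpos : 0 < -x := by linarith
      have h1 : Tfun S ((-x) * (-1)) = (-x) * Tfun S (-1) := T_real_homog hsub h0 hb (-x) hxpos (-1)
      have h2 : (-x) * (-1) = x := by ring
      rw [h2] at h1
      exact EReal.coe_eq_coe_iff.mpr (by rw [h1]; ring)
end

section
/- (Quantifier-weakened Berz theorem.) Let S : ℝ → ℝ be locally bounded and subadditive with S(0) = 0, satisfying the weak Heiberg–Seneta condition: there is a locally Steinhaus–Weil set Σ ⊆ (0,∞) accumulating at 0 with limsup_{t↓0, t∈Σ} S(t)/t < ∞. Let 𝔸 be a dense, divisible additive subgroup of ℝ such that S|𝔸 is ℕ-homogeneous: S(na) = nS(a) for all a ∈ 𝔸 and n ∈ ℕ. Then S restricted to [0,∞) and to (−∞,0] is linear: with β_S := inf_{t>0} S(t)/t and α_S := sup_{z<0} S(z)/z, one has S(t) = β_S·t and S(−t) = −α_S·t for all t ≥ 0. -/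
open Filter Topology Set Pointwise

/-- `α_S := sup_{z<0} S z / z`. -/
noncomputable def alphaS (S : ℝ → ℝ) : ℝ :=
  sSup ((fun z => S z / z) '' Set.Iio (0 : ℝ))

lemma good_interval (S : ℝ → ℝ) (hsub : Subadditive' S)
    (Sig : Set ℝ) (hSig : Sig ⊆ Set.Ioi (0 : ℝ)) (hSW : LocallySW Sig)
    (hacc : AccPt (0 : ℝ) (𝓟 Sig))
    (hWHS : Filter.limsup (fun t : ℝ => ((S t / t : ℝ) : EReal)) (𝓝[Sig] (0 : ℝ)) < ⊤) :
    ∀ ε : ℝ, 0 < ε → ∃ c d : ℝ, 0 < c ∧ c < d ∧ d ≤ ε ∧ ∀ r, c < r → r < d → S r ≤ ε := by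
  -- extract a real bound K valid on Sig near 0
  obtain ⟨C, hC1, hC2⟩ := exists_between hWHS
  have hCbot : C ≠ ⊥ := (lt_of_le_of_lt bot_le hC1).ne'
  set K : ℝ := C.toReal with hKdef
  have hCK : ((K : ℝ) : EReal) = C := EReal.coe_toReal (ne_of_lt hC2) hCbot
  have hev : ∀ᶠ t in 𝓝[Sig] (0:ℝ), ((S t / t : ℝ) : EReal) < ((K:ℝ):EReal) := by
    rw [hCK]; exact eventually_lt_of_limsup_lt hC1
  rw [Filter.eventually_iff, Metric.mem_nhdsWithin_iff] at hev
  obtain ⟨θ, hθ, hθK⟩ := hev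
  have hbnd : ∀ u ∈ Sig, u < θ → S u / u < K := by
    intro u hu huθ
    have hu0 : 0 < u := hSig hu
    have : u ∈ Metric.ball (0:ℝ) θ ∩ Sig := by
      constructor
      · rw [Metric.mem_ball, Real.dist_eq, sub_zero, abs_of_pos hu0]; exact huθ
      · exact hu
    have := hθK this
    exact_mod_cast this
  intro ε hε
  set K' : ℝ := max K 1 with hK'def
  have hK'1 : (1:ℝ) ≤ K' := le_max_right _ _
  have hK'0 : (0:ℝ) < K' := lt_of_lt_of_le one_pos hK'1
  have hKK' : K ≤ K' := le_max_left _ _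
  -- find small x in Sig
  set ρ : ℝ := min (θ/2) (ε/(3*K')) with hρdef
  have hρ : 0 < ρ := lt_min (by linarith) (by positivity)
  obtain ⟨x, hxU, hxne⟩ := accPt_iff_nhds.mp hacc (Metric.ball 0 ρ) (Metric.ball_mem_nhds _ hρ)
  obtain ⟨hxball, hxSig⟩ := hxU
  have hx0 : 0 < x := hSig hxSig
  have hxρ : x < ρ := by
    rw [Metric.mem_ball, Real.dist_eq, sub_zero, abs_of_pos hx0] at hxball; exact hxball
  -- SW at (x,x)
  obtain ⟨δ₀, hδ₀, hSWx⟩ := hSW x hxSig x hxSig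
  set δ : ℝ := min δ₀ x with hδdef
  have hδpos : 0 < δ := lt_min hδ₀ hx0
  have hδx : δ ≤ x := min_le_right _ _
  obtain ⟨hplus, _⟩ := hSWx δ hδpos (min_le_left _ _)
  rw [mem_interior_iff_mem_nhds, Metric.mem_nhds_iff] at hplus
  obtain ⟨η, hη, hball⟩ := hplus
  set η' : ℝ := (min η x)/2 with hη'def
  have hη'pos : 0 < η' := by positivity
  have hη'η : η' < η := by
    have : min η x ≤ η := min_le_left _ _
    linarith
  have hη'x : η' ≤ x/2 := by
    have : min η x ≤ x := min_le_right _ _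
    linarith
  have hxε2 : x * (3*K') < ε :=
    (lt_div_iff₀ (by positivity)).mp (lt_of_lt_of_le hxρ (min_le_right _ _))
  refine ⟨x + x - η', x + x + η', by linarith, by linarith, by nlinarith, ?_⟩
  intro r hr1 hr2
  have hrball : r ∈ Metric.ball (x+x) η := by
    rw [Metric.mem_ball, Real.dist_eq, abs_lt]; constructor <;> linarith
  obtain ⟨u, hu, v, hv, huv⟩ := Set.mem_add.mp (hball hrball)
  obtain ⟨huSig, huI⟩ := hu
  obtain ⟨hvSig, hvI⟩ := hv
  have hu0 : 0 < u := hSig huSig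
  have hv0 : 0 < v := hSig hvSig
  have huθ : u < θ := by
    have := huI.2
    have hxθ : x < θ/2 := lt_of_lt_of_le hxρ (min_le_left _ _)
    linarith
  have hvθ : v < θ := by
    have := hvI.2
    have hxθ : x < θ/2 := lt_of_lt_of_le hxρ (min_le_left _ _)
    linarith
  have hSu : S u ≤ K' * u := by
    have := hbnd u huSig huθ
    have h1 : S u < K * u := (div_lt_iff₀ hu0).mp this
    nlinarith
  have hSv : S v ≤ K' * v := by
    have := hbnd v hvSig hvθ
    have h1 : S v < K * v := (div_lt_iff₀ hv0).mp this
    nlinarith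
  have hSr : S r ≤ S u + S v := by rw [← huv]; exact hsub u v
  have hKr : K'*u + K'*v = K'*r := by rw [← huv]; ring
  have hSrK : S r ≤ K' * r := by linarith
  have hrd : r < 3*x := by linarith
  nlinarith [mul_lt_mul_of_pos_left hrd hK'0]

lemma rat_homog (S : ℝ → ℝ) (A : AddSubgroup ℝ)
    (hdiv : ∀ a ∈ A, ∀ k : ℕ, 0 < k → a / (k : ℝ) ∈ A)
    (hhom : ∀ a ∈ A, ∀ n : ℕ, S ((n : ℝ) * a) = (n : ℝ) * S a) :
    ∀ a ∈ A, ∀ q : ℚ, 0 ≤ q → S ((q : ℝ) * a) = (q : ℝ) * S a := by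
  intro a ha q hq
  have hden : (0:ℝ) < (q.den : ℝ) := by exact_mod_cast q.pos
  set b : ℝ := a / (q.den : ℝ) with hbdef
  have hb : b ∈ A := hdiv a ha q.den q.pos
  have hab : a = (q.den : ℝ) * b := by rw [hbdef]; field_simp
  have h1 : S a = (q.den : ℝ) * S b := by rw [hab]; exact hhom b hb q.den
  have hnum : ((q.num.toNat : ℕ) : ℝ) = (q.num : ℝ) := by
    exact_mod_cast congrArg (Int.cast : ℤ → ℝ) (Int.toNat_of_nonneg (Rat.num_nonneg.mpr hq))
  have h2 : S ((q.num : ℝ) * b) = (q.num : ℝ) * S b := by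
    rw [← hnum]; exact hhom b hb q.num.toNat
  have hq' : (q : ℝ) = (q.num : ℝ) / (q.den : ℝ) := Rat.cast_def q
  have h3 : (q:ℝ) * a = (q.num : ℝ) * b := by
    rw [hab, hq']; field_simp
  rw [h3, h2, h1, hq']
  field_simp

lemma pos_ratio (S : ℝ → ℝ) (hsub : Subadditive' S)
    (hgood : ∀ ε : ℝ, 0 < ε → ∃ c d : ℝ, 0 < c ∧ c < d ∧ d ≤ ε ∧ ∀ r, c < r → r < d → S r ≤ ε)
    (A : AddSubgroup ℝ)
    (hrq : ∀ a ∈ A, ∀ q : ℚ, 0 ≤ q → S ((q : ℝ) * a) = (q : ℝ) * S a) :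
    ∀ a ∈ A, 0 < a → ∀ t : ℝ, 0 < t → S a / a ≤ S t / t := by
  intro a ha ha0 t ht
  apply le_of_forall_pos_le_add
  intro ε₀ hε₀
  set M : ℝ := |S t| with hMdef
  have hM0 : 0 ≤ M := abs_nonneg _
  have hM1 : S t ≤ M := le_abs_self _
  have hM2 : -M ≤ S t := neg_abs_le _
  set ε₁ : ℝ := min 1 (min (t*ε₀/2) (t*t*ε₀/(2*(M+1)))) with hε₁def
  have hε₁pos : 0 < ε₁ :=
    lt_min one_pos (lt_min (by positivity) (by positivity))
  have hε₁a : 2*ε₁ ≤ t*ε₀ := by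
    have := le_trans (min_le_right 1 (min (t*ε₀/2) (t*t*ε₀/(2*(M+1))))) (min_le_left (t*ε₀/2) (t*t*ε₀/(2*(M+1))))
    linarith
  have hε₁b : 2*ε₁*(M+1) ≤ t*t*ε₀ := by
    have h := le_trans (min_le_right 1 (min (t*ε₀/2) (t*t*ε₀/(2*(M+1))))) (min_le_right (t*ε₀/2) (t*t*ε₀/(2*(M+1))))
    have := (le_div_iff₀ (by positivity : (0:ℝ) < 2*(M+1))).mp h
    linarith
  obtain ⟨c, d, hc, hcd, hdε, hbound⟩ := hgood ε₁ hε₁pos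
  obtain ⟨q, hq1, hq2⟩ := exists_rat_btwn
    (show (t+c)/a < (t+d)/a from by gcongr)
  have hq0 : (0:ℝ) < (q:ℝ) := lt_trans (by positivity) hq1
  have hqa1 : t + c < (q:ℝ)*a := (div_lt_iff₀ ha0).mp hq1
  have hqa2 : (q:ℝ)*a < t + d := by
    have := (lt_div_iff₀ ha0).mp hq2; linarith [this]
  have hSr : S ((q:ℝ)*a - t) ≤ ε₁ := hbound _ (by linarith) (by linarith)
  have hkey0 : S ((q:ℝ)*a) ≤ S t + S ((q:ℝ)*a - t) := by
    have := hsub t ((q:ℝ)*a - t)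
    rwa [show t + ((q:ℝ)*a - t) = (q:ℝ)*a by ring] at this
  have hSq : S ((q:ℝ)*a) = (q:ℝ) * S a := hrq a ha q (by exact_mod_cast hq0.le)
  have hqS : (q:ℝ) * S a ≤ S t + ε₁ := by rw [← hSq]; linarith
  -- key' : B * S a ≤ a * (S t + ε₁)  with B = q*a
  have key' : ((q:ℝ)*a) * S a ≤ a * (S t + ε₁) := by
    have := mul_le_mul_of_nonneg_left hqS ha0.le
    linarith [this]
  have hBpos : 0 < (q:ℝ)*a := by positivity
  have core : t*(S t + ε₁) ≤ ((q:ℝ)*a)*(S t + ε₀*t) := by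
    nlinarith [mul_nonneg (by linarith : (0:ℝ) ≤ (q:ℝ)*a - t) (by linarith : (0:ℝ) ≤ M + S t),
      mul_le_mul_of_nonneg_right (show (q:ℝ)*a - t ≤ ε₁ by linarith) hM0,
      mul_le_mul_of_nonneg_left hε₁a ht.le,
      mul_pos (mul_pos (show (0:ℝ) < (q:ℝ)*a - t by linarith) hε₀) ht]
  have step : t*(a*(S t + ε₁)) ≤ ((q:ℝ)*a)*((S t + ε₀*t)*a) := by
    have := mul_le_mul_of_nonneg_right core ha0.le
    linarith [this]
  have main : ((q:ℝ)*a)*(S a * t) ≤ ((q:ℝ)*a)*((S t + ε₀*t)*a) := by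
    have h1 : ((q:ℝ)*a)*(S a * t) = t*(((q:ℝ)*a) * S a) := by ring
    have h2 := mul_le_mul_of_nonneg_left key' ht.le
    linarith [h2]
  have final : S a * t ≤ (S t + ε₀*t)*a := le_of_mul_le_mul_left main hBpos
  rw [show S t / t + ε₀ = (S t + ε₀*t)/t by field_simp]
  rw [div_le_div_iff₀ ha0 ht]
  exact final

lemma neg_ratio (S : ℝ → ℝ) (hsub : Subadditive' S)
    (hgood : ∀ ε : ℝ, 0 < ε → ∃ c d : ℝ, 0 < c ∧ c < d ∧ d ≤ ε ∧ ∀ r, c < r → r < d → S r ≤ ε)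
    (A : AddSubgroup ℝ)
    (hrq : ∀ a ∈ A, ∀ q : ℚ, 0 ≤ q → S ((q : ℝ) * a) = (q : ℝ) * S a) :
    ∀ a ∈ A, a < 0 → ∀ w : ℝ, w < 0 → S w / w ≤ S a / a := by
  intro a ha ha0 w hw0
  apply le_of_forall_pos_le_add
  intro ε₀ hε₀
  set M : ℝ := |S a| with hMdef
  have hM0 : 0 ≤ M := abs_nonneg _
  have hM1 : S a ≤ M := le_abs_self _
  set ε₁ : ℝ := min ((-w)/2) (min (ε₀*(-w)/2) (ε₀*(-a)*(-w)/(2*(M+1)))) with hε₁def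
  have hε₁pos : 0 < ε₁ := by
    refine lt_min (by linarith) (lt_min (div_pos (mul_pos hε₀ (by linarith)) two_pos) ?_)
    exact div_pos (mul_pos (mul_pos hε₀ (by linarith : (0:ℝ) < -a)) (by linarith : (0:ℝ) < -w)) (by positivity)
  have hε₁w : 2*ε₁ ≤ -w := by
    have := min_le_left ((-w)/2) (min (ε₀*(-w)/2) (ε₀*(-a)*(-w)/(2*(M+1))))
    linarith
  have hε₁a : 2*ε₁ ≤ ε₀*(-w) := by
    have := le_trans (min_le_right ((-w)/2) (min (ε₀*(-w)/2) (ε₀*(-a)*(-w)/(2*(M+1)))))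
      (min_le_left (ε₀*(-w)/2) (ε₀*(-a)*(-w)/(2*(M+1))))
    linarith
  have hε₁b : 2*ε₁*(M+1) ≤ ε₀*(-a)*(-w) := by
    have h := le_trans (min_le_right ((-w)/2) (min (ε₀*(-w)/2) (ε₀*(-a)*(-w)/(2*(M+1)))))
      (min_le_right (ε₀*(-w)/2) (ε₀*(-a)*(-w)/(2*(M+1))))
    have := (le_div_iff₀ (by positivity : (0:ℝ) < 2*(M+1))).mp h
    linarith
  obtain ⟨c, d, hc, hcd, hdε, hbound⟩ := hgood ε₁ hε₁pos
  -- choose rational q with w + c < q*a < w + d, working with positives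
  have hwd : 0 < (-w) - d := by linarith
  obtain ⟨q, hq1, hq2⟩ := exists_rat_btwn
    (show ((-w)-d)/(-a) < ((-w)-c)/(-a) from by gcongr <;> linarith)
  have hna : (0:ℝ) < -a := by linarith
  have hq0 : (0:ℝ) < (q:ℝ) := lt_trans (by positivity) hq1
  have hqa1 : (-w)-d < (q:ℝ)*(-a) := (div_lt_iff₀ hna).mp hq1
  have hqa2 : (q:ℝ)*(-a) < (-w)-c := by
    have := (lt_div_iff₀ hna).mp hq2; linarith
  have hB1 : w + c < (q:ℝ)*a := by nlinarith
  have hB2 : (q:ℝ)*a < w + d := by nlinarith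
  set r : ℝ := (q:ℝ)*a - w with hrdef
  have hSr : S r ≤ ε₁ := hbound r (by simp only [hrdef]; linarith) (by simp only [hrdef]; linarith)
  have hkey0 : S ((q:ℝ)*a) ≤ S w + S r := by
    have := hsub w r
    rwa [show w + r = (q:ℝ)*a by simp only [hrdef]; ring] at this
  have hSq : S ((q:ℝ)*a) = (q:ℝ) * S a := hrq a ha q (by exact_mod_cast hq0.le)
  have hSw : (q:ℝ)*S a - ε₁ ≤ S w := by rw [← hSq]; linarith
  -- multiply by a < 0
  have key : a * S w ≤ a * ((q:ℝ)*S a - ε₁) := mul_le_mul_of_nonpos_left hSw ha0.le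
  have core : a * ((q:ℝ)*S a - ε₁) ≤ S a * w + ε₀*(a*w) := by
    have h1 : ((q:ℝ)*a - w) * S a ≤ ((q:ℝ)*a - w) * M :=
      mul_le_mul_of_nonneg_left hM1 (by linarith)
    have h2 : ((q:ℝ)*a - w)*M ≤ ε₁*M :=
      mul_le_mul_of_nonneg_right (by linarith) hM0
    have h3 : (-a)*(2*ε₁) ≤ (-a)*(ε₀*(-w)) :=
      mul_le_mul_of_nonneg_left hε₁a (by linarith)
    nlinarith [h1, h2, h3, hε₁b]
  have haw : 0 < a * w := mul_pos_of_neg_of_neg ha0 hw0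
  calc S w / w = (a * S w)/(a*w) := (mul_div_mul_left (S w) w (ne_of_lt ha0)).symm
    _ ≤ (S a * w + ε₀*(a*w))/(a*w) := by
        apply div_le_div_of_nonneg_right ?_ haw.le
        linarith [key, core]
    _ = S a / a + ε₀ := by
        rw [add_div, mul_div_mul_right _ _ (ne_of_lt hw0), mul_div_cancel_right₀ _ (ne_of_gt haw)]

/-- Paper's Theorem 5 (quantifier-weakened Berz theorem): for `S` locally bounded
and subadditive with `S 0 = 0`, satisfying the weak Heiberg–Seneta condition
(w.r.t. a locally Steinhaus–Weil set `Σ ⊆ (0,∞)` accumulating at `0`), and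
`ℕ`-homogeneous on a dense divisible additive subgroup `𝔸` of `ℝ`, the function
`S` is linear on each half-line: `S t = β_S·t` and `S (-t) = -α_S·t` for `t ≥ 0`. -/
theorem berz_theorem5 (S : ℝ → ℝ) (hlb : LocallyBounded' S) (hsub : Subadditive' S)
    (h0 : S 0 = 0)
    (Sig : Set ℝ) (hSig : Sig ⊆ Set.Ioi (0 : ℝ)) (hSW : LocallySW Sig)
    (hacc : AccPt (0 : ℝ) (𝓟 Sig))
    (hWHS : Filter.limsup (fun t : ℝ => ((S t / t : ℝ) : EReal)) (𝓝[Sig] (0 : ℝ)) < ⊤)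
    (A : AddSubgroup ℝ) (hdense : Dense (A : Set ℝ))
    (hdiv : ∀ a ∈ A, ∀ k : ℕ, 0 < k → a / (k : ℝ) ∈ A)
    (hhom : ∀ a ∈ A, ∀ n : ℕ, S ((n : ℝ) * a) = (n : ℝ) * S a) :
    ∀ t : ℝ, 0 ≤ t → S t = betaS S * t ∧ S (-t) = -(alphaS S * t) := by
  have hgood := good_interval S hsub Sig hSig hSW hacc hWHS
  have hrq := rat_homog S A hdiv hhom
  have hposr := pos_ratio S hsub hgood A hrq
  have hnegr := neg_ratio S hsub hgood A hrq
  obtain ⟨a₀, ha₀A, ha₀I⟩ := hdense.exists_between (show (1:ℝ) < 2 by norm_num)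
  have ha₀0 : 0 < a₀ := lt_trans one_pos ha₀I.1
  obtain ⟨b₀, hb₀A, hb₀I⟩ := hdense.exists_between (show (-2:ℝ) < -1 by norm_num)
  have hb₀0 : b₀ < 0 := lt_trans hb₀I.2 (by norm_num)
  have hEne : ((fun t => S t / t) '' Set.Ioi (0:ℝ)).Nonempty := ⟨S 1/1, ⟨1, by norm_num, rfl⟩⟩
  have hlbE : ∀ y ∈ ((fun t => S t / t) '' Set.Ioi (0:ℝ)), S a₀/a₀ ≤ y := by
    rintro y ⟨t, ht, rfl⟩; exact hposr a₀ ha₀A ha₀0 t ht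
  have hβ : betaS S = S a₀ / a₀ :=
    le_antisymm (csInf_le ⟨S a₀/a₀, hlbE⟩ ⟨a₀, ha₀0, rfl⟩) (le_csInf hEne hlbE)
  have hFne : ((fun z => S z / z) '' Set.Iio (0:ℝ)).Nonempty := ⟨S (-1)/(-1), ⟨-1, by norm_num, rfl⟩⟩
  have hubF : ∀ y ∈ ((fun z => S z / z) '' Set.Iio (0:ℝ)), y ≤ S b₀/b₀ := by
    rintro y ⟨z, hz, rfl⟩; exact hnegr b₀ hb₀A hb₀0 z hz
  have hα : alphaS S = S b₀ / b₀ :=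
    le_antisymm (csSup_le hFne hubF) (le_csSup ⟨S b₀/b₀, hubF⟩ ⟨b₀, hb₀0, rfl⟩)
  have hSA : ∀ a ∈ A, 0 < a → S a = betaS S * a := by
    intro a haA ha0
    have h1 : S a / a ≤ S a₀ / a₀ := hposr a haA ha0 a₀ ha₀0
    have h2 : S a₀ / a₀ ≤ S a / a := hposr a₀ ha₀A ha₀0 a ha0
    have heq : S a / a = betaS S := by rw [hβ]; linarith
    rw [← heq, div_mul_cancel₀ _ (ne_of_gt ha0)]
  have hSAneg : ∀ a ∈ A, a < 0 → S a = alphaS S * a := by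
    intro a haA ha0
    have h1 : S b₀ / b₀ ≤ S a / a := hnegr a haA ha0 b₀ hb₀0
    have h2 : S a / a ≤ S b₀ / b₀ := hnegr b₀ hb₀A hb₀0 a ha0
    have heq : S a / a = alphaS S := by rw [hα]; linarith
    rw [← heq, div_mul_cancel₀ _ (ne_of_lt ha0)]
  intro t ht
  rcases eq_or_lt_of_le ht with h|h
  · refine ⟨?_, ?_⟩ <;> simp [← h, h0]
  constructor
  · -- S t = betaS S * t
    have hlow : betaS S * t ≤ S t := by
      have h1 : S a₀/a₀ ≤ S t / t := hposr a₀ ha₀A ha₀0 t h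
      rw [← hβ] at h1
      exact (le_div_iff₀ h).mp h1
    have hup : S t ≤ betaS S * t := by
      apply le_of_forall_pos_le_add
      intro ε₀ hε₀
      set β := betaS S with hβdef
      set ε₁ : ℝ := min (ε₀/2) (min (t/2) (ε₀/(2*(|β|+1)))) with hε₁def
      have hε₁pos : 0 < ε₁ :=
        lt_min (by linarith) (lt_min (by linarith) (by positivity))
      have hε₁A : ε₁ ≤ ε₀/2 := min_le_left _ _
      have hε₁B : ε₁ ≤ t/2 := le_trans (min_le_right _ _) (min_le_left _ _)
      have hε₁C : ε₁*(2*(|β|+1)) ≤ ε₀ := by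
        have h1 := le_trans (min_le_right (ε₀/2) (min (t/2) (ε₀/(2*(|β|+1)))))
          (min_le_right (t/2) (ε₀/(2*(|β|+1))))
        exact (le_div_iff₀ (by positivity : (0:ℝ) < 2*(|β|+1))).mp h1
      obtain ⟨c, d, hc, hcd, hdε, hbound⟩ := hgood ε₁ hε₁pos
      obtain ⟨aa, haaA, haaI⟩ := hdense.exists_between (show t - d < t - c by linarith)
      have haa0 : 0 < aa := by
        have := haaI.1; linarith
      have hSaa : S aa = β * aa := hSA aa haaA haa0
      have hr1 : c < t - aa := by linarith [haaI.2]
      have hr2 : t - aa < d := by linarith [haaI.1]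
      have hSr : S (t - aa) ≤ ε₁ := hbound _ hr1 hr2
      have hst : S t ≤ S aa + S (t - aa) := by
        have := hsub aa (t - aa)
        rwa [show aa + (t - aa) = t by ring] at this
      have habs1 : (-β)*(t-aa) ≤ |β| * (t-aa) :=
        mul_le_mul_of_nonneg_right (neg_le_abs β) (by linarith)
      have habs2 : |β| * (t-aa) ≤ |β| * ε₁ :=
        mul_le_mul_of_nonneg_left (by linarith) (abs_nonneg β)
      nlinarith [hst, hSaa, hSr, habs1, habs2, hε₁C, hε₁A]
    exact le_antisymm hup hlow
  · -- S (-t) = -(alphaS S * t)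
    have hnt : -t < 0 := by linarith
    have hlow : alphaS S * (-t) ≤ S (-t) := by
      have h1 : S (-t) / (-t) ≤ S b₀/b₀ := hnegr b₀ hb₀A hb₀0 (-t) hnt
      rw [← hα] at h1
      -- S(-t)/(-t) ≤ α with -t < 0 gives α*(-t) ≤ S(-t)
      have h2 := mul_le_mul_of_nonpos_right h1 (le_of_lt hnt)
      rw [div_mul_cancel₀ _ (ne_of_lt hnt)] at h2
      linarith [h2]
    have hup : S (-t) ≤ alphaS S * (-t) := by
      apply le_of_forall_pos_le_add
      intro ε₀ hε₀
      set α := alphaS S with hαdef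
      set ε₁ : ℝ := min (ε₀/2) (ε₀/(2*(|α|+1))) with hε₁def
      have hε₁pos : 0 < ε₁ := lt_min (by linarith) (by positivity)
      have hε₁A : ε₁ ≤ ε₀/2 := min_le_left _ _
      have hε₁C : ε₁*(2*(|α|+1)) ≤ ε₀ :=
        (le_div_iff₀ (by positivity : (0:ℝ) < 2*(|α|+1))).mp (min_le_right _ _)
      obtain ⟨c, d, hc, hcd, hdε, hbound⟩ := hgood ε₁ hε₁pos
      obtain ⟨aa, haaA, haaI⟩ := hdense.exists_between (show -t - d < -t - c by linarith)
      have haa0 : aa < 0 := by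
        have := haaI.2; linarith
      have hSaa : S aa = α * aa := hSAneg aa haaA haa0
      have hr1 : c < -t - aa := by linarith [haaI.2]
      have hr2 : -t - aa < d := by linarith [haaI.1]
      have hSr : S (-t - aa) ≤ ε₁ := hbound _ hr1 hr2
      have hst : S (-t) ≤ S aa + S (-t - aa) := by
        have := hsub aa (-t - aa)
        rwa [show aa + (-t - aa) = -t by ring] at this
      have habs1 : α*(aa - (-t)) ≤ |α| * (-t-aa) := by
        have := mul_le_mul_of_nonneg_right (neg_le_abs α) (show (0:ℝ) ≤ -t-aa by linarith)
        linarith [this]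
      have habs2 : |α| * (-t-aa) ≤ |α| * ε₁ :=
        mul_le_mul_of_nonneg_left (by linarith) (abs_nonneg α)
      nlinarith [hst, hSaa, hSr, habs1, habs2, hε₁C, hε₁A]
    have : S (-t) = alphaS S * (-t) := le_antisymm hup hlow
    rw [this]; ring
end
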